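/- arXiv:2601.20217 — 11 statements merged into one kernel-verified Lean document; each statement's English description precedes it below -/
import Mathlib

section
/- Let Y be a random variable taking values in a finite set S with P(Y = y) > 0 and P(Y = y, G = 1) > 0 and P(Y = y, G = 0) > 0 for every y ∈ S. Then the weighted sum of imbalance, δ_B := Σ_{y∈S} (E[Z | Y = y, G = 1] − E[Z | Y = y, G = 0]) · Var(G | Y = y) · P(Y = y), equals the expected conditional covariance E[Cov(Z, G | Y)] = E[Z·G] − E[ E[Z | σ(Y)] · E[G | σ(Y)] ]. -/
open MeasureTheory ProbabilityTheory

/-- Conditional expectation of `X` given an event `A`: `E[X | A] = E[X·1_A] / P(A)`. -/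
noncomputable def condExpEvent {Ω : Type*} [MeasurableSpace Ω] (P : Measure Ω)
    (X : Ω → ℝ) (A : Set Ω) : ℝ :=
  (∫ ω in A, X ω ∂P) / (P A).toReal

/-- Conditional variance of a {0,1}-valued `G` given an event `A`:
`Var(G | A) = E[G | A]·(1 − E[G | A])`. -/
noncomputable def condVarEvent {Ω : Type*} [MeasurableSpace Ω] (P : Measure Ω)
    (G : Ω → ℝ) (A : Set Ω) : ℝ :=
  condExpEvent P G A * (1 - condExpEvent P G A)

section Aux

variable {Ω : Type*} [MeasurableSpace Ω]

/-- Splitting an integral over the finite partition `{Y = y}`, `y ∈ S`. -/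
lemma integral_partition_aux (μ : Measure Ω) (Y : Ω → ℝ) (hYm : Measurable Y)
    (S : Finset ℝ) (hYS : ∀ ω, Y ω ∈ S) (X : Ω → ℝ) (hXi : Integrable X μ) :
    ∫ ω, X ω ∂μ = ∑ y ∈ S, ∫ ω in {ω' | Y ω' = y}, X ω ∂μ := by
  have hpt : ∀ ω, X ω = ∑ y ∈ S, Set.indicator {ω' | Y ω' = y} X ω := by
    intro ω
    rw [Finset.sum_eq_single (Y ω)]
    · simp [Set.indicator]
    · intro y _ hne
      simp [Set.indicator, Set.mem_setOf_eq, Ne.symm hne]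
    · intro h; exact absurd (hYS ω) h
  calc ∫ ω, X ω ∂μ = ∫ ω, ∑ y ∈ S, Set.indicator {ω' | Y ω' = y} X ω ∂μ := by
        exact integral_congr_ae (Filter.Eventually.of_forall hpt)
    _ = ∑ y ∈ S, ∫ ω, Set.indicator {ω' | Y ω' = y} X ω ∂μ :=
        integral_finset_sum _ (fun y _ => hXi.indicator (hYm (measurableSet_singleton y)))
    _ = ∑ y ∈ S, ∫ ω in {ω' | Y ω' = y}, X ω ∂μ := by
        refine Finset.sum_congr rfl fun y _ => ?_
        exact integral_indicator (hYm (measurableSet_singleton y))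

/-- Evaluating the canonical partition-simple function. -/
lemma partition_val_aux (Y : Ω → ℝ) (S : Finset ℝ) (hYS : ∀ ω, Y ω ∈ S)
    (c : ℝ → ℝ) (ω : Ω) :
    ∑ y ∈ S, Set.indicator {ω' | Y ω' = y} (fun _ => c y) ω = c (Y ω) := by
  rw [Finset.sum_eq_single (Y ω)]
  · simp [Set.indicator]
  · intro y _ hne
    simp [Set.indicator, Set.mem_setOf_eq, Ne.symm hne]
  · intro h; exact absurd (hYS ω) h

/-- The conditional expectation given `σ(Y)` is the partition-simple function of the
conditional expectations on the atoms. -/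
lemma condexp_partition_aux (P : Measure Ω) [IsProbabilityMeasure P]
    (Y : Ω → ℝ) (hYm : Measurable Y) (S : Finset ℝ) (hYS : ∀ ω, Y ω ∈ S)
    (hpos : ∀ y ∈ S, 0 < P {ω | Y ω = y}) (X : Ω → ℝ) (hXi : Integrable X P) :
    (P[X | MeasurableSpace.comap Y inferInstance]) =ᵐ[P]
      fun ω => ∑ y ∈ S, Set.indicator {ω' | Y ω' = y}
        (fun _ => condExpEvent P X {ω' | Y ω' = y}) ω := by
  have hm : MeasurableSpace.comap Y inferInstance ≤ (inferInstance : MeasurableSpace Ω) :=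
    measurable_iff_comap_le.mp hYm
  have hA : ∀ y : ℝ, MeasurableSet {ω' | Y ω' = y} :=
    fun y => hYm (measurableSet_singleton y)
  have hAm : ∀ y : ℝ, MeasurableSet[MeasurableSpace.comap Y inferInstance] {ω' | Y ω' = y} :=
    fun y => ⟨{y}, measurableSet_singleton y, rfl⟩
  set g : Ω → ℝ := fun ω => ∑ y ∈ S, Set.indicator {ω' | Y ω' = y}
      (fun _ => condExpEvent P X {ω' | Y ω' = y}) ω with hg_def
  have hgi : Integrable g P := by
    refine integrable_finset_sum _ fun y _ => ?_
    exact (integrable_const _).indicator (hA y)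
  refine (ae_eq_condExp_of_forall_setIntegral_eq hm hXi
    (fun s _ _ => hgi.integrableOn) (fun s hs _ => ?_) ?_).symm
  · -- set integrals agree
    obtain ⟨t, ht, rfl⟩ := hs
    have hright : ∫ ω in Y ⁻¹' t, X ω ∂P
        = ∑ y ∈ S, ∫ ω in {ω' | Y ω' = y} ∩ Y ⁻¹' t, X ω ∂P := by
      have := integral_partition_aux (P.restrict (Y ⁻¹' t)) Y hYm S hYS X hXi.restrict
      rw [this]
      refine Finset.sum_congr rfl fun y _ => ?_
      rw [Measure.restrict_restrict (hA y)]
    have hleft : ∫ ω in Y ⁻¹' t, g ω ∂P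
        = ∑ y ∈ S, ∫ ω in {ω' | Y ω' = y} ∩ Y ⁻¹' t,
            condExpEvent P X {ω' | Y ω' = y} ∂P := by
      rw [integral_finset_sum]
      · refine Finset.sum_congr rfl fun y _ => ?_
        rw [setIntegral_indicator (hA y), Set.inter_comm]
      · exact fun y _ => ((integrable_const _).indicator (hA y)).integrableOn
    rw [hleft, hright]
    refine Finset.sum_congr rfl fun y hy => ?_
    by_cases hyt : y ∈ t
    · have hset : {ω' | Y ω' = y} ∩ Y ⁻¹' t = {ω' | Y ω' = y} := by
        ext ω
        simp only [Set.mem_inter_iff, Set.mem_setOf_eq, Set.mem_preimage]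
        exact ⟨fun h => h.1, fun h => ⟨h, h ▸ hyt⟩⟩
      rw [hset, setIntegral_const, smul_eq_mul, measureReal_def]
      have hPy : (P {ω' | Y ω' = y}).toReal ≠ 0 :=
        (ENNReal.toReal_pos (hpos y hy).ne' (measure_ne_top P _)).ne'
      rw [condExpEvent]
      field_simp
    · have hset : {ω' | Y ω' = y} ∩ Y ⁻¹' t = ∅ := by
        ext ω
        simp only [Set.mem_inter_iff, Set.mem_setOf_eq, Set.mem_preimage,
          Set.mem_empty_iff_false, iff_false, not_and]
        intro h1 h2; exact hyt (h1 ▸ h2)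
      rw [hset]
      simp
  · -- strong measurability w.r.t. the comap σ-algebra
    have : Measurable[MeasurableSpace.comap Y inferInstance] g := by
      refine Finset.measurable_sum _ fun y _ => ?_
      exact Measurable.indicator measurable_const (hAm y)
    exact StronglyMeasurable.aestronglyMeasurable this.stronglyMeasurable

end Aux

/-- For `Y` taking values in a finite set `S` with all the relevant events
having positive probability, the weighted sum of imbalance
`δ_B = Σ_{y∈S} (E[Z|Y=y,G=1] − E[Z|Y=y,G=0])·Var(G|Y=y)·P(Y=y)` equals
`E[Cov(Z,G|Y)] = E[Z·G] − E[E[Z|σ(Y)]·E[G|σ(Y)]]`. -/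
theorem stmt0 {Ω : Type*} [MeasurableSpace Ω] (P : Measure Ω) [IsProbabilityMeasure P]
    (Y Z G : Ω → ℝ) (hYm : Measurable Y) (hZm : Measurable Z) (hGm : Measurable G)
    (hZ2 : MemLp Z 2 P) (hG01 : ∀ ω, G ω = 0 ∨ G ω = 1)
    (S : Finset ℝ) (hYS : ∀ ω, Y ω ∈ S)
    (hpos : ∀ y ∈ S, 0 < P {ω | Y ω = y})
    (hpos1 : ∀ y ∈ S, 0 < P ({ω | Y ω = y} ∩ {ω | G ω = 1}))
    (hpos0 : ∀ y ∈ S, 0 < P ({ω | Y ω = y} ∩ {ω | G ω = 0})) :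
    ∑ y ∈ S,
        (condExpEvent P Z ({ω | Y ω = y} ∩ {ω | G ω = 1}) -
          condExpEvent P Z ({ω | Y ω = y} ∩ {ω | G ω = 0})) *
        condVarEvent P G {ω | Y ω = y} * (P {ω | Y ω = y}).toReal
      = ∫ ω, Z ω * G ω ∂P -
        ∫ ω, (P[Z | MeasurableSpace.comap Y inferInstance]) ω *
          (P[G | MeasurableSpace.comap Y inferInstance]) ω ∂P := by
  have hA : ∀ y : ℝ, MeasurableSet {ω | Y ω = y} := fun y => hYm (measurableSet_singleton y)
  have hGs : MeasurableSet {ω | G ω = 1} := hGm (measurableSet_singleton 1)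
  have hG0s : MeasurableSet {ω | G ω = 0} := hGm (measurableSet_singleton 0)
  have hZi : Integrable Z P := hZ2.integrable one_le_two
  have hGind : G = Set.indicator {ω | G ω = 1} (fun _ => (1 : ℝ)) := by
    funext ω
    rcases hG01 ω with h | h <;> simp [Set.indicator, Set.mem_setOf_eq, h]
  have hGi : Integrable G P := by
    rw [hGind]; exact (integrable_const 1).indicator hGs
  have hZGind : (fun ω => Z ω * G ω) = Set.indicator {ω | G ω = 1} Z := by
    funext ω
    rcases hG01 ω with h | h <;> simp [Set.indicator, Set.mem_setOf_eq, h]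
  have hZGi : Integrable (fun ω => Z ω * G ω) P := by
    rw [hZGind]; exact hZi.indicator hGs
  -- abbreviations
  set cZ : ℝ → ℝ := fun y => condExpEvent P Z {ω | Y ω = y} with hcZ
  set cG : ℝ → ℝ := fun y => condExpEvent P G {ω | Y ω = y} with hcG
  -- conditional expectations as partition-simple functions
  have hZc := condexp_partition_aux P Y hYm S hYS hpos Z hZi
  have hGc := condexp_partition_aux P Y hYm S hYS hpos G hGi
  -- the product integral
  have hprod : ∫ ω, (P[Z | MeasurableSpace.comap Y inferInstance]) ω *
      (P[G | MeasurableSpace.comap Y inferInstance]) ω ∂P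
      = ∑ y ∈ S, (P {ω | Y ω = y}).toReal * (cZ y * cG y) := by
    have h1 : (fun ω => (P[Z | MeasurableSpace.comap Y inferInstance]) ω *
        (P[G | MeasurableSpace.comap Y inferInstance]) ω) =ᵐ[P]
        fun ω => ∑ y ∈ S, Set.indicator {ω' | Y ω' = y} (fun _ => cZ y * cG y) ω := by
      filter_upwards [hZc, hGc] with ω h2 h3
      rw [h2, h3, partition_val_aux Y S hYS cZ ω, partition_val_aux Y S hYS cG ω,
        partition_val_aux Y S hYS (fun y => cZ y * cG y) ω]
    rw [integral_congr_ae h1, integral_finset_sum _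
      (fun y _ => (integrable_const _).indicator (hA y))]
    refine Finset.sum_congr rfl fun y _ => ?_
    rw [integral_indicator (hA y), setIntegral_const, smul_eq_mul, measureReal_def]
  -- the Z·G integral
  have hZG : ∫ ω, Z ω * G ω ∂P
      = ∑ y ∈ S, ∫ ω in {ω' | Y ω' = y} ∩ {ω | G ω = 1}, Z ω ∂P := by
    rw [integral_partition_aux P Y hYm S hYS _ hZGi]
    refine Finset.sum_congr rfl fun y _ => ?_
    calc ∫ ω in {ω' | Y ω' = y}, Z ω * G ω ∂P
        = ∫ ω in {ω' | Y ω' = y}, Set.indicator {ω | G ω = 1} Z ω ∂P := by rw [hZGind]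
      _ = ∫ ω in {ω' | Y ω' = y} ∩ {ω | G ω = 1}, Z ω ∂P := setIntegral_indicator hGs
  rw [hprod, hZG, ← Finset.sum_sub_distrib]
  refine Finset.sum_congr rfl fun y hy => ?_
  -- per-atom computation
  set A := {ω | Y ω = y} with hAdef
  set B1 := A ∩ {ω | G ω = 1} with hB1def
  set B0 := A ∩ {ω | G ω = 0} with hB0def
  have hB1m : MeasurableSet B1 := (hA y).inter hGs
  have hB0m : MeasurableSet B0 := (hA y).inter hG0s
  have hdisj : Disjoint B1 B0 := by
    rw [Set.disjoint_iff]
    rintro ω ⟨⟨-, h1⟩, ⟨-, h0⟩⟩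
    simp only [Set.mem_setOf_eq] at h1 h0
    exact one_ne_zero (h1.symm.trans h0)
  have hAunion : A = B1 ∪ B0 := by
    ext ω
    simp only [hB1def, hB0def, Set.mem_union, Set.mem_inter_iff, Set.mem_setOf_eq]
    rcases hG01 ω with h | h <;> simp [h]
  set a := ∫ ω in B1, Z ω ∂P with ha
  set b := ∫ ω in B0, Z ω ∂P with hb
  set P1 := (P B1).toReal with hP1def
  set P0 := (P B0).toReal with hP0def
  have hP1 : 0 < P1 := ENNReal.toReal_pos (hpos1 y hy).ne' (measure_ne_top P _)
  have hP0 : 0 < P0 := ENNReal.toReal_pos (hpos0 y hy).ne' (measure_ne_top P _)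
  have hPA : (P A).toReal = P1 + P0 := by
    rw [hAunion, measure_union hdisj hB0m, ENNReal.toReal_add (measure_ne_top P _)
      (measure_ne_top P _)]
  have hPApos : 0 < P1 + P0 := by positivity
  -- ∫_A Z = a + b
  have hintZ : ∫ ω in A, Z ω ∂P = a + b := by
    rw [hAunion, setIntegral_union hdisj hB0m hZi.integrableOn hZi.integrableOn]
  -- ∫_A G = P1
  have hintG : ∫ ω in A, G ω ∂P = P1 := by
    calc ∫ ω in A, G ω ∂P = ∫ ω in A, Set.indicator {ω | G ω = 1} (fun _ => (1:ℝ)) ω ∂P := by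
          rw [← hGind]
      _ = ∫ ω in A ∩ {ω | G ω = 1}, (1:ℝ) ∂P := setIntegral_indicator hGs
      _ = P1 := by rw [setIntegral_const, smul_eq_mul, mul_one, measureReal_def]
  have hcGval : cG y = P1 / (P1 + P0) := by
    rw [hcG]; simp only [condExpEvent]
    rw [hintG, hPA]
  have hcZval : cZ y = (a + b) / (P1 + P0) := by
    rw [hcZ]; simp only [condExpEvent]
    rw [hintZ, hPA]
  have hcZ1 : condExpEvent P Z ({ω | Y ω = y} ∩ {ω | G ω = 1}) = a / P1 := rfl
  have hcZ0 : condExpEvent P Z ({ω | Y ω = y} ∩ {ω | G ω = 0}) = b / P0 := rfl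
  rw [hcZ1, hcZ0, condVarEvent, hPA]
  show (a / P1 - b / P0) * (cG y * (1 - cG y)) * (P1 + P0)
      = a - (P1 + P0) * (cZ y * cG y)
  rw [hcGval, hcZval]
  field_simp
  ring
end

section
/- Let Z be a random variable taking values in a finite set T with P(Z = z) > 0 and P(Z = z, G = 1) > 0 and P(Z = z, G = 0) > 0 for every z ∈ T. Then the weighted sum of miscalibration, δ_C := Σ_{z∈T} (E[Y | Z = z, G = 1] − E[Y | Z = z, G = 0]) · Var(G | Z = z) · P(Z = z), equals the expected conditional covariance E[Cov(Y, G | Z)] = E[Y·G] − E[ E[Y | σ(Z)] · E[G | σ(Z)] ]. -/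
open MeasureTheory ProbabilityTheory

section Aux
variable {Ω : Type*} [MeasurableSpace Ω] (P : Measure Ω) [IsProbabilityMeasure P]

lemma aux_eval (Z : Ω → ℝ) (T : Finset ℝ) (c : ℝ → ℝ) (ω : Ω) (hω : Z ω ∈ T) :
    (∑ z ∈ T, Set.indicator {ω' | Z ω' = z} (fun _ => c z) ω) = c (Z ω) := by
  rw [Finset.sum_eq_single_of_mem (Z ω) hω]
  · exact Set.indicator_of_mem rfl _
  · intro z _ hne
    exact Set.indicator_of_notMem (fun h => hne ((h : Z ω = z).symm)) _

lemma aux_disj (Z : Ω → ℝ) {x y : ℝ} (hxy : x ≠ y) :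
    Disjoint {ω' | Z ω' = x} {ω' | Z ω' = y} :=
  Set.disjoint_left.mpr fun ω h1 h2 => hxy ((h1 : Z ω = x).symm.trans h2)

lemma aux_meas {Z : Ω → ℝ} (hZm : Measurable Z) (z : ℝ) :
    MeasurableSet {ω' | Z ω' = z} := hZm (measurableSet_singleton z)

lemma integral_eq_sum_fibers (Z : Ω → ℝ) (hZm : Measurable Z) (T : Finset ℝ)
    (hZT : ∀ ω, Z ω ∈ T) {f : Ω → ℝ} (hf : Integrable f P) :
    ∫ ω, f ω ∂P = ∑ z ∈ T, ∫ ω in {ω' | Z ω' = z}, f ω ∂P := by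
  have hU : (⋃ z ∈ T, {ω' | Z ω' = z}) = Set.univ := by
    ext ω; simp only [Set.mem_iUnion, Set.mem_setOf_eq, Set.mem_univ, iff_true]
    exact ⟨Z ω, hZT ω, rfl⟩
  rw [← setIntegral_univ, ← hU,
    integral_biUnion_finset T (fun z _ => aux_meas hZm z)
      (fun x _ y _ hxy => aux_disj Z hxy) (fun z _ => hf.integrableOn)]

lemma condexp_eq_sum_indicator (Z X : Ω → ℝ) (hZm : Measurable Z)
    (hXi : Integrable X P) (T : Finset ℝ) (hZT : ∀ ω, Z ω ∈ T) :
    (fun ω => ∑ z ∈ T,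
        Set.indicator {ω' | Z ω' = z} (fun _ => condExpEvent P X {ω' | Z ω' = z}) ω)
      =ᵐ[P] P[X | MeasurableSpace.comap Z inferInstance] := by
  have hm : MeasurableSpace.comap Z inferInstance ≤ _ := hZm.comap_le
  have hAm : ∀ z : ℝ, MeasurableSet[MeasurableSpace.comap Z inferInstance] {ω' | Z ω' = z} :=
    fun z => ⟨{z}, measurableSet_singleton z, rfl⟩
  classical
  refine ae_eq_condExp_of_forall_setIntegral_eq hm hXi (fun s _ _ => ?_) (fun s hs _ => ?_) ?_
  · exact (integrable_finset_sum T (fun z _ =>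
      (integrable_const _).indicator (aux_meas hZm z))).integrableOn
  · obtain ⟨S, hS, rfl⟩ := hs
    have key : ∀ z ∈ T, Z ⁻¹' S ∩ {ω' | Z ω' = z} = if z ∈ S then {ω' | Z ω' = z} else ∅ := by
      intro z _
      split_ifs with h
      · ext ω; exact ⟨fun hh => hh.2, fun hh => ⟨by rw [Set.mem_preimage, show Z ω = z from hh]; exact h, hh⟩⟩
      · ext ω; simp only [Set.mem_inter_iff, Set.mem_preimage, Set.mem_setOf_eq,
          Set.mem_empty_iff_false, iff_false, not_and]
        intro hωS hωz; exact h (hωz ▸ hωS)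
    have hRHS : ∫ ω in Z ⁻¹' S, X ω ∂P
        = ∑ z ∈ T, ∫ ω in Z ⁻¹' S ∩ {ω' | Z ω' = z}, X ω ∂P := by
      have hU : (⋃ z ∈ T, Z ⁻¹' S ∩ {ω' | Z ω' = z}) = Z ⁻¹' S := by
        ext ω
        simp only [Set.mem_iUnion, Set.mem_inter_iff, Set.mem_setOf_eq]
        exact ⟨fun ⟨z, _, h⟩ => h.1, fun h => ⟨Z ω, hZT ω, h, rfl⟩⟩
      conv_lhs => rw [← hU]
      rw [integral_biUnion_finset T
        (fun z _ => ((hm _ ⟨S, hS, rfl⟩)).inter (aux_meas hZm z))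
        (fun x hx y hy hxy => ((aux_disj Z hxy).mono Set.inter_subset_right Set.inter_subset_right))
        (fun z _ => hXi.integrableOn)]
    rw [hRHS, integral_finset_sum]
    · refine Finset.sum_congr rfl fun z hz => ?_
      rw [setIntegral_indicator (aux_meas hZm z), setIntegral_const, key z hz, measureReal_def]
      split_ifs with h
      · rw [smul_eq_mul, condExpEvent]
        by_cases h0 : (P {ω' | Z ω' = z}).toReal = 0
        · rw [h0, zero_mul]
          have : P {ω' | Z ω' = z} = 0 := by
            have := measure_ne_top P {ω' | Z ω' = z}
            simpa [ENNReal.toReal_eq_zero_iff] using h0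
          rw [Measure.restrict_eq_zero.mpr this, integral_zero_measure]
        · rw [mul_div_cancel₀ _ h0]
      · simp
    · exact fun z _ => ((integrable_const _).indicator (aux_meas hZm z)).integrableOn
  · exact StronglyMeasurable.aestronglyMeasurable
      (Finset.stronglyMeasurable_fun_sum _ fun z _ =>
        (stronglyMeasurable_const.indicator (hAm z)))

end Aux

/-- For `Z` taking values in a finite set `T` with all the relevant events
having positive probability, the weighted sum of miscalibration
`δ_C = Σ_{z∈T} (E[Y|Z=z,G=1] − E[Y|Z=z,G=0])·Var(G|Z=z)·P(Z=z)` equals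
`E[Cov(Y,G|Z)] = E[Y·G] − E[E[Y|σ(Z)]·E[G|σ(Z)]]`. -/
theorem stmt1 {Ω : Type*} [MeasurableSpace Ω] (P : Measure Ω) [IsProbabilityMeasure P]
    (Y Z G : Ω → ℝ) (hYm : Measurable Y) (hZm : Measurable Z) (hGm : Measurable G)
    (hY2 : MemLp Y 2 P) (hG01 : ∀ ω, G ω = 0 ∨ G ω = 1)
    (T : Finset ℝ) (hZT : ∀ ω, Z ω ∈ T)
    (hpos : ∀ z ∈ T, 0 < P {ω | Z ω = z})
    (hpos1 : ∀ z ∈ T, 0 < P ({ω | Z ω = z} ∩ {ω | G ω = 1}))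
    (hpos0 : ∀ z ∈ T, 0 < P ({ω | Z ω = z} ∩ {ω | G ω = 0})) :
    ∑ z ∈ T,
        (condExpEvent P Y ({ω | Z ω = z} ∩ {ω | G ω = 1}) -
          condExpEvent P Y ({ω | Z ω = z} ∩ {ω | G ω = 0})) *
        condVarEvent P G {ω | Z ω = z} * (P {ω | Z ω = z}).toReal
      = ∫ ω, Y ω * G ω ∂P -
        ∫ ω, (P[Y | MeasurableSpace.comap Z inferInstance]) ω *
          (P[G | MeasurableSpace.comap Z inferInstance]) ω ∂P := by

  classical
  have hG1m : MeasurableSet {ω | G ω = 1} := hGm (measurableSet_singleton 1)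
  have hG0m : MeasurableSet {ω | G ω = 0} := hGm (measurableSet_singleton 0)
  have hYi : Integrable Y P := hY2.integrable (by norm_num)
  have hGind : G = Set.indicator {ω | G ω = 1} (fun _ => (1:ℝ)) := by
    funext ω; rcases hG01 ω with h | h
    · rw [h, Set.indicator_of_notMem (by simp [Set.mem_setOf_eq, h])]
    · rw [h, Set.indicator_of_mem (show ω ∈ {ω | G ω = 1} from h) (fun _ => (1:ℝ))]
  have hGi : Integrable G P := by
    rw [hGind]; exact (integrable_const 1).indicator hG1m
  have hYGind : (fun ω => Y ω * G ω) = Set.indicator {ω | G ω = 1} Y := by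
    funext ω; rcases hG01 ω with h | h
    · rw [h, mul_zero, Set.indicator_of_notMem (by simp [Set.mem_setOf_eq, h])]
    · rw [h, mul_one, Set.indicator_of_mem (show ω ∈ {ω | G ω = 1} from h) Y]
  have hYGi : Integrable (fun ω => Y ω * G ω) P := by
    rw [hYGind]; exact hYi.indicator hG1m
  -- the conditional-expectation product integral
  have hYc := condexp_eq_sum_indicator P Z Y hZm hYi T hZT
  have hGc := condexp_eq_sum_indicator P Z G hZm hGi T hZT
  have hprod : ∫ ω, (P[Y | MeasurableSpace.comap Z inferInstance]) ω *
        (P[G | MeasurableSpace.comap Z inferInstance]) ω ∂P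
      = ∑ z ∈ T, condExpEvent P Y {ω | Z ω = z} * condExpEvent P G {ω | Z ω = z}
          * (P {ω | Z ω = z}).toReal := by
    refine (integral_congr_ae ((hYc.mul hGc).symm)).trans ?_
    have hpt : ∀ ω, (∑ z ∈ T, Set.indicator {ω' | Z ω' = z}
            (fun _ => condExpEvent P Y {ω' | Z ω' = z}) ω)
          * (∑ z ∈ T, Set.indicator {ω' | Z ω' = z}
            (fun _ => condExpEvent P G {ω' | Z ω' = z}) ω)
        = ∑ z ∈ T, Set.indicator {ω' | Z ω' = z}
            (fun _ => condExpEvent P Y {ω' | Z ω' = z} * condExpEvent P G {ω' | Z ω' = z}) ω := by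
      intro ω
      rw [aux_eval Z T _ ω (hZT ω), aux_eval Z T _ ω (hZT ω),
        aux_eval Z T (fun z => condExpEvent P Y {ω' | Z ω' = z}
          * condExpEvent P G {ω' | Z ω' = z}) ω (hZT ω)]
    calc ∫ ω, (∑ z ∈ T, Set.indicator {ω' | Z ω' = z}
            (fun _ => condExpEvent P Y {ω' | Z ω' = z}) ω)
          * (∑ z ∈ T, Set.indicator {ω' | Z ω' = z}
            (fun _ => condExpEvent P G {ω' | Z ω' = z}) ω) ∂P
        = ∫ ω, ∑ z ∈ T, Set.indicator {ω' | Z ω' = z}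
            (fun _ => condExpEvent P Y {ω' | Z ω' = z} * condExpEvent P G {ω' | Z ω' = z}) ω ∂P := by
          congr 1; funext ω; exact hpt ω
      _ = ∑ z ∈ T, condExpEvent P Y {ω | Z ω = z} * condExpEvent P G {ω | Z ω = z}
            * (P {ω | Z ω = z}).toReal := by
          rw [integral_finset_sum _ (fun z _ => (integrable_const _).indicator (aux_meas hZm z))]
          refine Finset.sum_congr rfl fun z _ => ?_
          rw [integral_indicator (aux_meas hZm z), setIntegral_const, smul_eq_mul, measureReal_def]
          ring
  -- the Y·G integral
  have hYG : ∫ ω, Y ω * G ω ∂P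
      = ∑ z ∈ T, ∫ ω in {ω' | Z ω' = z} ∩ {ω | G ω = 1}, Y ω ∂P := by
    rw [integral_eq_sum_fibers P Z hZm T hZT hYGi]
    refine Finset.sum_congr rfl fun z _ => ?_
    simp only [show ∀ ω, Y ω * G ω = Set.indicator {ω | G ω = 1} Y ω from
      fun ω => congrFun hYGind ω]
    rw [setIntegral_indicator hG1m]
  rw [hprod, hYG, ← Finset.sum_sub_distrib]
  refine Finset.sum_congr rfl fun z hz => ?_
  set q1 := (P ({ω | Z ω = z} ∩ {ω | G ω = 1})).toReal with hq1def
  set q0 := (P ({ω | Z ω = z} ∩ {ω | G ω = 0})).toReal with hq0def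
  set Pz := (P {ω | Z ω = z}).toReal with hPzdef
  have hq1 : 0 < q1 := ENNReal.toReal_pos (hpos1 z hz).ne' (measure_ne_top _ _)
  have hq0 : 0 < q0 := ENNReal.toReal_pos (hpos0 z hz).ne' (measure_ne_top _ _)
  have hsplit : {ω | Z ω = z} = ({ω | Z ω = z} ∩ {ω | G ω = 1})
      ∪ ({ω | Z ω = z} ∩ {ω | G ω = 0}) := by
    ext ω; rcases hG01 ω with h | h <;>
      simp [Set.mem_inter_iff, Set.mem_setOf_eq, h]
  have hdisj : Disjoint ({ω | Z ω = z} ∩ {ω | G ω = 1}) ({ω | Z ω = z} ∩ {ω | G ω = 0}) := by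
    refine Set.disjoint_left.mpr fun ω h1 h2 => ?_
    have ha := h1.2; have hb := h2.2
    simp only [Set.mem_setOf_eq] at ha hb
    rw [hb] at ha; norm_num at ha
  have hPsum : Pz = q1 + q0 := by
    rw [hPzdef, hq1def, hq0def]
    conv_lhs => rw [hsplit]
    rw [measure_union hdisj ((aux_meas hZm z).inter hG0m),
      ENNReal.toReal_add (measure_ne_top _ _) (measure_ne_top _ _)]
  have ha : ∫ ω in {ω | Z ω = z} ∩ {ω | G ω = 1}, Y ω ∂P
      = condExpEvent P Y ({ω | Z ω = z} ∩ {ω | G ω = 1}) * q1 := by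
    rw [condExpEvent, div_mul_cancel₀ _ hq1.ne']
  have hb : ∫ ω in {ω | Z ω = z} ∩ {ω | G ω = 0}, Y ω ∂P
      = condExpEvent P Y ({ω | Z ω = z} ∩ {ω | G ω = 0}) * q0 := by
    rw [condExpEvent, div_mul_cancel₀ _ hq0.ne']
  have hcY : condExpEvent P Y {ω | Z ω = z}
      = (condExpEvent P Y ({ω | Z ω = z} ∩ {ω | G ω = 1}) * q1
        + condExpEvent P Y ({ω | Z ω = z} ∩ {ω | G ω = 0}) * q0) / Pz := by
    rw [condExpEvent, ← ha, ← hb]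
    congr 1
    conv_lhs => rw [hsplit]
    rw [setIntegral_union hdisj ((aux_meas hZm z).inter hG0m)
      hYi.integrableOn hYi.integrableOn]
  have hcG : condExpEvent P G {ω | Z ω = z} = q1 / Pz := by
    rw [condExpEvent]
    congr 1
    rw [hGind, setIntegral_indicator hG1m, setIntegral_const, smul_eq_mul, mul_one, hq1def, measureReal_def]
  rw [condVarEvent, hcY, hcG, ha, hPsum]
  have h01 : q1 + q0 ≠ 0 := by positivity
  field_simp
  ring
end

section
/- Suppose Y is {0,1}-valued, Z is globally calibrated (E[Y | σ(Z)] = Z almost surely), and P(Y = y, G = g) > 0 for all y, g ∈ {0,1}. Then δ_B(0)·ω_Y(0) + δ_B(1)·ω_Y(1) + δ_C = MSE(Z) · (P(G = 1 | Y = 1) − P(G = 1 | Y = 0)), where δ_B(y) := E[Z | Y = y, G = 1] − E[Z | Y = y, G = 0], ω_Y(y) := Var(G | Y = y) · P(Y = y), δ_C := E[Y·G] − E[ E[Y | σ(Z)] · E[G | σ(Z)] ], and MSE(Z) := E[(Y − Z)²]. -/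
open MeasureTheory ProbabilityTheory

/-- Conditional probability of `B` given `A`: `P(B | A) = P(B ∩ A)/P(A)`. -/
noncomputable def condProbEvent {Ω : Type*} [MeasurableSpace Ω] (P : Measure Ω)
    (B A : Set Ω) : ℝ :=
  (P (B ∩ A)).toReal / (P A).toReal

lemma indicator_of_01 {Ω : Type*} (G : Ω → ℝ) (hG01 : ∀ ω, G ω = 0 ∨ G ω = 1) :
    G = Set.indicator {ω | G ω = 1} (fun _ => (1 : ℝ)) := by
  funext ω
  rcases hG01 ω with h | h
  · have : ω ∉ {ω | G ω = 1} := by simp [Set.mem_setOf_eq, h]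
    simp [Set.indicator_of_notMem this, h]
  · have : ω ∈ {ω | G ω = 1} := h
    simp [Set.indicator_of_mem this, h]

/-- **accounting identity, binary outcome.** If `Y` is {0,1}-valued,
`Z` is globally calibrated, and all outcome-by-group events have positive probability, then
`δ_B(0)·ω_Y(0) + δ_B(1)·ω_Y(1) + δ_C = MSE(Z)·(P(G=1|Y=1) − P(G=1|Y=0))`. -/
theorem stmt3 {Ω : Type*} [MeasurableSpace Ω] (P : Measure Ω) [IsProbabilityMeasure P]
    (Y Z G : Ω → ℝ) (hYm : Measurable Y) (hZm : Measurable Z) (hGm : Measurable G)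
    (hY2 : MemLp Y 2 P) (hZ2 : MemLp Z 2 P)
    (hY01 : ∀ ω, Y ω = 0 ∨ Y ω = 1) (hG01 : ∀ ω, G ω = 0 ∨ G ω = 1)
    (hcal : P[Y | MeasurableSpace.comap Z inferInstance] =ᵐ[P] Z)
    (hpos : ∀ y ∈ ({0, 1} : Set ℝ), ∀ g ∈ ({0, 1} : Set ℝ),
      0 < P ({ω | Y ω = y} ∩ {ω | G ω = g})) :
    (condExpEvent P Z ({ω | Y ω = 0} ∩ {ω | G ω = 1}) -
        condExpEvent P Z ({ω | Y ω = 0} ∩ {ω | G ω = 0})) *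
      (condVarEvent P G {ω | Y ω = 0} * (P {ω | Y ω = 0}).toReal) +
    (condExpEvent P Z ({ω | Y ω = 1} ∩ {ω | G ω = 1}) -
        condExpEvent P Z ({ω | Y ω = 1} ∩ {ω | G ω = 0})) *
      (condVarEvent P G {ω | Y ω = 1} * (P {ω | Y ω = 1}).toReal) +
    (∫ ω, Y ω * G ω ∂P -
      ∫ ω, (P[Y | MeasurableSpace.comap Z inferInstance]) ω *
        (P[G | MeasurableSpace.comap Z inferInstance]) ω ∂P)
      = (∫ ω, (Y ω - Z ω) ^ 2 ∂P) *
        (condProbEvent P {ω | G ω = 1} {ω | Y ω = 1} -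
          condProbEvent P {ω | G ω = 1} {ω | Y ω = 0}) := by
  classical
  have hm : MeasurableSpace.comap Z inferInstance ≤ _ := hZm.comap_le
  -- events
  set S0 : Set Ω := {ω | Y ω = 0} with hS0def
  set S1 : Set Ω := {ω | Y ω = 1} with hS1def
  set T0 : Set Ω := {ω | G ω = 0} with hT0def
  set T1 : Set Ω := {ω | G ω = 1} with hT1def
  have hS0m : MeasurableSet S0 := hYm (measurableSet_singleton 0)
  have hS1m : MeasurableSet S1 := hYm (measurableSet_singleton 1)
  have hT0m : MeasurableSet T0 := hGm (measurableSet_singleton 0)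
  have hT1m : MeasurableSet T1 := hGm (measurableSet_singleton 1)
  -- complements and partitions
  have hS0c : S0 = S1ᶜ := by
    ext ω; simp only [hS0def, hS1def, Set.mem_setOf_eq, Set.mem_compl_iff]
    rcases hY01 ω with h | h <;> simp [h]
  have hT0c : T0 = T1ᶜ := by
    ext ω; simp only [hT0def, hT1def, Set.mem_setOf_eq, Set.mem_compl_iff]
    rcases hG01 ω with h | h <;> simp [h]
  -- positivity of the four cells
  have h00 : 0 < P (S0 ∩ T0) := hpos 0 (by norm_num) 0 (by norm_num)
  have h01 : 0 < P (S0 ∩ T1) := hpos 0 (by norm_num) 1 (by norm_num)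
  have h10 : 0 < P (S1 ∩ T0) := hpos 1 (by norm_num) 0 (by norm_num)
  have h11 : 0 < P (S1 ∩ T1) := hpos 1 (by norm_num) 1 (by norm_num)
  -- abbreviations for the real numbers
  set a00 : ℝ := (P (S0 ∩ T0)).toReal with ha00
  set a01 : ℝ := (P (S0 ∩ T1)).toReal with ha01
  set a10 : ℝ := (P (S1 ∩ T0)).toReal with ha10
  set a11 : ℝ := (P (S1 ∩ T1)).toReal with ha11
  have hfin : ∀ s : Set Ω, P s ≠ ⊤ := fun s => measure_ne_top P s
  have ha00p : 0 < a00 := ENNReal.toReal_pos h00.ne' (hfin _)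
  have ha01p : 0 < a01 := ENNReal.toReal_pos h01.ne' (hfin _)
  have ha10p : 0 < a10 := ENNReal.toReal_pos h10.ne' (hfin _)
  have ha11p : 0 < a11 := ENNReal.toReal_pos h11.ne' (hfin _)
  set I00 : ℝ := ∫ ω in S0 ∩ T0, Z ω ∂P with hI00
  set I01 : ℝ := ∫ ω in S0 ∩ T1, Z ω ∂P with hI01
  set I10 : ℝ := ∫ ω in S1 ∩ T0, Z ω ∂P with hI10
  set I11 : ℝ := ∫ ω in S1 ∩ T1, Z ω ∂P with hI11
  -- measures of S0, S1 split
  have hsplit : ∀ s : Set Ω, MeasurableSet s → (P s).toReal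
      = (P (s ∩ T0)).toReal + (P (s ∩ T1)).toReal := by
    intro s hs
    have hdisj : Disjoint (s ∩ T0) (s ∩ T1) := by
      rw [hT0c]
      exact Set.disjoint_of_subset (Set.inter_subset_right) (Set.inter_subset_right)
        (disjoint_compl_left)
    have hunion : (s ∩ T0) ∪ (s ∩ T1) = s := by
      rw [← Set.inter_union_distrib_left, hT0c, Set.compl_union_self, Set.inter_univ]
    have hPs : P s = P (s ∩ T0) + P (s ∩ T1) := by
      rw [← measure_union hdisj (hs.inter hT1m), hunion]
    rw [hPs, ENNReal.toReal_add (hfin _) (hfin _)]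
  have hp0 : (P S0).toReal = a00 + a01 := hsplit S0 hS0m
  have hp1 : (P S1).toReal = a10 + a11 := hsplit S1 hS1m
  have hp0pos : (0:ℝ) < a00 + a01 := by positivity
  have hp1pos : (0:ℝ) < a10 + a11 := by positivity
  -- integrability
  have hYi : Integrable Y P := hY2.integrable one_le_two
  have hZi : Integrable Z P := hZ2.integrable one_le_two
  have hYb : ∀ ω, ‖Y ω‖ ≤ 1 := by
    intro ω; rcases hY01 ω with h | h <;> simp [h]
  have hGb : ∀ ω, ‖G ω‖ ≤ 1 := by
    intro ω; rcases hG01 ω with h | h <;> simp [h]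
  have hGi : Integrable G P :=
    (integrable_const (1:ℝ)).mono' hGm.aestronglyMeasurable (Filter.Eventually.of_forall hGb)
  have hYZi : Integrable (fun ω => Y ω * Z ω) P :=
    hZi.bdd_mul hYm.aestronglyMeasurable (Filter.Eventually.of_forall hYb)
  have hZYi : Integrable (Z * Y) P := by
    have := hYZi
    simpa [Pi.mul_def, mul_comm] using this
  have hZGi : Integrable (Z * G) P := by
    have h : Integrable (fun ω => G ω * Z ω) P :=
      hZi.bdd_mul hGm.aestronglyMeasurable (Filter.Eventually.of_forall hGb)
    simpa [Pi.mul_def, mul_comm] using h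
  -- Z is strongly measurable w.r.t. m
  have hZsm : StronglyMeasurable[MeasurableSpace.comap Z inferInstance] Z :=
    (Measurable.of_comap_le le_rfl).stronglyMeasurable
  -- indicator representations
  have hGind := indicator_of_01 G hG01
  have hYind := indicator_of_01 Y hY01
  -- ∫ in s, G = P (s ∩ T1)
  have hintG : ∀ s : Set Ω, ∫ ω in s, G ω ∂P = (P (s ∩ T1)).toReal := by
    intro s
    calc ∫ ω in s, G ω ∂P
        = ∫ ω in s, Set.indicator T1 (fun _ => (1:ℝ)) ω ∂P := by rw [← hGind]
      _ = ∫ _ω in s ∩ T1, (1:ℝ) ∂P := setIntegral_indicator hT1m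
      _ = (P (s ∩ T1)).toReal := by simp [measureReal_def]
  -- ∫ Y G = a11
  have hintYG : ∫ ω, Y ω * G ω ∂P = a11 := by
    have heq : ∀ ω, Y ω * G ω = Set.indicator (S1 ∩ T1) (fun _ => (1:ℝ)) ω := by
      intro ω
      rcases hY01 ω with hy | hy <;> rcases hG01 ω with hg | hg <;>
        · have : (ω ∈ S1 ∩ T1) ∨ (ω ∉ S1 ∩ T1) := em _
        <;> simp [Set.indicator_apply, Set.mem_inter_iff, hS1def, hT1def,
            Set.mem_setOf_eq, hy, hg]
    rw [integral_congr_ae (Filter.Eventually.of_forall heq)]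
    rw [integral_indicator (hS1m.inter hT1m)]
    simp [ha11, measureReal_def]
  -- ∫ Y = (P S1).toReal, same for Y^2
  have hintY : ∫ ω, Y ω ∂P = (P S1).toReal := by
    calc ∫ ω, Y ω ∂P = ∫ ω, Set.indicator S1 (fun _ => (1:ℝ)) ω ∂P := by rw [← hYind]
      _ = (P S1).toReal := by rw [integral_indicator hS1m]; simp [measureReal_def]
  have hYsq : ∀ ω, Y ω ^ 2 = Y ω := by
    intro ω; rcases hY01 ω with h | h <;> simp [h]
  -- partition of set integrals of Z
  have hZpart : ∀ s : Set Ω, MeasurableSet s →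
      ∫ ω in s, Z ω ∂P = (∫ ω in s ∩ T0, Z ω ∂P) + ∫ ω in s ∩ T1, Z ω ∂P := by
    intro s hs
    have hdisj : Disjoint (s ∩ T0) (s ∩ T1) := by
      rw [hT0c]
      exact Set.disjoint_of_subset (Set.inter_subset_right) (Set.inter_subset_right)
        (disjoint_compl_left)
    have hunion : (s ∩ T0) ∪ (s ∩ T1) = s := by
      rw [← Set.inter_union_distrib_left, hT0c, Set.compl_union_self, Set.inter_univ]
    calc ∫ ω in s, Z ω ∂P = ∫ ω in (s ∩ T0) ∪ (s ∩ T1), Z ω ∂P := by rw [hunion]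
      _ = (∫ ω in s ∩ T0, Z ω ∂P) + ∫ ω in s ∩ T1, Z ω ∂P :=
        setIntegral_union hdisj (hs.inter hT1m) (hZi.integrableOn) (hZi.integrableOn)
  -- ∫ Z over S0 and S1
  have hZS0 : ∫ ω in S0, Z ω ∂P = I00 + I01 := hZpart S0 hS0m
  have hZS1 : ∫ ω in S1, Z ω ∂P = I10 + I11 := hZpart S1 hS1m
  -- ∫ Z = sum of the four
  have hintZ : ∫ ω, Z ω ∂P = I00 + I01 + I10 + I11 := by
    have := integral_add_compl hS1m hZi
    rw [← hS0c] at this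
    rw [← this, hZS0, hZS1]; ring
  -- ∫ Y Z = I10 + I11
  have hintYZ : ∫ ω, Y ω * Z ω ∂P = I10 + I11 := by
    have heq : ∀ ω, Y ω * Z ω = Set.indicator S1 Z ω := by
      intro ω
      rcases hY01 ω with h | h
      · have hω : ω ∉ S1 := by simp [hS1def, Set.mem_setOf_eq, h]
        simp [Set.indicator_of_notMem hω, h]
      · have hω : ω ∈ S1 := h
        simp [Set.indicator_of_mem hω, h]
    rw [integral_congr_ae (Filter.Eventually.of_forall heq),
      integral_indicator hS1m, hZS1]
  -- ∫ Z G = I01 + I11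
  have hintZG : ∫ ω, Z ω * G ω ∂P = I01 + I11 := by
    have heq : ∀ ω, Z ω * G ω = Set.indicator T1 Z ω := by
      intro ω
      rcases hG01 ω with h | h
      · have hω : ω ∉ T1 := by simp [hT1def, Set.mem_setOf_eq, h]
        simp [Set.indicator_of_notMem hω, h]
      · have hω : ω ∈ T1 := h
        simp [Set.indicator_of_mem hω, h]
    rw [integral_congr_ae (Filter.Eventually.of_forall heq), integral_indicator hT1m]
    have hdisj : Disjoint (T1 ∩ S0) (T1 ∩ S1) := by
      rw [hS0c]
      exact Set.disjoint_of_subset (Set.inter_subset_right) (Set.inter_subset_right)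
        (disjoint_compl_left)
    have hunion : (T1 ∩ S0) ∪ (T1 ∩ S1) = T1 := by
      rw [← Set.inter_union_distrib_left, hS0c, Set.compl_union_self, Set.inter_univ]
    calc ∫ ω in T1, Z ω ∂P = ∫ ω in (T1 ∩ S0) ∪ (T1 ∩ S1), Z ω ∂P := by rw [hunion]
      _ = (∫ ω in T1 ∩ S0, Z ω ∂P) + ∫ ω in T1 ∩ S1, Z ω ∂P :=
        setIntegral_union hdisj (hT1m.inter hS1m) (hZi.integrableOn) (hZi.integrableOn)
      _ = I01 + I11 := by rw [Set.inter_comm T1 S0, Set.inter_comm T1 S1]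
  -- calibration consequences
  have hintcondY : ∫ ω, (P[Y| MeasurableSpace.comap Z inferInstance]) ω ∂P = ∫ ω, Y ω ∂P := integral_condExp hm
  have hZeqY : I00 + I01 + I10 + I11 = a10 + a11 := by
    have h1 : ∫ ω, Z ω ∂P = ∫ ω, Y ω ∂P := by
      rw [← hintcondY]; exact integral_congr_ae hcal.symm
    rw [hintZ, hintY, hp1] at h1
    exact h1
  -- E[YZ] = E[Z^2]
  have hYZZ2 : ∫ ω, Y ω * Z ω ∂P = ∫ ω, Z ω ^ 2 ∂P := by
    have hpull : P[Z * Y | MeasurableSpace.comap Z inferInstance] =ᵐ[P] Z * P[Y| MeasurableSpace.comap Z inferInstance] :=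
      condExp_mul_of_stronglyMeasurable_left hZsm hZYi hYi
    have h1 : ∫ ω, (Z * Y) ω ∂P = ∫ ω, (P[Z * Y| MeasurableSpace.comap Z inferInstance]) ω ∂P := (integral_condExp hm).symm
    have h2 : ∫ ω, (P[Z * Y| MeasurableSpace.comap Z inferInstance]) ω ∂P = ∫ ω, (Z * P[Y| MeasurableSpace.comap Z inferInstance]) ω ∂P := integral_congr_ae hpull
    have h3 : ∫ ω, (Z * P[Y| MeasurableSpace.comap Z inferInstance]) ω ∂P = ∫ ω, Z ω ^ 2 ∂P := by
      refine integral_congr_ae ?_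
      filter_upwards [hcal] with ω hω
      simp [Pi.mul_apply, hω, sq]
    calc ∫ ω, Y ω * Z ω ∂P = ∫ ω, (Z * Y) ω ∂P := by
          refine integral_congr_ae (Filter.Eventually.of_forall fun ω => ?_)
          simp [Pi.mul_apply, mul_comm]
      _ = ∫ ω, Z ω ^ 2 ∂P := by rw [h1, h2, h3]
  -- ∫ condexp Y * condexp G = I01 + I11
  have hintCE : ∫ ω, (P[Y| MeasurableSpace.comap Z inferInstance]) ω * (P[G| MeasurableSpace.comap Z inferInstance]) ω ∂P = I01 + I11 := by
    have hpull : P[Z * G | MeasurableSpace.comap Z inferInstance] =ᵐ[P] Z * P[G| MeasurableSpace.comap Z inferInstance] :=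
      condExp_mul_of_stronglyMeasurable_left hZsm hZGi hGi
    have h1 : ∫ ω, (P[Y| MeasurableSpace.comap Z inferInstance]) ω * (P[G| MeasurableSpace.comap Z inferInstance]) ω ∂P = ∫ ω, (Z * P[G| MeasurableSpace.comap Z inferInstance]) ω ∂P := by
      refine integral_congr_ae ?_
      filter_upwards [hcal] with ω hω
      simp [Pi.mul_apply, hω]
    have h2 : ∫ ω, (Z * P[G| MeasurableSpace.comap Z inferInstance]) ω ∂P = ∫ ω, (P[Z * G| MeasurableSpace.comap Z inferInstance]) ω ∂P :=
      (integral_congr_ae hpull).symm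
    have h3 : ∫ ω, (P[Z * G| MeasurableSpace.comap Z inferInstance]) ω ∂P = ∫ ω, (Z * G) ω ∂P := integral_condExp hm
    rw [h1, h2, h3]
    rw [← hintZG]
    rfl
  -- MSE
  have hMSE : ∫ ω, (Y ω - Z ω) ^ 2 ∂P = (a10 + a11) - (I10 + I11) := by
    have hexp : ∀ ω, (Y ω - Z ω) ^ 2 = Y ω ^ 2 - 2 * (Y ω * Z ω) + Z ω ^ 2 := by
      intro ω; ring
    have hY2i : Integrable (fun ω => Y ω ^ 2) P := hY2.integrable_sq
    have hZ2i : Integrable (fun ω => Z ω ^ 2) P := hZ2.integrable_sq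
    have h2YZi : Integrable (fun ω => 2 * (Y ω * Z ω)) P := hYZi.const_mul 2
    have e1 : Integrable (fun ω => Y ω ^ 2 - 2 * (Y ω * Z ω)) P := hY2i.sub h2YZi
    have hYsqint : ∫ ω, Y ω ^ 2 ∂P = a10 + a11 := by
      rw [integral_congr_ae (Filter.Eventually.of_forall hYsq), hintY, hp1]
    calc ∫ ω, (Y ω - Z ω) ^ 2 ∂P
        = ∫ ω, (Y ω ^ 2 - 2 * (Y ω * Z ω) + Z ω ^ 2) ∂P :=
          integral_congr_ae (Filter.Eventually.of_forall hexp)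
      _ = (∫ ω, (Y ω ^ 2 - 2 * (Y ω * Z ω)) ∂P) + ∫ ω, Z ω ^ 2 ∂P := integral_add e1 hZ2i
      _ = ((∫ ω, Y ω ^ 2 ∂P) - ∫ ω, 2 * (Y ω * Z ω) ∂P) + ∫ ω, Z ω ^ 2 ∂P := by
          rw [integral_sub hY2i h2YZi]
      _ = ((∫ ω, Y ω ^ 2 ∂P) - 2 * ∫ ω, Y ω * Z ω ∂P) + ∫ ω, Z ω ^ 2 ∂P := by
          rw [integral_const_mul]
      _ = (a10 + a11) - (I10 + I11) := by
          rw [hYsqint, hintYZ, ← hYZZ2, hintYZ]; ring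
  -- unfold definitions in the goal
  have hcv0 : condVarEvent P G S0 = (a01 / (a00 + a01)) * (1 - a01 / (a00 + a01)) := by
    unfold condVarEvent condExpEvent
    rw [hintG S0, hp0]
  have hcv1 : condVarEvent P G S1 = (a11 / (a10 + a11)) * (1 - a11 / (a10 + a11)) := by
    unfold condVarEvent condExpEvent
    rw [hintG S1, hp1]
  have hcp1 : condProbEvent P T1 S1 = a11 / (a10 + a11) := by
    unfold condProbEvent
    rw [Set.inter_comm T1 S1, hp1, ha11]
  have hcp0 : condProbEvent P T1 S0 = a01 / (a00 + a01) := by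
    unfold condProbEvent
    rw [Set.inter_comm T1 S0, hp0, ha01]
  rw [hintYG, hintCE, hMSE, hcv0, hcv1, hcp0, hcp1, hp0, hp1]
  unfold condExpEvent
  rw [← hI00, ← hI01, ← hI10, ← hI11, ← ha00, ← ha01, ← ha10, ← ha11]
  -- now pure algebra
  have hI00eq : I00 = (a10 + a11) - I01 - I10 - I11 := by linarith [hZeqY]
  rw [hI00eq]
  field_simp
  ring
end

section
/- Suppose Y is {0,1}-valued, Z is globally calibrated (E[Y | σ(Z)] = Z almost surely), and P(Y = y, G = g) > 0 for all y, g ∈ {0,1}. If the model is perfectly fair in the sense that E[Y·G] − E[ E[Y | σ(Z)] · E[G | σ(Z)] ] = 0 and E[Z | Y = y, G = 1] = E[Z | Y = y, G = 0] for y ∈ {0,1}, then either E[(Y − Z)²] = 0 (Z is an oracle) or P(G = 1 | Y = 1) = P(G = 1 | Y = 0) (equal base rates across groups). -/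
open MeasureTheory ProbabilityTheory

/-- Auxiliary pull-out property in integral form: if `f` is `m`-strongly-measurable then
`∫ f·g = ∫ f·E[g|m]`. -/
theorem pull_int {Ω : Type*} [inst : MeasurableSpace Ω] (P : Measure Ω) [IsFiniteMeasure P]
    {m : MeasurableSpace Ω} (hm : m ≤ inst) {f g : Ω → ℝ}
    (hf : StronglyMeasurable[m] f) (hfg : Integrable (f * g) P) (hg : Integrable g P) :
    ∫ ω, f ω * g ω ∂P = ∫ ω, f ω * (P[g|m]) ω ∂P := by
  have h := condExp_mul_of_stronglyMeasurable_left hf hfg hg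
  have h2 : ∫ ω, (P[f * g|m]) ω ∂P = ∫ ω, (f * g) ω ∂P := integral_condExp hm
  calc ∫ ω, f ω * g ω ∂P = ∫ ω, (f * g) ω ∂P := rfl
    _ = ∫ ω, (P[f * g|m]) ω ∂P := h2.symm
    _ = ∫ ω, (f * P[g|m]) ω ∂P := integral_congr_ae h
    _ = ∫ ω, f ω * (P[g|m]) ω ∂P := rfl

/-- **impossibility.** If `Y` is {0,1}-valued, `Z` is globally calibrated,
all outcome-by-group events have positive probability, and the model is perfectly fair
(`δ_C = 0` and perfect balance on both classes), then either `MSE(Z) = 0` (oracle) or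
`P(G=1|Y=1) = P(G=1|Y=0)` (equal base rates). -/
theorem stmt4 {Ω : Type*} [MeasurableSpace Ω] (P : Measure Ω) [IsProbabilityMeasure P]
    (Y Z G : Ω → ℝ) (hYm : Measurable Y) (hZm : Measurable Z) (hGm : Measurable G)
    (hY2 : MemLp Y 2 P) (hZ2 : MemLp Z 2 P)
    (hY01 : ∀ ω, Y ω = 0 ∨ Y ω = 1) (hG01 : ∀ ω, G ω = 0 ∨ G ω = 1)
    (hcal : P[Y | MeasurableSpace.comap Z inferInstance] =ᵐ[P] Z)
    (hpos : ∀ y ∈ ({0, 1} : Set ℝ), ∀ g ∈ ({0, 1} : Set ℝ),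
      0 < P ({ω | Y ω = y} ∩ {ω | G ω = g}))
    (hfairC : ∫ ω, Y ω * G ω ∂P -
      ∫ ω, (P[Y | MeasurableSpace.comap Z inferInstance]) ω *
        (P[G | MeasurableSpace.comap Z inferInstance]) ω ∂P = 0)
    (hfairB : ∀ y ∈ ({0, 1} : Set ℝ),
      condExpEvent P Z ({ω | Y ω = y} ∩ {ω | G ω = 1}) =
        condExpEvent P Z ({ω | Y ω = y} ∩ {ω | G ω = 0})) :
    (∫ ω, (Y ω - Z ω) ^ 2 ∂P) = 0 ∨
      condProbEvent P {ω | G ω = 1} {ω | Y ω = 1} =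
        condProbEvent P {ω | G ω = 1} {ω | Y ω = 0} := by
  classical
  -- basic integrability
  have hYint : Integrable Y P := hY2.integrable one_le_two
  have hZint : Integrable Z P := hZ2.integrable one_le_two
  have hYbd : ∀ ω, ‖Y ω‖ ≤ 1 := by
    intro ω; rcases hY01 ω with h | h <;> simp [h]
  have hGbd : ∀ ω, ‖G ω‖ ≤ 1 := by
    intro ω; rcases hG01 ω with h | h <;> simp [h]
  have hGint : Integrable G P :=
    (integrable_const (1 : ℝ)).mono' hGm.aestronglyMeasurable (Filter.Eventually.of_forall hGbd)
  have hYZint : Integrable (fun ω => Y ω * Z ω) P :=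
    hZint.bdd_mul hYm.aestronglyMeasurable (Filter.Eventually.of_forall hYbd)
  have hZYint : Integrable (Z * Y) P := by
    have h : (Z * Y) = fun ω => Y ω * Z ω := by funext ω; simp [mul_comm]
    rw [h]; exact hYZint
  have hZGint : Integrable (Z * G) P := by
    have h := hZint.bdd_mul hGm.aestronglyMeasurable (Filter.Eventually.of_forall hGbd)
    have h2 : (Z * G) = fun ω => G ω * Z ω := by funext ω; simp [mul_comm]
    rw [h2]; exact h
  have hZZint : Integrable (fun ω => Z ω * Z ω) P := by
    have h := hZ2.integrable_sq
    have h2 : (fun ω => Z ω * Z ω) = fun ω => Z ω ^ 2 := by funext ω; ring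
    rw [h2]; exact h
  -- strong measurability of Z w.r.t. comap Z
  have hZsm : StronglyMeasurable[MeasurableSpace.comap Z inferInstance] Z :=
    Measurable.stronglyMeasurable (fun s hs => ⟨s, hs, rfl⟩)
  -- Key pull-out identities
  have key1 : ∫ ω, Y ω * Z ω ∂P = ∫ ω, Z ω * Z ω ∂P := by
    have k := pull_int P hZm.comap_le hZsm hZYint hYint
    have hc : (fun ω => Z ω * (P[Y | MeasurableSpace.comap Z inferInstance]) ω) =ᵐ[P]
        fun ω => Z ω * Z ω := by
      filter_upwards [hcal] with ω hω; rw [hω]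
    calc ∫ ω, Y ω * Z ω ∂P = ∫ ω, Z ω * Y ω ∂P := by
          apply integral_congr_ae; filter_upwards with ω; ring
      _ = ∫ ω, Z ω * (P[Y | MeasurableSpace.comap Z inferInstance]) ω ∂P := k
      _ = ∫ ω, Z ω * Z ω ∂P := integral_congr_ae hc
  have key2 : ∫ ω, Z ω * G ω ∂P =
      ∫ ω, Z ω * (P[G | MeasurableSpace.comap Z inferInstance]) ω ∂P :=
    pull_int P hZm.comap_le hZsm hZGint hGint
  -- fairness : ∫ Y G = ∫ Z G
  have hfair : ∫ ω, Y ω * G ω ∂P = ∫ ω, Z ω * G ω ∂P := by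
    have hc : (fun ω => (P[Y | MeasurableSpace.comap Z inferInstance]) ω *
        (P[G | MeasurableSpace.comap Z inferInstance]) ω) =ᵐ[P]
        fun ω => Z ω * (P[G | MeasurableSpace.comap Z inferInstance]) ω := by
      filter_upwards [hcal] with ω hω; rw [hω]
    have h := sub_eq_zero.mp hfairC
    rw [h, integral_congr_ae hc, ← key2]
  -- total expectation of Z
  have hZY : ∫ ω, Z ω ∂P = ∫ ω, Y ω ∂P :=
    (integral_congr_ae hcal.symm).trans (integral_condExp hZm.comap_le)
  -- sets
  set A11 : Set Ω := {ω | Y ω = 1} ∩ {ω | G ω = 1} with hA11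
  set A10 : Set Ω := {ω | Y ω = 1} ∩ {ω | G ω = 0} with hA10
  set A01 : Set Ω := {ω | Y ω = 0} ∩ {ω | G ω = 1} with hA01
  set A00 : Set Ω := {ω | Y ω = 0} ∩ {ω | G ω = 0} with hA00
  have hmY1 : MeasurableSet {ω | Y ω = 1} := hYm (measurableSet_singleton 1)
  have hmY0 : MeasurableSet {ω | Y ω = 0} := hYm (measurableSet_singleton 0)
  have hmG1 : MeasurableSet {ω | G ω = 1} := hGm (measurableSet_singleton 1)
  have hmG0 : MeasurableSet {ω | G ω = 0} := hGm (measurableSet_singleton 0)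
  have hmA11 : MeasurableSet A11 := hmY1.inter hmG1
  have hmA10 : MeasurableSet A10 := hmY1.inter hmG0
  have hmA01 : MeasurableSet A01 := hmY0.inter hmG1
  have hmA00 : MeasurableSet A00 := hmY0.inter hmG0
  set p11 : ℝ := (P A11).toReal with hp11
  set p10 : ℝ := (P A10).toReal with hp10
  set p01 : ℝ := (P A01).toReal with hp01
  set p00 : ℝ := (P A00).toReal with hp00
  set s11 : ℝ := ∫ ω in A11, Z ω ∂P with hs11
  set s10 : ℝ := ∫ ω in A10, Z ω ∂P with hs10
  set s01 : ℝ := ∫ ω in A01, Z ω ∂P with hs01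
  set s00 : ℝ := ∫ ω in A00, Z ω ∂P with hs00
  have h0mem : (0 : ℝ) ∈ ({0, 1} : Set ℝ) := by simp
  have h1mem : (1 : ℝ) ∈ ({0, 1} : Set ℝ) := by simp
  have hp11pos : 0 < p11 := ENNReal.toReal_pos (hpos 1 h1mem 1 h1mem).ne' (measure_ne_top _ _)
  have hp10pos : 0 < p10 := ENNReal.toReal_pos (hpos 1 h1mem 0 h0mem).ne' (measure_ne_top _ _)
  have hp01pos : 0 < p01 := ENNReal.toReal_pos (hpos 0 h0mem 1 h1mem).ne' (measure_ne_top _ _)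
  have hp00pos : 0 < p00 := ENNReal.toReal_pos (hpos 0 h0mem 0 h0mem).ne' (measure_ne_top _ _)
  -- set decompositions
  have hY1split : {ω | Y ω = 1} = A11 ∪ A10 := by
    ext ω; simp only [hA11, hA10, Set.mem_union, Set.mem_inter_iff, Set.mem_setOf_eq]
    constructor
    · intro h; rcases hG01 ω with hg | hg
      · exact Or.inr ⟨h, hg⟩
      · exact Or.inl ⟨h, hg⟩
    · rintro (⟨h, _⟩ | ⟨h, _⟩) <;> exact h
  have hY0split : {ω | Y ω = 0} = A01 ∪ A00 := by
    ext ω; simp only [hA01, hA00, Set.mem_union, Set.mem_inter_iff, Set.mem_setOf_eq]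
    constructor
    · intro h; rcases hG01 ω with hg | hg
      · exact Or.inr ⟨h, hg⟩
      · exact Or.inl ⟨h, hg⟩
    · rintro (⟨h, _⟩ | ⟨h, _⟩) <;> exact h
  have hG1split : {ω | G ω = 1} = A11 ∪ A01 := by
    ext ω; simp only [hA11, hA01, Set.mem_union, Set.mem_inter_iff, Set.mem_setOf_eq]
    constructor
    · intro h; rcases hY01 ω with hy | hy
      · exact Or.inr ⟨hy, h⟩
      · exact Or.inl ⟨hy, h⟩
    · rintro (⟨_, h⟩ | ⟨_, h⟩) <;> exact h
  have hunivsplit : (Set.univ : Set Ω) = {ω | Y ω = 1} ∪ {ω | Y ω = 0} := by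
    ext ω; simp only [Set.mem_univ, Set.mem_union, Set.mem_setOf_eq, true_iff]
    exact (hY01 ω).symm
  have hdisj1110 : Disjoint A11 A10 := by
    rw [Set.disjoint_left]; rintro ω ⟨_, h1⟩ ⟨_, h0⟩
    rw [Set.mem_setOf_eq] at h1 h0; rw [h1] at h0; norm_num at h0
  have hdisj0100 : Disjoint A01 A00 := by
    rw [Set.disjoint_left]; rintro ω ⟨_, h1⟩ ⟨_, h0⟩
    rw [Set.mem_setOf_eq] at h1 h0; rw [h1] at h0; norm_num at h0
  have hdisj1101 : Disjoint A11 A01 := by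
    rw [Set.disjoint_left]; rintro ω ⟨h1, _⟩ ⟨h0, _⟩
    rw [Set.mem_setOf_eq] at h1 h0; rw [h1] at h0; norm_num at h0
  have hdisjY : Disjoint {ω | Y ω = 1} {ω | Y ω = 0} := by
    rw [Set.disjoint_left]; intro ω h1 h0
    rw [Set.mem_setOf_eq] at h1 h0; rw [h1] at h0; norm_num at h0
  -- measure decompositions
  set q1 : ℝ := (P {ω | Y ω = 1}).toReal with hq1
  set q0 : ℝ := (P {ω | Y ω = 0}).toReal with hq0
  have hq1eq : q1 = p11 + p10 := by
    rw [hq1, hY1split, measure_union hdisj1110 hmA10,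
      ENNReal.toReal_add (measure_ne_top _ _) (measure_ne_top _ _)]
  have hq0eq : q0 = p01 + p00 := by
    rw [hq0, hY0split, measure_union hdisj0100 hmA00,
      ENNReal.toReal_add (measure_ne_top _ _) (measure_ne_top _ _)]
  -- integral identities via indicators
  have hYG : ∫ ω, Y ω * G ω ∂P = p11 := by
    have heq : (fun ω => Y ω * G ω) = A11.indicator (fun _ => (1 : ℝ)) := by
      funext ω
      rcases hY01 ω with hy | hy <;> rcases hG01 ω with hg | hg <;>
        simp [Set.indicator_apply, hA11, Set.mem_inter_iff, Set.mem_setOf_eq, hy, hg]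
    rw [heq, hp11]
    exact integral_indicator_one hmA11
  have hZGsplit : ∫ ω, Z ω * G ω ∂P = s11 + s01 := by
    have heq : (fun ω => Z ω * G ω) = ({ω | G ω = 1}).indicator Z := by
      funext ω
      rcases hG01 ω with hg | hg <;> simp [Set.indicator_apply, Set.mem_setOf_eq, hg]
    rw [heq, integral_indicator hmG1, hG1split,
      setIntegral_union hdisj1101 hmA01 hZint.integrableOn hZint.integrableOn]
  have hYZsplit : ∫ ω, Y ω * Z ω ∂P = s11 + s10 := by
    have heq : (fun ω => Y ω * Z ω) = ({ω | Y ω = 1}).indicator Z := by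
      funext ω
      rcases hY01 ω with hy | hy <;> simp [Set.indicator_apply, Set.mem_setOf_eq, hy]
    rw [heq, integral_indicator hmY1, hY1split,
      setIntegral_union hdisj1110 hmA10 hZint.integrableOn hZint.integrableOn]
  have hYq1 : ∫ ω, Y ω ∂P = q1 := by
    have heq : Y = ({ω | Y ω = 1}).indicator (fun _ => (1 : ℝ)) := by
      funext ω
      rcases hY01 ω with hy | hy <;> simp [Set.indicator_apply, Set.mem_setOf_eq, hy]
    rw [heq, hq1]
    exact integral_indicator_one hmY1
  have hZtot : ∫ ω, Z ω ∂P = q1 := by rw [hZY, hYq1]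
  have hZsplitY : ∫ ω, Z ω ∂P = (s11 + s10) + (s01 + s00) := by
    rw [← setIntegral_univ (f := Z) (μ := P), hunivsplit,
      setIntegral_union hdisjY hmY0 hZint.integrableOn hZint.integrableOn,
      hY1split, hY0split,
      setIntegral_union hdisj1110 hmA10 hZint.integrableOn hZint.integrableOn,
      setIntegral_union hdisj0100 hmA00 hZint.integrableOn hZint.integrableOn]
  -- MSE
  set m : ℝ := ∫ ω, (Y ω - Z ω) ^ 2 ∂P with hmdef
  have hMSE : ∫ ω, Z ω * Z ω ∂P = q1 - m := by
    have hsub : Integrable (fun ω => Y ω - 2 * (Y ω * Z ω)) P := hYint.sub (hYZint.const_mul 2)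
    have h1 : ∫ ω, (Y ω - 2 * (Y ω * Z ω)) + Z ω * Z ω ∂P
        = (∫ ω, Y ω - 2 * (Y ω * Z ω) ∂P) + ∫ ω, Z ω * Z ω ∂P := integral_add hsub hZZint
    have h2 : ∫ ω, Y ω - 2 * (Y ω * Z ω) ∂P
        = (∫ ω, Y ω ∂P) - ∫ ω, 2 * (Y ω * Z ω) ∂P := integral_sub hYint (hYZint.const_mul 2)
    have h3 : ∫ ω, 2 * (Y ω * Z ω) ∂P = 2 * ∫ ω, Y ω * Z ω ∂P := integral_const_mul 2 _
    have h : m = ∫ ω, (Y ω - 2 * (Y ω * Z ω)) + Z ω * Z ω ∂P := by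
      rw [hmdef]; congr 1; funext ω; rcases hY01 ω with hy | hy <;> rw [hy] <;> ring
    rw [h, h1, h2, h3, hYq1, key1]; ring
  -- the five equations
  have e3 : s11 + s10 = q1 - m := by rw [← hYZsplit, key1, hMSE]
  have e4 : s01 + s00 = m := by
    have h := hZsplitY
    rw [hZtot] at h
    linarith [e3]
  have e5 : s11 + s01 = p11 := by rw [← hZGsplit, ← hfair, hYG]
  have e1 : s11 * p10 = s10 * p11 := by
    have hb := hfairB 1 h1mem
    unfold condExpEvent at hb
    rw [div_eq_div_iff hp11pos.ne' hp10pos.ne'] at hb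
    exact hb
  have e2 : s01 * p00 = s00 * p01 := by
    have hb := hfairB 0 h0mem
    unfold condExpEvent at hb
    rw [div_eq_div_iff hp01pos.ne' hp00pos.ne'] at hb
    exact hb
  -- algebra
  have e3' : s11 + s10 = (p11 + p10) - m := by rw [← hq1eq]; exact e3
  have ha : s11 * (p11 + p10) = ((p11 + p10) - m) * p11 := by
    linear_combination e1 + p11 * e3'
  have hb' : s01 * (p01 + p00) = m * p01 := by
    linear_combination e2 + p01 * e4
  have hkey : m * (p11 * q0 - p01 * q1) = 0 := by
    rw [hq1eq, hq0eq]
    linear_combination (p01 + p00) * ha + (p11 + p10) * hb' - (p01 + p00) * (p11 + p10) * e5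
  rcases mul_eq_zero.mp hkey with hm0' | hratio
  · exact Or.inl hm0'
  · right
    have hq1pos : 0 < q1 := by rw [hq1eq]; linarith
    have hq0pos : 0 < q0 := by rw [hq0eq]; linarith
    have final : p11 / q1 = p01 / q0 := by
      rw [div_eq_div_iff hq1pos.ne' hq0pos.ne']; linarith
    unfold condProbEvent
    rw [Set.inter_comm {ω | G ω = 1} {ω | Y ω = 1}, Set.inter_comm {ω | G ω = 1} {ω | Y ω = 0}]
    exact final
end

section
/- Suppose Z is globally calibrated: E[Y | σ(Z)] = Z almost surely. Then δ_B + δ_C = Cov( E[G | σ(Y)], Y − E[Z | σ(Y)] ), where δ_B := E[Z·G] − E[ E[Z | σ(Y)] · E[G | σ(Y)] ], δ_C := E[Y·G] − E[ E[Y | σ(Z)] · E[G | σ(Z)] ], and Cov(U, V) := E[U·V] − E[U]·E[V]. -/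
open MeasureTheory ProbabilityTheory
open scoped NNReal

/-- Pull-out property at the level of integrals: if `f` is `m`-strongly measurable,
then `∫ f·g = ∫ f·E[g|m]`. -/
lemma integral_mul_condexp_of_stronglyMeasurable {Ω : Type*} {m m0 : MeasurableSpace Ω}
    (hm : m ≤ m0) (P : Measure Ω) [IsProbabilityMeasure P] {f g : Ω → ℝ}
    (hf : StronglyMeasurable[m] f) (hfg : Integrable (fun ω => f ω * g ω) P)
    (hg : Integrable g P) :
    ∫ ω, f ω * g ω ∂P = ∫ ω, f ω * (P[g | m]) ω ∂P := by
  haveI : SigmaFinite (P.trim hm) := by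
    have : IsFiniteMeasure (P.trim hm) := isFiniteMeasure_trim hm
    infer_instance
  have h : P[f * g | m] =ᵐ[P] f * P[g | m] :=
    condExp_mul_of_stronglyMeasurable_left hf hfg hg
  calc ∫ ω, f ω * g ω ∂P = ∫ ω, (f * g) ω ∂P := rfl
    _ = ∫ ω, (P[f * g | m]) ω ∂P := (integral_condExp hm).symm
    _ = ∫ ω, (f * P[g | m]) ω ∂P := integral_congr_ae h
    _ = ∫ ω, f ω * (P[g | m]) ω ∂P := rfl

/-- **general accounting identity.** If `Z` is globally calibrated
(`E[Y|σ(Z)] = Z` a.s.), then `δ_B + δ_C = Cov(E[G|σ(Y)], Y − E[Z|σ(Y)])`, where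
`δ_B = E[Z·G] − E[E[Z|σ(Y)]·E[G|σ(Y)]]`, `δ_C = E[Y·G] − E[E[Y|σ(Z)]·E[G|σ(Z)]]`,
and `Cov(U,V) = E[U·V] − E[U]·E[V]`. -/
theorem stmt5 {Ω : Type*} [MeasurableSpace Ω] (P : Measure Ω) [IsProbabilityMeasure P]
    (Y Z G : Ω → ℝ) (hYm : Measurable Y) (hZm : Measurable Z) (hGm : Measurable G)
    (hY2 : MemLp Y 2 P) (hZ2 : MemLp Z 2 P) (hG01 : ∀ ω, G ω = 0 ∨ G ω = 1)
    (hcal : P[Y | MeasurableSpace.comap Z inferInstance] =ᵐ[P] Z) :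
    ((∫ ω, Z ω * G ω ∂P) -
        ∫ ω, (P[Z | MeasurableSpace.comap Y inferInstance]) ω *
          (P[G | MeasurableSpace.comap Y inferInstance]) ω ∂P) +
    ((∫ ω, Y ω * G ω ∂P) -
        ∫ ω, (P[Y | MeasurableSpace.comap Z inferInstance]) ω *
          (P[G | MeasurableSpace.comap Z inferInstance]) ω ∂P)
      = (∫ ω, (P[G | MeasurableSpace.comap Y inferInstance]) ω *
            (Y ω - (P[Z | MeasurableSpace.comap Y inferInstance]) ω) ∂P) -
        (∫ ω, (P[G | MeasurableSpace.comap Y inferInstance]) ω ∂P) *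
          ∫ ω, (Y ω - (P[Z | MeasurableSpace.comap Y inferInstance]) ω) ∂P := by
  set mY := MeasurableSpace.comap Y inferInstance with hmYdef
  set mZ := MeasurableSpace.comap Z inferInstance with hmZdef
  have hmY : mY ≤ _ := hYm.comap_le
  have hmZ : mZ ≤ _ := hZm.comap_le
  -- basic integrability
  have hYi : Integrable Y P := hY2.integrable one_le_two
  have hZi : Integrable Z P := hZ2.integrable one_le_two
  have hGb : ∀ ω, |G ω| ≤ ((1 : ℝ≥0) : ℝ) := by
    intro ω; rcases hG01 ω with h | h <;> simp [h]
  have hGi : Integrable G P :=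
    (memLp_top_of_bound hGm.aestronglyMeasurable 1 (ae_of_all _ (by
      simpa [Real.norm_eq_abs] using hGb))).integrable le_top
  -- a.e. bounds on conditional expectations of G
  have hgYb : ∀ᵐ ω ∂P, ‖(P[G | mY]) ω‖ ≤ ((1 : ℝ≥0) : ℝ) := by
    filter_upwards [ae_bdd_condExp_of_ae_bdd (m := mY) (μ := P) (R := 1)
      (ae_of_all _ hGb)] with ω h
    simpa [Real.norm_eq_abs] using h
  have hgZb : ∀ᵐ ω ∂P, ‖(P[G | mZ]) ω‖ ≤ ((1 : ℝ≥0) : ℝ) := by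
    filter_upwards [ae_bdd_condExp_of_ae_bdd (m := mZ) (μ := P) (R := 1)
      (ae_of_all _ hGb)] with ω h
    simpa [Real.norm_eq_abs] using h
  have hgYsm :=
    ((stronglyMeasurable_condExp (m := mY) (f := G) (μ := P)).mono hmY).aestronglyMeasurable (μ := P)
  have hgZsm :=
    ((stronglyMeasurable_condExp (m := mZ) (f := G) (μ := P)).mono hmZ).aestronglyMeasurable (μ := P)
  -- products with G or its conditional expectations are integrable
  have hYG : Integrable (fun ω => Y ω * G ω) P :=
    (hYi.bdd_mul (c := 1) hGm.aestronglyMeasurable (ae_of_all _ fun ω => by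
      simpa [Real.norm_eq_abs] using hGb ω)).congr
      (ae_of_all _ fun ω => mul_comm _ _)
  have hZG : Integrable (fun ω => Z ω * G ω) P :=
    (hZi.bdd_mul (c := 1) hGm.aestronglyMeasurable (ae_of_all _ fun ω => by
      simpa [Real.norm_eq_abs] using hGb ω)).congr
      (ae_of_all _ fun ω => mul_comm _ _)
  have hgYY : Integrable (fun ω => (P[G | mY]) ω * Y ω) P :=
    hYi.bdd_mul hgYsm hgYb
  have hgYzY : Integrable (fun ω => (P[G | mY]) ω * (P[Z | mY]) ω) P :=
    (integrable_condExp (m := mY)).bdd_mul hgYsm hgYb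
  -- pull-out identities
  have hYsmY : StronglyMeasurable[mY] Y :=
    (measurable_iff_comap_le.mpr le_rfl).stronglyMeasurable
  have hZsmZ : StronglyMeasurable[mZ] Z :=
    (measurable_iff_comap_le.mpr le_rfl).stronglyMeasurable
  have h1 : ∫ ω, Y ω * G ω ∂P = ∫ ω, Y ω * (P[G | mY]) ω ∂P :=
    integral_mul_condexp_of_stronglyMeasurable hmY P hYsmY hYG hGi
  have h2 : ∫ ω, Z ω * G ω ∂P = ∫ ω, Z ω * (P[G | mZ]) ω ∂P :=
    integral_mul_condexp_of_stronglyMeasurable hmZ P hZsmZ hZG hGi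
  -- calibration: replace E[Y|σZ] by Z
  have h3 : ∫ ω, (P[Y | mZ]) ω * (P[G | mZ]) ω ∂P
      = ∫ ω, Z ω * (P[G | mZ]) ω ∂P :=
    integral_congr_ae (hcal.mul (Filter.EventuallyEq.refl _ _))
  -- means: ∫ Z = ∫ Y and ∫ E[Z|σY] = ∫ Z
  have h5 : ∫ ω, (P[Z | mY]) ω ∂P = ∫ ω, Z ω ∂P := by
    haveI : SigmaFinite (P.trim hmY) := by
      have : IsFiniteMeasure (P.trim hmY) := isFiniteMeasure_trim hmY
      infer_instance
    exact integral_condExp hmY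
  have h6 : ∫ ω, Z ω ∂P = ∫ ω, Y ω ∂P := by
    haveI : SigmaFinite (P.trim hmZ) := by
      have : IsFiniteMeasure (P.trim hmZ) := isFiniteMeasure_trim hmZ
      infer_instance
    calc ∫ ω, Z ω ∂P = ∫ ω, (P[Y | mZ]) ω ∂P := (integral_congr_ae hcal).symm
      _ = ∫ ω, Y ω ∂P := integral_condExp hmZ
  -- second factor of covariance has mean zero
  have h7 : ∫ ω, (Y ω - (P[Z | mY]) ω) ∂P = 0 := by
    rw [integral_sub hYi integrable_condExp, h5, h6]; ring
  -- split the covariance integral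
  have h8 : ∫ ω, (P[G | mY]) ω * (Y ω - (P[Z | mY]) ω) ∂P
      = (∫ ω, (P[G | mY]) ω * Y ω ∂P)
        - ∫ ω, (P[G | mY]) ω * (P[Z | mY]) ω ∂P := by
    rw [← integral_sub hgYY hgYzY]
    exact integral_congr_ae (ae_of_all _ fun ω => by ring)
  -- commute some products
  have h9 : ∫ ω, (P[G | mY]) ω * Y ω ∂P = ∫ ω, Y ω * (P[G | mY]) ω ∂P :=
    integral_congr_ae (ae_of_all _ fun ω => mul_comm _ _)
  have h10 : ∫ ω, (P[G | mY]) ω * (P[Z | mY]) ω ∂P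
      = ∫ ω, (P[Z | mY]) ω * (P[G | mY]) ω ∂P :=
    integral_congr_ae (ae_of_all _ fun ω => mul_comm _ _)
  rw [h7, h8, h9, h10, h3, ← h2, ← h1]
  ring
end

section
/- Suppose Z is globally calibrated: E[Y | σ(Z)] = Z almost surely. Then |δ_B + δ_C| ≤ √Var(E[G | σ(Y)]) · √Var(Y − E[Z | σ(Y)]) ≤ √Var(E[G | σ(Y)]) · √E[(Y − Z)²], where δ_B := E[Z·G] − E[ E[Z | σ(Y)] · E[G | σ(Y)] ], δ_C := E[Y·G] − E[ E[Y | σ(Z)] · E[G | σ(Z)] ], and Var(U) := E[U²] − (E[U])². -/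
open MeasureTheory ProbabilityTheory
open scoped ENNReal

section Aux

variable {α : Type*} {m m0 : MeasurableSpace α} {μ : Measure α}

lemma stmt8_integrable_mul [IsFiniteMeasure μ] {f g : α → ℝ} (hf : MemLp f 2 μ)
    (hg : MemLp g 2 μ) : Integrable (fun x => f x * g x) μ := by
  rw [← memLp_one_iff_integrable]
  have h : (1 : ℝ≥0∞) / 1 = 1 / 2 + 1 / 2 := by
    rw [ENNReal.div_add_div_same, one_div_one, one_add_one_eq_two,
      ENNReal.div_self two_ne_zero ENNReal.ofNat_ne_top]
  exact hg.smul (φ := f) (r := 1) hf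

lemma stmt8_memℒp_two_condexp (hm : m ≤ m0) [IsFiniteMeasure μ] {f : α → ℝ}
    (hf : MemLp f 2 μ) : MemLp (μ[f|m]) 2 μ := by
  have h : (↑↑(condExpL2 ℝ ℝ hm (hf.toLp f) : lpMeas ℝ ℝ m 2 μ) : α → ℝ) =ᵐ[μ] μ[f|m] := by
    refine ae_eq_condExp_of_forall_setIntegral_eq hm (hf.integrable one_le_two)
      (fun s _ _ => (integrable_condExpL2_of_isFiniteMeasure hm).integrableOn)
      (fun s hs hμs => ?_) (aestronglyMeasurable_condExpL2 hm _)
    rw [integral_condExpL2_eq hm (hf.toLp f) hs hμs.ne]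
    exact integral_congr_ae (ae_restrict_of_ae hf.coeFn_toLp)
  exact (Lp.memLp (condExpL2 ℝ ℝ hm (hf.toLp f) : Lp ℝ 2 μ)).ae_eq h

lemma stmt8_cs {f g : α → ℝ} (hf : MemLp f 2 μ) (hg : MemLp g 2 μ) :
    |∫ x, f x * g x ∂μ| ≤ Real.sqrt (∫ x, f x ^ 2 ∂μ) * Real.sqrt (∫ x, g x ^ 2 ∂μ) := by
  have hpq : Real.HolderConjugate 2 2 := Real.HolderConjugate.two_two
  have h2 : ENNReal.ofReal (2 : ℝ) = 2 := by
    rw [ENNReal.ofReal_ofNat]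
  have hf' : MemLp f (ENNReal.ofReal 2) μ := by rw [h2]; exact hf
  have hg' : MemLp g (ENNReal.ofReal 2) μ := by rw [h2]; exact hg
  have key := integral_mul_norm_le_Lp_mul_Lq hpq hf' hg'
  have habs : |∫ x, f x * g x ∂μ| ≤ ∫ x, ‖f x‖ * ‖g x‖ ∂μ := by
    calc |∫ x, f x * g x ∂μ| = ‖∫ x, f x * g x ∂μ‖ := (Real.norm_eq_abs _).symm
      _ ≤ ∫ x, ‖f x * g x‖ ∂μ := norm_integral_le_integral_norm _
      _ = ∫ x, ‖f x‖ * ‖g x‖ ∂μ :=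
        integral_congr_ae (ae_of_all _ fun x => norm_mul _ _)
  have hL : ∫ x, ‖f x‖ ^ (2 : ℝ) ∂μ = ∫ x, f x ^ 2 ∂μ :=
    integral_congr_ae (ae_of_all _ fun x =>
      show ‖f x‖ ^ (2 : ℝ) = f x ^ 2 by rw [Real.rpow_two, Real.norm_eq_abs, sq_abs])
  have hR : ∫ x, ‖g x‖ ^ (2 : ℝ) ∂μ = ∫ x, g x ^ 2 ∂μ :=
    integral_congr_ae (ae_of_all _ fun x =>
      show ‖g x‖ ^ (2 : ℝ) = g x ^ 2 by rw [Real.rpow_two, Real.norm_eq_abs, sq_abs])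
  rw [hL, hR, ← Real.sqrt_eq_rpow, ← Real.sqrt_eq_rpow] at key
  exact habs.trans key

lemma stmt8_var [IsProbabilityMeasure μ] {f : α → ℝ} (hf : MemLp f 2 μ) :
    ∫ x, (f x - ∫ y, f y ∂μ) ^ 2 ∂μ = (∫ x, f x ^ 2 ∂μ) - (∫ x, f x ∂μ) ^ 2 := by
  set c := ∫ y, f y ∂μ with hc
  have hfi : Integrable f μ := hf.integrable one_le_two
  have h1 : Integrable (fun x => f x ^ 2) μ := hf.integrable_sq
  have h2 : Integrable (fun x => 2 * f x * c) μ := (hfi.const_mul 2).mul_const c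
  have hfun : (fun x => (f x - c) ^ 2) = fun x => f x ^ 2 - 2 * f x * c + c ^ 2 :=
    funext fun x => by ring
  have h12 : Integrable (fun x => f x ^ 2 - 2 * f x * c) μ := h1.sub h2
  rw [hfun, integral_add h12 (integrable_const _), integral_sub h1 h2,
    integral_mul_const, integral_const_mul, integral_const, probReal_univ, one_smul, ← hc]
  ring

lemma stmt8_key (hm : m ≤ m0) {μ : Measure α} [IsProbabilityMeasure μ] {f g : α → ℝ}
    (hfm : StronglyMeasurable[m] f) (hf2 : MemLp f 2 μ) (hg2 : MemLp g 2 μ) :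
    ∫ x, f x * g x ∂μ = ∫ x, f x * (μ[g|m]) x ∂μ := by
  have h1 : Integrable (f * g) μ := stmt8_integrable_mul hf2 hg2
  have h2 := condExp_mul_of_stronglyMeasurable_left hfm h1 (hg2.integrable one_le_two)
  calc ∫ x, f x * g x ∂μ = ∫ x, (f * g) x ∂μ := rfl
    _ = ∫ x, (μ[f * g|m]) x ∂μ := (integral_condExp (μ := μ) (f := f * g) hm).symm
    _ = ∫ x, (f * μ[g|m]) x ∂μ := integral_congr_ae h2
    _ = ∫ x, f x * (μ[g|m]) x ∂μ := rfl

end Aux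

/-- **accuracy bounds the budget.** If `Z` is globally calibrated, then
`|δ_B + δ_C| ≤ √Var(E[G|σ(Y)])·√Var(Y − E[Z|σ(Y)]) ≤ √Var(E[G|σ(Y)])·√E[(Y − Z)²]`,
where `δ_B = E[Z·G] − E[E[Z|σ(Y)]·E[G|σ(Y)]]`, `δ_C = E[Y·G] − E[E[Y|σ(Z)]·E[G|σ(Z)]]`,
and `Var(U) = E[U²] − (E[U])²`. -/
theorem stmt8 {Ω : Type*} [MeasurableSpace Ω] (P : Measure Ω) [IsProbabilityMeasure P]
    (Y Z G : Ω → ℝ) (hYm : Measurable Y) (hZm : Measurable Z) (hGm : Measurable G)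
    (hY2 : MemLp Y 2 P) (hZ2 : MemLp Z 2 P) (hG01 : ∀ ω, G ω = 0 ∨ G ω = 1)
    (hcal : P[Y | MeasurableSpace.comap Z inferInstance] =ᵐ[P] Z) :
    |((∫ ω, Z ω * G ω ∂P) -
        ∫ ω, (P[Z | MeasurableSpace.comap Y inferInstance]) ω *
          (P[G | MeasurableSpace.comap Y inferInstance]) ω ∂P) +
      ((∫ ω, Y ω * G ω ∂P) -
        ∫ ω, (P[Y | MeasurableSpace.comap Z inferInstance]) ω *
          (P[G | MeasurableSpace.comap Z inferInstance]) ω ∂P)|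
      ≤ Real.sqrt ((∫ ω, (P[G | MeasurableSpace.comap Y inferInstance]) ω ^ 2 ∂P) -
            (∫ ω, (P[G | MeasurableSpace.comap Y inferInstance]) ω ∂P) ^ 2) *
          Real.sqrt ((∫ ω, (Y ω - (P[Z | MeasurableSpace.comap Y inferInstance]) ω) ^ 2 ∂P) -
            (∫ ω, (Y ω - (P[Z | MeasurableSpace.comap Y inferInstance]) ω) ∂P) ^ 2) ∧
    Real.sqrt ((∫ ω, (P[G | MeasurableSpace.comap Y inferInstance]) ω ^ 2 ∂P) -
          (∫ ω, (P[G | MeasurableSpace.comap Y inferInstance]) ω ∂P) ^ 2) *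
        Real.sqrt ((∫ ω, (Y ω - (P[Z | MeasurableSpace.comap Y inferInstance]) ω) ^ 2 ∂P) -
          (∫ ω, (Y ω - (P[Z | MeasurableSpace.comap Y inferInstance]) ω) ∂P) ^ 2)
      ≤ Real.sqrt ((∫ ω, (P[G | MeasurableSpace.comap Y inferInstance]) ω ^ 2 ∂P) -
            (∫ ω, (P[G | MeasurableSpace.comap Y inferInstance]) ω ∂P) ^ 2) *
          Real.sqrt (∫ ω, (Y ω - Z ω) ^ 2 ∂P) := by
  have hmY : MeasurableSpace.comap Y inferInstance ≤ (inferInstance : MeasurableSpace Ω) :=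
    measurable_iff_comap_le.mp hYm
  have hmZ : MeasurableSpace.comap Z inferInstance ≤ (inferInstance : MeasurableSpace Ω) :=
    measurable_iff_comap_le.mp hZm
  set mY := MeasurableSpace.comap Y inferInstance with hmYdef
  set mZ := MeasurableSpace.comap Z inferInstance with hmZdef
  have hYsm : StronglyMeasurable[mY] Y :=
    (measurable_iff_comap_le.mpr le_rfl).stronglyMeasurable
  have hZsm : StronglyMeasurable[mZ] Z :=
    (measurable_iff_comap_le.mpr le_rfl).stronglyMeasurable
  have hG2 : MemLp G 2 P := by
    refine MemLp.mono_exponent ?_ le_top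
    refine memLp_top_of_bound hGm.aestronglyMeasurable 1 (ae_of_all _ fun ω => ?_)
    rcases hG01 ω with h | h <;> simp [h]
  have hGY2 : MemLp (P[G|mY]) 2 P := stmt8_memℒp_two_condexp hmY hG2
  have hZY2 : MemLp (P[Z|mY]) 2 P := stmt8_memℒp_two_condexp hmY hZ2
  set GY := P[G|mY] with hGYdef
  set ZY := P[Z|mY] with hZYdef
  set GZ := P[G|mZ] with hGZdef
  set YZ := P[Y|mZ] with hYZdef
  have hU2 : MemLp (fun ω => Y ω - ZY ω) 2 P := hY2.sub hZY2
  have hUsm : StronglyMeasurable[mY] (fun ω => Y ω - ZY ω) :=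
    hYsm.sub stronglyMeasurable_condExp
  -- key equalities
  have e1 : ∫ ω, ZY ω * GY ω ∂P = ∫ ω, Z ω * GY ω ∂P := by
    have h := stmt8_key hmY stronglyMeasurable_condExp hGY2 hZ2
    rw [integral_congr_ae (ae_of_all P fun ω => mul_comm (ZY ω) (GY ω)), ← h,
      integral_congr_ae (ae_of_all P fun ω => mul_comm (GY ω) (Z ω))]
  have e2 : ∫ ω, Y ω * G ω ∂P = ∫ ω, Y ω * GY ω ∂P := stmt8_key hmY hYsm hY2 hG2
  have e3 : ∫ ω, Z ω * G ω ∂P = ∫ ω, Z ω * GZ ω ∂P := stmt8_key hmZ hZsm hZ2 hG2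
  have e4 : ∫ ω, YZ ω * GZ ω ∂P = ∫ ω, Z ω * GZ ω ∂P :=
    integral_congr_ae (hcal.mono fun ω h => by simp only [h])
  -- mean zero
  have hYZmean : ∫ ω, Y ω ∂P = ∫ ω, Z ω ∂P := by
    rw [← integral_condExp hmZ (f := Y)]
    exact integral_congr_ae hcal
  have hUmean : ∫ ω, (Y ω - ZY ω) ∂P = 0 := by
    rw [integral_sub (hY2.integrable one_le_two) integrable_condExp,
      integral_condExp hmY, hYZmean, sub_self]
  -- the sum is ∫ (Y - ZY) * GY
  have hUV : ∫ ω, (Y ω - ZY ω) * GY ω ∂P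
      = ∫ ω, Y ω * GY ω ∂P - ∫ ω, ZY ω * GY ω ∂P := by
    rw [← integral_sub (stmt8_integrable_mul hY2 hGY2) (stmt8_integrable_mul hZY2 hGY2)]
    exact integral_congr_ae (ae_of_all _ fun ω => by ring)
  have habs : ((∫ ω, Z ω * G ω ∂P) - ∫ ω, ZY ω * GY ω ∂P) +
      ((∫ ω, Y ω * G ω ∂P) - ∫ ω, YZ ω * GZ ω ∂P)
      = ∫ ω, (Y ω - ZY ω) * GY ω ∂P := by
    rw [hUV]; linarith [e1, e2, e3, e4]
  constructor
  · -- Cauchy-Schwarz part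
    set c := ∫ ω, GY ω ∂P with hc
    have hVc2 : MemLp (fun ω => GY ω - c) 2 P := hGY2.sub (memLp_const c)
    have h1 : ∫ ω, (Y ω - ZY ω) * GY ω ∂P = ∫ ω, (Y ω - ZY ω) * (GY ω - c) ∂P := by
      have : ∫ ω, (Y ω - ZY ω) * (GY ω - c) ∂P
          = ∫ ω, (Y ω - ZY ω) * GY ω ∂P - c * ∫ ω, (Y ω - ZY ω) ∂P := by
        rw [← integral_const_mul, ← integral_sub (stmt8_integrable_mul hU2 hGY2)
          ((hU2.integrable one_le_two).const_mul c)]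
        exact integral_congr_ae (ae_of_all _ fun ω => by ring)
      rw [this, hUmean, mul_zero, sub_zero]
    have hCS := stmt8_cs hU2 hVc2
    have hvar : ∫ ω, (GY ω - c) ^ 2 ∂P = (∫ ω, GY ω ^ 2 ∂P) - (∫ ω, GY ω ∂P) ^ 2 := by
      rw [hc]; exact stmt8_var hGY2
    rw [habs, h1]
    rw [hvar] at hCS
    refine hCS.trans (le_of_eq ?_)
    rw [hUmean, mul_comm]
    norm_num
    exact Or.inl rfl
  · -- Pythagoras part
    refine mul_le_mul_of_nonneg_left (Real.sqrt_le_sqrt ?_) (Real.sqrt_nonneg _)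
    rw [hUmean]
    norm_num
    have hW2 : MemLp (fun ω => Z ω - ZY ω) 2 P := hZ2.sub hZY2
    have hUW : ∫ ω, (Y ω - ZY ω) * (Z ω - ZY ω) ∂P = 0 := by
      rw [stmt8_key hmY hUsm hU2 hW2]
      have hWc : P[(fun ω => Z ω - ZY ω)|mY] =ᵐ[P] 0 := by
        have hz : P[ZY|mY] = ZY :=
          condExp_of_stronglyMeasurable hmY stronglyMeasurable_condExp integrable_condExp
      -- condexp of Z - ZY
        have h := condExp_sub (μ := P) (m := mY) (f := Z) (g := ZY)
          (hZ2.integrable one_le_two) integrable_condExp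
        have heq : P[(fun ω => Z ω - ZY ω)|mY] = P[Z - ZY|mY] := rfl
        rw [heq]
        filter_upwards [h] with ω hω
        rw [hω]
        simp [hz]
        exact sub_self _
      have h0 : ∫ ω, (Y ω - ZY ω) * (P[(fun ω => Z ω - ZY ω)|mY]) ω ∂P
          = ∫ _ω, (0 : ℝ) ∂P :=
        integral_congr_ae (hWc.mono fun ω h => by
          simp only [h, Pi.zero_apply, mul_zero])
      rw [h0, integral_zero]
    have hexp : ∫ ω, (Y ω - Z ω) ^ 2 ∂P
        = ∫ ω, (Y ω - ZY ω) ^ 2 ∂P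
          - 2 * ∫ ω, (Y ω - ZY ω) * (Z ω - ZY ω) ∂P
          + ∫ ω, (Z ω - ZY ω) ^ 2 ∂P := by
      have hfun : (fun ω => (Y ω - Z ω) ^ 2)
          = fun ω => (Y ω - ZY ω) ^ 2 - 2 * ((Y ω - ZY ω) * (Z ω - ZY ω))
            + (Z ω - ZY ω) ^ 2 := funext fun ω => by ring
      have hA : Integrable (fun ω => (Y ω - ZY ω) ^ 2
          - 2 * ((Y ω - ZY ω) * (Z ω - ZY ω))) P :=
        hU2.integrable_sq.sub ((stmt8_integrable_mul hU2 hW2).const_mul 2)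
      rw [hfun, integral_add hA hW2.integrable_sq,
        integral_sub hU2.integrable_sq ((stmt8_integrable_mul hU2 hW2).const_mul 2),
        integral_const_mul]
    have hWnn : 0 ≤ ∫ ω, (Z ω - ZY ω) ^ 2 ∂P :=
      integral_nonneg fun ω => sq_nonneg _
    nlinarith [hUW, hexp, hWnn]
end

section
/- Let W : Ω → ℝᵏ be a random vector. If Y and G are conditionally independent given σ(W), and W and G are conditionally independent given σ(Y), then E[G | σ(W)] = E[G | σ(Y)] almost surely; consequently Var(E[G | σ(W)]) = Var(E[G | σ(Y)]). -/
open MeasureTheory ProbabilityTheory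

namespace Stmt10Aux

lemma indicator_one_integrable {Ω : Type*} {mΩ : MeasurableSpace Ω}
    (P : Measure Ω) [IsProbabilityMeasure P] {S : Set Ω}
    (hS : MeasurableSet S) : Integrable (S.indicator fun _ => (1:ℝ)) P :=
  (integrable_const 1).indicator hS

lemma key_setIntegral {Ω : Type*} {m : MeasurableSpace Ω} {mΩ : MeasurableSpace Ω} (hm : m ≤ mΩ)
    (P : Measure Ω) [IsProbabilityMeasure P]
    {A B S : Set Ω} (hA : MeasurableSet[m] A) (hB : MeasurableSet B) (hS : MeasurableSet S)
    (hind : (P⟦B ∩ S | m⟧) =ᵐ[P] fun ω => (P⟦B | m⟧) ω * (P⟦S | m⟧) ω) :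
    ∫ x in A ∩ B, (P⟦S | m⟧) x ∂P = (P (A ∩ B ∩ S)).toReal := by
  have hBint := indicator_one_integrable P hB
  have hBSint := indicator_one_integrable P (hB.inter hS)
  have hindm : AEStronglyMeasurable (B.indicator fun _ => (1:ℝ)) P :=
    (stronglyMeasurable_const.indicator hB).aestronglyMeasurable
  have hbound : ∀ᵐ x ∂P, ‖(B.indicator fun _ => (1:ℝ)) x‖ ≤ 1 := by
    filter_upwards with x
    by_cases hx : x ∈ B <;> simp [hx]
  have hg_int : Integrable (fun x => (B.indicator fun _ => (1:ℝ)) x * (P⟦S | m⟧) x) P :=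
    integrable_condExp.bdd_mul hindm hbound
  have h1 : ∫ x in A ∩ B, (P⟦S | m⟧) x ∂P
      = ∫ x in A, (B.indicator fun _ => (1:ℝ)) x * (P⟦S | m⟧) x ∂P := by
    rw [← setIntegral_indicator hB]
    refine integral_congr_ae (Filter.Eventually.of_forall fun x => ?_)
    by_cases hx : x ∈ B <;> simp [hx]
  have h2 : ∫ x in A, (B.indicator fun _ => (1:ℝ)) x * (P⟦S | m⟧) x ∂P
      = ∫ x in A, (P[fun x => (B.indicator fun _ => (1:ℝ)) x * (P⟦S | m⟧) x | m]) x ∂P :=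
    (setIntegral_condExp hm hg_int hA).symm
  have hmul : (P[fun x => (B.indicator fun _ => (1:ℝ)) x * (P⟦S | m⟧) x | m])
      =ᵐ[P] P⟦B ∩ S | m⟧ := by
    have hfg : Integrable ((P⟦S | m⟧) * B.indicator fun _ => (1:ℝ)) P := by
      refine hg_int.congr ?_
      filter_upwards with x
      exact mul_comm _ _
    have hpull := condExp_mul_of_stronglyMeasurable_left (μ := P) (m := m)
      (stronglyMeasurable_condExp (f := S.indicator fun _ => (1:ℝ))) hfg hBint
    have heq : (fun x => (B.indicator fun _ => (1:ℝ)) x * (P⟦S | m⟧) x)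
        = (P⟦S | m⟧) * B.indicator fun _ => (1:ℝ) := by
      ext x; exact mul_comm _ _
    rw [heq]
    have hcomm : ((P⟦S | m⟧) * P⟦B | m⟧ : Ω → ℝ)
        =ᵐ[P] fun ω => (P⟦B | m⟧) ω * (P⟦S | m⟧) ω :=
      Filter.Eventually.of_forall fun x => mul_comm _ _
    exact hpull.trans (hcomm.trans hind.symm)
  have h3 : ∫ x in A, (P[fun x => (B.indicator fun _ => (1:ℝ)) x * (P⟦S | m⟧) x | m]) x ∂P
      = ∫ x in A, (P⟦B ∩ S | m⟧) x ∂P :=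
    integral_congr_ae (ae_restrict_of_ae hmul)
  have h4 : ∫ x in A, (P⟦B ∩ S | m⟧) x ∂P
      = ∫ x in A, ((B ∩ S).indicator fun _ => (1:ℝ)) x ∂P :=
    setIntegral_condExp hm hBSint hA
  have h5 : ∫ x in A, ((B ∩ S).indicator fun _ => (1:ℝ)) x ∂P = (P (A ∩ B ∩ S)).toReal := by
    rw [setIntegral_indicator (hB.inter hS), setIntegral_const, Set.inter_assoc, smul_eq_mul,
      mul_one, measureReal_def]
  rw [h1, h2, h3, h4, h5]

lemma condexp_join_eq {Ω : Type*} {m₁ m₂ : MeasurableSpace Ω} {mΩ : MeasurableSpace Ω}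
    [StandardBorelSpace Ω]
    (hm₁ : m₁ ≤ mΩ) (hm₂ : m₂ ≤ mΩ)
    (P : Measure Ω) [IsProbabilityMeasure P] {S : Set Ω} (hS : MeasurableSet S)
    (h₁ : ∀ B, MeasurableSet[m₂] B →
      (P⟦B ∩ S | m₁⟧) =ᵐ[P] fun ω => (P⟦B | m₁⟧) ω * (P⟦S | m₁⟧) ω)
    (h₂ : ∀ A, MeasurableSet[m₁] A →
      (P⟦A ∩ S | m₂⟧) =ᵐ[P] fun ω => (P⟦A | m₂⟧) ω * (P⟦S | m₂⟧) ω) :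
    (P⟦S | m₁⟧) =ᵐ[P] (P⟦S | m₂⟧) := by
  have hm : m₁ ⊔ m₂ ≤ mΩ := sup_le hm₁ hm₂
  have hgen : m₁ ⊔ m₂ = MeasurableSpace.generateFrom
      {u | ∃ A B, MeasurableSet[m₁] A ∧ MeasurableSet[m₂] B ∧ u = A ∩ B} := by
    refine le_antisymm (sup_le ?_ ?_) (MeasurableSpace.generateFrom_le ?_)
    · intro s hs
      exact MeasurableSpace.measurableSet_generateFrom
        ⟨s, Set.univ, hs, MeasurableSet.univ, (Set.inter_univ s).symm⟩
    · intro s hs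
      exact MeasurableSpace.measurableSet_generateFrom
        ⟨Set.univ, s, MeasurableSet.univ, hs, (Set.univ_inter s).symm⟩
    · rintro t ⟨A, B, hA, hB, rfl⟩
      exact MeasurableSet.inter ((le_sup_left : m₁ ≤ m₁ ⊔ m₂) A hA)
        ((le_sup_right : m₂ ≤ m₁ ⊔ m₂) B hB)
  have hpi : IsPiSystem
      {u | ∃ A B, MeasurableSet[m₁] A ∧ MeasurableSet[m₂] B ∧ u = A ∩ B} := by
    rintro u ⟨A₁, B₁, hA₁, hB₁, rfl⟩ v ⟨A₂, B₂, hA₂, hB₂, rfl⟩ _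
    exact ⟨A₁ ∩ A₂, B₁ ∩ B₂, hA₁.inter hA₂, hB₁.inter hB₂, by
      rw [Set.inter_inter_inter_comm]⟩
  have hC : ∀ t, MeasurableSet[m₁ ⊔ m₂] t →
      ∫ x in t, (P⟦S | m₁⟧) x ∂P = ∫ x in t, (P⟦S | m₂⟧) x ∂P := by
    refine @MeasurableSpace.induction_on_inter Ω (m₁ ⊔ m₂)
      (fun t _ => ∫ x in t, (P⟦S | m₁⟧) x ∂P = ∫ x in t, (P⟦S | m₂⟧) x ∂P)
      _ hgen hpi ?_ ?_ ?_ ?_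
    · simp
    · rintro t ⟨A, B, hA, hB, rfl⟩
      rw [key_setIntegral hm₁ P hA (hm₂ B hB) hS (h₁ B hB)]
      have hcomm : ∫ x in A ∩ B, (P⟦S | m₂⟧) x ∂P = ∫ x in B ∩ A, (P⟦S | m₂⟧) x ∂P := by
        rw [Set.inter_comm]
      rw [hcomm, key_setIntegral hm₂ P hB (hm₁ A hA) hS (h₂ A hA), Set.inter_comm B A]
    · intro t ht hCt
      have e₁ := integral_add_compl (μ := P) (hm t ht)
        (integrable_condExp (f := S.indicator fun _ => (1:ℝ)) (m := m₁) (μ := P))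
      have e₂ := integral_add_compl (μ := P) (hm t ht)
        (integrable_condExp (f := S.indicator fun _ => (1:ℝ)) (m := m₂) (μ := P))
      have etot : ∫ x, (P⟦S | m₁⟧) x ∂P = ∫ x, (P⟦S | m₂⟧) x ∂P := by
        rw [integral_condExp hm₁, integral_condExp hm₂]
      linarith
    · intro u hdisj hmeas hCu
      rw [integral_iUnion (μ := P) (fun i => hm _ (hmeas i)) hdisj
          integrable_condExp.integrableOn,
        integral_iUnion (μ := P) (fun i => hm _ (hmeas i)) hdisj
          integrable_condExp.integrableOn]
      exact tsum_congr hCu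
  exact ae_eq_of_forall_setIntegral_eq_of_sigmaFinite' hm
    (fun s _ _ => integrable_condExp.integrableOn)
    (fun s _ _ => integrable_condExp.integrableOn)
    (fun s hs _ => hC s hs)
    ⟨P⟦S | m₁⟧, stronglyMeasurable_condExp.mono le_sup_left, ae_eq_refl _⟩
    ⟨P⟦S | m₂⟧, stronglyMeasurable_condExp.mono le_sup_right, ae_eq_refl _⟩

end Stmt10Aux

/-- If `Y ⟂ G | σ(W)` and `W ⟂ G | σ(Y)`, then
`E[G|σ(W)] = E[G|σ(Y)]` almost surely, and consequently
`Var(E[G|σ(W)]) = Var(E[G|σ(Y)])` with `Var(U) = E[U²] − (E[U])²`. -/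
theorem stmt10 {Ω : Type*} [mΩ : MeasurableSpace Ω] [StandardBorelSpace Ω] [Nonempty Ω]
    (P : Measure Ω) [IsProbabilityMeasure P]
    (Y G : Ω → ℝ) (hYm : Measurable Y) (hGm : Measurable G)
    (hY2 : MemLp Y 2 P) (hG01 : ∀ ω, G ω = 0 ∨ G ω = 1)
    {k : ℕ} (W : Ω → (Fin k → ℝ)) (hWm : Measurable W)
    (hYG : CondIndepFun (MeasurableSpace.comap W inferInstance) hWm.comap_le Y G P)
    (hWG : CondIndepFun (MeasurableSpace.comap Y inferInstance) hYm.comap_le W G P) :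
    (P[G | MeasurableSpace.comap W inferInstance]
        =ᵐ[P] P[G | MeasurableSpace.comap Y inferInstance]) ∧
    ((∫ ω, (P[G | MeasurableSpace.comap W inferInstance]) ω ^ 2 ∂P) -
        (∫ ω, (P[G | MeasurableSpace.comap W inferInstance]) ω ∂P) ^ 2
      = (∫ ω, (P[G | MeasurableSpace.comap Y inferInstance]) ω ^ 2 ∂P) -
        (∫ ω, (P[G | MeasurableSpace.comap Y inferInstance]) ω ∂P) ^ 2) := by
  have hS : MeasurableSet (G ⁻¹' {1}) := hGm (measurableSet_singleton 1)
  have hGeq : G = (G ⁻¹' {1}).indicator fun _ => (1:ℝ) := by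
    ext ω
    rcases hG01 ω with h | h
    · have hω : ω ∉ G ⁻¹' {1} := by simp [h]
      simp [hω, h]
    · have hω : ω ∈ G ⁻¹' {1} := by simp [h]
      simp [hω, h]
  rw [condIndepFun_iff _ _ _ _ hYm hGm] at hYG
  rw [condIndepFun_iff _ _ _ _ hWm hGm] at hWG
  have hSmem : MeasurableSet[MeasurableSpace.comap G inferInstance] (G ⁻¹' {1}) :=
    ⟨{1}, measurableSet_singleton 1, rfl⟩
  have hmain : (P⟦G ⁻¹' {1} | MeasurableSpace.comap W inferInstance⟧)
      =ᵐ[P] (P⟦G ⁻¹' {1} | MeasurableSpace.comap Y inferInstance⟧) := by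
    refine Stmt10Aux.condexp_join_eq hWm.comap_le hYm.comap_le P hS
      (fun B hB => ?_) (fun A hA => ?_)
    · exact hYG B (G ⁻¹' {1}) hB hSmem
    · exact hWG A (G ⁻¹' {1}) hA hSmem
  have hmain' : P[G | MeasurableSpace.comap W inferInstance]
      =ᵐ[P] P[G | MeasurableSpace.comap Y inferInstance] := by
    rw [hGeq]
    exact hmain
  refine ⟨hmain', ?_⟩
  have e1 : ∫ ω, (P[G | MeasurableSpace.comap W inferInstance]) ω ^ 2 ∂P
      = ∫ ω, (P[G | MeasurableSpace.comap Y inferInstance]) ω ^ 2 ∂P :=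
    integral_congr_ae (hmain'.mono fun ω hω => by dsimp only; rw [hω])
  have e2 : ∫ ω, (P[G | MeasurableSpace.comap W inferInstance]) ω ∂P
      = ∫ ω, (P[G | MeasurableSpace.comap Y inferInstance]) ω ∂P :=
    integral_congr_ae hmain'
  rw [e1, e2]
end

section
/- Let Y, Z : Ω → ℝ be square-integrable random variables with E[Y | σ(Z)] = Z almost surely and E[Z | σ(Y)] = Y almost surely. Then Y = Z almost surely. -/
open MeasureTheory ProbabilityTheory
open scoped ENNReal

/-- If `Y, Z` are square-integrable with `E[Y|σ(Z)] = Z` a.s. and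
`E[Z|σ(Y)] = Y` a.s., then `Y = Z` almost surely. -/
theorem stmt13 {Ω : Type*} [MeasurableSpace Ω] (P : Measure Ω) [IsProbabilityMeasure P]
    (Y Z : Ω → ℝ) (hYm : Measurable Y) (hZm : Measurable Z)
    (hY2 : MemLp Y 2 P) (hZ2 : MemLp Z 2 P)
    (hYZ : P[Y | MeasurableSpace.comap Z inferInstance] =ᵐ[P] Z)
    (hZY : P[Z | MeasurableSpace.comap Y inferInstance] =ᵐ[P] Y) :
    Y =ᵐ[P] Z := by
  have hYi : Integrable Y P := hY2.integrable (by norm_num)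
  have hZi : Integrable Z P := hZ2.integrable (by norm_num)
  have hmul : ∀ (f g : Ω → ℝ), MemLp f 2 P → MemLp g 2 P → Integrable (f * g) P := by
    intro f g hf hg
    have h := hg.smul (r := 1) hf (hpqr := ⟨by rw [inv_one, ENNReal.inv_two_add_inv_two]⟩)
    rw [memLp_one_iff_integrable] at h
    exact h
  have hZYi : Integrable (Z * Y) P := hmul Z Y hZ2 hY2
  have hYZi : Integrable (Y * Z) P := by rwa [mul_comm] at hZYi
  -- ∫ Z*Y = ∫ Z*Z
  have h1 : ∫ ω, (Z * Y) ω ∂P = ∫ ω, (Z * Z) ω ∂P := by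
    have hle : MeasurableSpace.comap Z inferInstance ≤ ‹MeasurableSpace Ω› :=
      hZm.comap_le
    have hpull : P[Z * Y | MeasurableSpace.comap Z inferInstance]
        =ᵐ[P] Z * P[Y | MeasurableSpace.comap Z inferInstance] :=
      condExp_mul_of_stronglyMeasurable_left
        (Measurable.stronglyMeasurable (measurable_iff_comap_le.mpr le_rfl)) hZYi hYi
    have : ∫ ω, (Z * Y) ω ∂P = ∫ ω, (Z * P[Y | MeasurableSpace.comap Z inferInstance]) ω ∂P := by
      rw [← integral_condExp (f := Z * Y) hle]
      exact integral_congr_ae hpull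
    rw [this]
    exact integral_congr_ae (Filter.EventuallyEq.mul Filter.EventuallyEq.rfl hYZ)
  have h2 : ∫ ω, (Y * Z) ω ∂P = ∫ ω, (Y * Y) ω ∂P := by
    have hle : MeasurableSpace.comap Y inferInstance ≤ ‹MeasurableSpace Ω› :=
      hYm.comap_le
    have hpull : P[Y * Z | MeasurableSpace.comap Y inferInstance]
        =ᵐ[P] Y * P[Z | MeasurableSpace.comap Y inferInstance] :=
      condExp_mul_of_stronglyMeasurable_left
        (Measurable.stronglyMeasurable (measurable_iff_comap_le.mpr le_rfl)) hYZi hZi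
    have : ∫ ω, (Y * Z) ω ∂P = ∫ ω, (Y * P[Z | MeasurableSpace.comap Y inferInstance]) ω ∂P := by
      rw [← integral_condExp (f := Y * Z) hle]
      exact integral_congr_ae hpull
    rw [this]
    exact integral_congr_ae (Filter.EventuallyEq.mul Filter.EventuallyEq.rfl hZY)
  have hYYi : Integrable (Y * Y) P := hmul Y Y hY2 hY2
  have hZZi : Integrable (Z * Z) P := hmul Z Z hZ2 hZ2
  have hsq : Integrable (fun ω => (Y ω - Z ω)^2) P := by
    have : (fun ω => (Y ω - Z ω)^2)
        = fun ω => (Y * Y) ω - (Y * Z) ω - (Z * Y) ω + (Z * Z) ω := by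
      funext ω; simp [Pi.mul_apply]; ring
    rw [this]
    exact ((hYYi.sub hYZi).sub hZYi).add hZZi
  have hint : ∫ ω, (Y ω - Z ω)^2 ∂P = 0 := by
    have e : ∫ ω, (Y ω - Z ω)^2 ∂P
        = ∫ ω, ((Y * Y) ω - (Y * Z) ω - (Z * Y) ω + (Z * Z) ω) ∂P := by
      apply integral_congr_ae
      filter_upwards with ω
      simp only [Pi.mul_apply]; ring
    have i1 : Integrable (fun ω => (Y * Y) ω - (Y * Z) ω) P := hYYi.sub hYZi
    have i2 : Integrable (fun ω => (Y * Y) ω - (Y * Z) ω - (Z * Y) ω) P := i1.sub hZYi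
    rw [e, integral_add i2 hZZi, integral_sub i1 hZYi, integral_sub hYYi hYZi, ← h2, h1]
    ring
  have h0 : (fun ω => (Y ω - Z ω)^2) =ᵐ[P] 0 := by
    rw [← integral_eq_zero_iff_of_nonneg (fun ω => sq_nonneg _) hsq]
    exact hint
  filter_upwards [h0] with ω hω
  have : (Y ω - Z ω)^2 = 0 := hω
  nlinarith [this]
end

section
/- Suppose Y is {0,1}-valued with 0 < P(Y = 1) < 1, and Z is globally calibrated: E[Y | σ(Z)] = Z almost surely. Then E[Z | Y = 1] − E[Z | Y = 0] = Var(Z) / Var(Y), where Var(U) := E[U²] − (E[U])² and for an event A with P(A) > 0, E[X | A] := E[X·1_A]/P(A). -/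
open MeasureTheory ProbabilityTheory

/-- If `Y` is {0,1}-valued with `0 < P(Y=1) < 1` and `Z` is globally
calibrated, then `E[Z|Y=1] − E[Z|Y=0] = Var(Z)/Var(Y)`, with `Var(U) = E[U²] − (E[U])²`. -/
theorem stmt15 {Ω : Type*} [MeasurableSpace Ω] (P : Measure Ω) [IsProbabilityMeasure P]
    (Y Z : Ω → ℝ) (hYm : Measurable Y) (hZm : Measurable Z)
    (hY2 : MemLp Y 2 P) (hZ2 : MemLp Z 2 P)
    (hY01 : ∀ ω, Y ω = 0 ∨ Y ω = 1)
    (hpos : 0 < P {ω | Y ω = 1}) (hlt : P {ω | Y ω = 1} < 1)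
    (hcal : P[Y | MeasurableSpace.comap Z inferInstance] =ᵐ[P] Z) :
    condExpEvent P Z {ω | Y ω = 1} - condExpEvent P Z {ω | Y ω = 0}
      = ((∫ ω, Z ω ^ 2 ∂P) - (∫ ω, Z ω ∂P) ^ 2) /
        ((∫ ω, Y ω ^ 2 ∂P) - (∫ ω, Y ω ∂P) ^ 2) := by
  have hm : MeasurableSpace.comap Z inferInstance ≤ ‹MeasurableSpace Ω› := hZm.comap_le
  have hZm' : Measurable[MeasurableSpace.comap Z inferInstance] Z :=
    Measurable.of_comap_le le_rfl
  have hYint : Integrable Y P := hY2.integrable one_le_two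
  have hZint : Integrable Z P := hZ2.integrable one_le_two
  set A : Set Ω := {ω | Y ω = 1} with hA_def
  have hA : MeasurableSet A := hYm (measurableSet_singleton 1)
  set p : ℝ := (P A).toReal with hp_def
  have hPA1 : P A ≤ 1 := prob_le_one
  have hp_pos : 0 < p := ENNReal.toReal_pos hpos.ne' (lt_of_le_of_lt hPA1 ENNReal.one_lt_top).ne
  have hp_lt : p < 1 := by
    rw [hp_def, ← ENNReal.toReal_one]
    exact ENNReal.toReal_strict_mono ENNReal.one_ne_top hlt
  -- Y equals the indicator of A
  have hYind : ∀ ω, Y ω = A.indicator (fun _ => (1 : ℝ)) ω := by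
    intro ω
    rcases hY01 ω with h | h
    · have : ω ∉ A := by simp [hA_def, h]
      simp [Set.indicator_of_notMem this, h]
    · have : ω ∈ A := h
      simp [Set.indicator_of_mem this, h]
  have hEY : ∫ ω, Y ω ∂P = p := by
    rw [hp_def, ← measureReal_def, ← integral_indicator_one hA]
    exact integral_congr_ae (Filter.Eventually.of_forall hYind)
  have hEY2 : ∫ ω, Y ω ^ 2 ∂P = p := by
    rw [← hEY]
    refine integral_congr_ae (Filter.Eventually.of_forall fun ω => ?_)
    rcases hY01 ω with h | h <;> simp [h]
  -- E[Z] = E[Y]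
  have hEZ : ∫ ω, Z ω ∂P = p := by
    rw [← hEY, ← integral_condExp hm (μ := P) (f := Y)]
    exact integral_congr_ae hcal.symm
  -- integrability of the products
  have hZY_int : Integrable (fun ω => Z ω * Y ω) P := by
    have := (memLp_one_iff_integrable.mp ?_ : Integrable (Z • Y) P)
    · exact this
    · exact MemLp.smul (p := 2) (q := 2) (r := 1) hY2 hZ2 (hpqr := ⟨by simp [ENNReal.inv_two_add_inv_two]⟩)
  have hZZ_int : Integrable (fun ω => Z ω * Z ω) P := by
    have := (memLp_one_iff_integrable.mp ?_ : Integrable (Z • Z) P)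
    · exact this
    · exact MemLp.smul (p := 2) (q := 2) (r := 1) hZ2 hZ2 (hpqr := ⟨by simp [ENNReal.inv_two_add_inv_two]⟩)
  -- E[Z*Y] = E[Z^2]
  have hpull : P[(Z * Y) | MeasurableSpace.comap Z inferInstance]
      =ᵐ[P] Z * P[Y | MeasurableSpace.comap Z inferInstance] :=
    condExp_mul_of_stronglyMeasurable_left hZm'.stronglyMeasurable hZY_int
      hYint
  have hEZY : ∫ ω, Z ω * Y ω ∂P = ∫ ω, Z ω ^ 2 ∂P := by
    have h1 : ∫ ω, Z ω * Y ω ∂P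
        = ∫ ω, (P[(Z * Y) | MeasurableSpace.comap Z inferInstance]) ω ∂P :=
      (integral_condExp hm (μ := P) (f := Z * Y)).symm
    rw [h1, integral_congr_ae hpull]
    refine integral_congr_ae ?_
    filter_upwards [hcal] with ω hω
    simp [hω]
    ring
  -- set-integral computations
  have hintA : ∫ ω in A, Z ω ∂P = ∫ ω, Z ω * Y ω ∂P := by
    rw [← integral_indicator hA]
    refine integral_congr_ae (Filter.Eventually.of_forall fun ω => ?_)
    rcases hY01 ω with h | h
    · have : ω ∉ A := by simp [hA_def, h]
      simp [Set.indicator_of_notMem this, h]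
    · have : ω ∈ A := h
      simp [Set.indicator_of_mem this, h]
  have hY0c : {ω | Y ω = 0} = Aᶜ := by
    ext ω
    rcases hY01 ω with h | h <;> simp [hA_def, h]
  have hintAc : ∫ ω in Aᶜ, Z ω ∂P = (∫ ω, Z ω ∂P) - ∫ ω in A, Z ω ∂P := by
    have := integral_add_compl hA hZint
    linarith
  have hPAc : (P Aᶜ).toReal = 1 - p := by
    rw [prob_compl_eq_one_sub hA, ENNReal.toReal_sub_of_le hPA1 ENNReal.one_ne_top,
      ENNReal.toReal_one]
  -- final arithmetic
  rw [condExpEvent, condExpEvent, hY0c, hintAc, hintA, hPAc, hEZY, hEZ, hEY, hEY2]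
  set a : ℝ := ∫ ω, Z ω ^ 2 ∂P
  have h1 : p ≠ 0 := ne_of_gt hp_pos
  have h2 : (1 : ℝ) - p ≠ 0 := by linarith
  have h3 : p - p ^ 2 ≠ 0 := by
    have : p - p ^ 2 = p * (1 - p) := by ring
    rw [this]; exact mul_ne_zero h1 h2
  rw [← hp_def]
  field_simp
  ring
end

section
/- Let Y, Ŷ, G be {0,1}-valued random variables with P(Ŷ = ŷ, G = g) > 0 and P(Y = y, G = g) > 0 for all y, ŷ, g ∈ {0,1}. Define PPV_g := P(Y = 1 | Ŷ = 1, G = g), FOR_g := P(Y = 1 | Ŷ = 0, G = g), TPR_g := P(Ŷ = 1 | Y = 1, G = g), FPR_g := P(Ŷ = 1 | Y = 0, G = g), PPV := P(Y = 1 | Ŷ = 1), FOR := P(Y = 1 | Ŷ = 0); Δ PPV := PPV₁ − PPV₀ and similarly for Δ FOR, Δ TPR, Δ FPR; ω_Y(y) := Var(G | Y = y)·P(Y = y) and ω_Ŷ(ŷ) := Var(G | Ŷ = ŷ)·P(Ŷ = ŷ); and the derived risk score Z_Ŷ := PPV·1{Ŷ = 1} + FOR·1{Ŷ = 0} with MSE(Z_Ŷ)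 := E[(Y − Z_Ŷ)²]. Then MSE(Z_Ŷ) · (P(G = 1 | Y = 1) − P(G = 1 | Y = 0)) = ω_Ŷ(1)·Δ PPV + ω_Ŷ(0)·Δ FOR + (PPV − FOR)·(ω_Y(1)·Δ TPR + ω_Y(0)·Δ FPR). -/
open MeasureTheory ProbabilityTheory

lemma measSplit {Ω : Type*} [MeasurableSpace Ω] (P : Measure Ω) [IsFiniteMeasure P]
    (X : Ω → ℝ) (hX : Measurable X) (h01 : ∀ ω, X ω = 0 ∨ X ω = 1)
    {A : Set Ω} (hA : MeasurableSet A) :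
    (P A).toReal = (P (A ∩ {ω | X ω = 1})).toReal + (P (A ∩ {ω | X ω = 0})).toReal := by
  have hm0 : MeasurableSet {ω | X ω = 0} := hX (measurableSet_singleton 0)
  rw [← ENNReal.toReal_add (measure_ne_top _ _) (measure_ne_top _ _)]
  congr 1
  rw [← measure_union ?_ (hA.inter hm0)]
  · rw [← Set.inter_union_distrib_left]
    have hu : {ω | X ω = 1} ∪ {ω | X ω = 0} = Set.univ := by
      ext ω; rcases h01 ω with h | h <;> simp [h]
    rw [hu, Set.inter_univ]
  · rw [Set.disjoint_left]
    rintro ω ⟨-, h1⟩ ⟨-, h0⟩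
    simp only [Set.mem_setOf_eq] at h1 h0
    rw [h0] at h1; exact zero_ne_one h1

lemma condExpEq {Ω : Type*} [MeasurableSpace Ω] (P : Measure Ω) [IsFiniteMeasure P]
    (G : Ω → ℝ) (hGm : Measurable G) (hG01 : ∀ ω, G ω = 0 ∨ G ω = 1)
    (A : Set Ω) :
    (∫ ω in A, G ω ∂P) = (P ({ω | G ω = 1} ∩ A)).toReal := by
  have hm1 : MeasurableSet {ω' | G ω' = 1} := hGm (measurableSet_singleton 1)
  have h1 : ∀ ω, G ω = Set.indicator {ω' | G ω' = 1} (fun _ => (1:ℝ)) ω := by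
    intro ω; rcases hG01 ω with h | h <;>
      simp [Set.indicator_apply, Set.mem_setOf_eq, h]
  calc (∫ ω in A, G ω ∂P) = ∫ ω in A, Set.indicator {ω' | G ω' = 1} (fun _ => (1:ℝ)) ω ∂P :=
        integral_congr_ae (ae_of_all _ h1)
    _ = ∫ ω in A ∩ {ω' | G ω' = 1}, (1:ℝ) ∂P := setIntegral_indicator hm1
    _ = (P ({ω | G ω = 1} ∩ A)).toReal := by
        rw [setIntegral_const, Set.inter_comm]; simp; rfl


lemma mseAlg (N1 M1 N0 M0 s1 s0 : ℝ) (h1 : s1 = N1 + M1) (h0 : s0 = N0 + M0)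
    (hs1 : s1 ≠ 0) (hs0 : s0 ≠ 0) :
    (1 - N1/s1)^2 * N1 + (N1/s1)^2 * M1 + (1 - N0/s0)^2 * N0 + (N0/s0)^2 * M0
      = N1*M1/s1 + N0*M0/s0 := by
  subst h1 h0
  field_simp
  ring

lemma finAlg (N1 M1 N0 M0 e g A1 A2 A3 A4 s1 s0 t1 t0 : ℝ)
    (hs1 : s1 ≠ 0) (hs0 : s0 ≠ 0) (ht1 : t1 ≠ 0) (ht0 : t0 ≠ 0)
    (key : (N1*M1*s0 + N0*M0*s1) * (e*t0 - g*t1)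
      = (A1*s0 + A2*s1)*(t1*t0) + (N1*s0 - N0*s1)*(A3*t0 + A4*t1)) :
    (N1*M1/s1 + N0*M0/s0) * (e/t1 - g/t0)
      = A1/s1 + A2/s0 + (N1/s1 - N0/s0)*(A3/t1 + A4/t0) := by
  have l1 : N1*M1/s1 + N0*M0/s0 = (N1*M1*s0 + N0*M0*s1)/(s1*s0) := by
    field_simp
    try ring
  have l2 : e/t1 - g/t0 = (e*t0 - g*t1)/(t1*t0) := by
    field_simp
    try ring
  have l3 : A1/s1 + A2/s0 = (A1*s0 + A2*s1)/(s1*s0) := by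
    field_simp
    try ring
  have l4 : N1/s1 - N0/s0 = (N1*s0 - N0*s1)/(s1*s0) := by
    field_simp
    try ring
  have l5 : A3/t1 + A4/t0 = (A3*t0 + A4*t1)/(t1*t0) := by
    field_simp
    try ring
  rw [l1, l2, l3, l4, l5, div_mul_div_comm, key, div_mul_div_comm, add_div,
      mul_div_mul_right _ _ (mul_ne_zero ht1 ht0)]


set_option maxHeartbeats 4000000 in
/-- **accounting identity for classifiers.** For binary `Y`, `Ŷ`, `G` with all
relevant events of positive probability, with `Z_Ŷ = PPV·1{Ŷ=1} + FOR·1{Ŷ=0}`: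
`MSE(Z_Ŷ)·(P(G=1|Y=1) − P(G=1|Y=0)) = ω_Ŷ(1)·ΔPPV + ω_Ŷ(0)·ΔFOR
+ (PPV − FOR)·(ω_Y(1)·ΔTPR + ω_Y(0)·ΔFPR)`. -/
theorem stmt16 {Ω : Type*} [MeasurableSpace Ω] (P : Measure Ω) [IsProbabilityMeasure P]
    (Y Yhat G : Ω → ℝ) (hYm : Measurable Y) (hYhm : Measurable Yhat) (hGm : Measurable G)
    (hY01 : ∀ ω, Y ω = 0 ∨ Y ω = 1) (hYh01 : ∀ ω, Yhat ω = 0 ∨ Yhat ω = 1)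
    (hG01 : ∀ ω, G ω = 0 ∨ G ω = 1)
    (hposYh : ∀ yh ∈ ({0, 1} : Set ℝ), ∀ g ∈ ({0, 1} : Set ℝ),
      0 < P ({ω | Yhat ω = yh} ∩ {ω | G ω = g}))
    (hposY : ∀ y ∈ ({0, 1} : Set ℝ), ∀ g ∈ ({0, 1} : Set ℝ),
      0 < P ({ω | Y ω = y} ∩ {ω | G ω = g}))
    (PPV₁ PPV₀ FOR₁ FOR₀ TPR₁ TPR₀ FPR₁ FPR₀ PPV FOR : ℝ)
    (hPPV₁ : PPV₁ = condProbEvent P {ω | Y ω = 1} ({ω | Yhat ω = 1} ∩ {ω | G ω = 1}))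
    (hPPV₀ : PPV₀ = condProbEvent P {ω | Y ω = 1} ({ω | Yhat ω = 1} ∩ {ω | G ω = 0}))
    (hFOR₁ : FOR₁ = condProbEvent P {ω | Y ω = 1} ({ω | Yhat ω = 0} ∩ {ω | G ω = 1}))
    (hFOR₀ : FOR₀ = condProbEvent P {ω | Y ω = 1} ({ω | Yhat ω = 0} ∩ {ω | G ω = 0}))
    (hTPR₁ : TPR₁ = condProbEvent P {ω | Yhat ω = 1} ({ω | Y ω = 1} ∩ {ω | G ω = 1}))
    (hTPR₀ : TPR₀ = condProbEvent P {ω | Yhat ω = 1} ({ω | Y ω = 1} ∩ {ω | G ω = 0}))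
    (hFPR₁ : FPR₁ = condProbEvent P {ω | Yhat ω = 1} ({ω | Y ω = 0} ∩ {ω | G ω = 1}))
    (hFPR₀ : FPR₀ = condProbEvent P {ω | Yhat ω = 1} ({ω | Y ω = 0} ∩ {ω | G ω = 0}))
    (hPPV : PPV = condProbEvent P {ω | Y ω = 1} {ω | Yhat ω = 1})
    (hFOR : FOR = condProbEvent P {ω | Y ω = 1} {ω | Yhat ω = 0})
    (Z : Ω → ℝ)
    (hZ : ∀ ω, Z ω = PPV * (if Yhat ω = 1 then 1 else 0) +
      FOR * (if Yhat ω = 0 then 1 else 0)) :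
    (∫ ω, (Y ω - Z ω) ^ 2 ∂P) *
        (condProbEvent P {ω | G ω = 1} {ω | Y ω = 1} -
          condProbEvent P {ω | G ω = 1} {ω | Y ω = 0})
      = condVarEvent P G {ω | Yhat ω = 1} * (P {ω | Yhat ω = 1}).toReal * (PPV₁ - PPV₀) +
        condVarEvent P G {ω | Yhat ω = 0} * (P {ω | Yhat ω = 0}).toReal * (FOR₁ - FOR₀) +
        (PPV - FOR) *
          (condVarEvent P G {ω | Y ω = 1} * (P {ω | Y ω = 1}).toReal * (TPR₁ - TPR₀) +
            condVarEvent P G {ω | Y ω = 0} * (P {ω | Y ω = 0}).toReal * (FPR₁ - FPR₀)) := by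
  have hS1 : MeasurableSet {ω | Y ω = 1} := hYm (measurableSet_singleton 1)
  have hS0 : MeasurableSet {ω | Y ω = 0} := hYm (measurableSet_singleton 0)
  have hH1 : MeasurableSet {ω | Yhat ω = 1} := hYhm (measurableSet_singleton 1)
  have hH0 : MeasurableSet {ω | Yhat ω = 0} := hYhm (measurableSet_singleton 0)
  have hG1 : MeasurableSet {ω | G ω = 1} := hGm (measurableSet_singleton 1)
  have hG0 : MeasurableSet {ω | G ω = 0} := hGm (measurableSet_singleton 0)
  have r1 : ∀ S T U : Set Ω, (S ∩ T) ∩ U = (U ∩ S) ∩ T := by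
    intro S T U; ext ω; simp only [Set.mem_inter_iff]; tauto
  have r2 : ∀ S T U : Set Ω, (S ∩ T) ∩ U = (S ∩ U) ∩ T := by
    intro S T U; ext ω; simp only [Set.mem_inter_iff]; tauto
  have r4 : ∀ S T U : Set Ω, S ∩ (T ∩ U) = (T ∩ S) ∩ U := by
    intro S T U; ext ω; simp only [Set.mem_inter_iff]; tauto
  set p111 := (P (({ω | Y ω = 1} ∩ {ω | Yhat ω = 1}) ∩ {ω | G ω = 1})).toReal with hp111
  set p110 := (P (({ω | Y ω = 1} ∩ {ω | Yhat ω = 1}) ∩ {ω | G ω = 0})).toReal with hp110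
  set p101 := (P (({ω | Y ω = 1} ∩ {ω | Yhat ω = 0}) ∩ {ω | G ω = 1})).toReal with hp101
  set p100 := (P (({ω | Y ω = 1} ∩ {ω | Yhat ω = 0}) ∩ {ω | G ω = 0})).toReal with hp100
  set p011 := (P (({ω | Y ω = 0} ∩ {ω | Yhat ω = 1}) ∩ {ω | G ω = 1})).toReal with hp011
  set p010 := (P (({ω | Y ω = 0} ∩ {ω | Yhat ω = 1}) ∩ {ω | G ω = 0})).toReal with hp010
  set p001 := (P (({ω | Y ω = 0} ∩ {ω | Yhat ω = 0}) ∩ {ω | G ω = 1})).toReal with hp001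
  set p000 := (P (({ω | Y ω = 0} ∩ {ω | Yhat ω = 0}) ∩ {ω | G ω = 0})).toReal with hp000
  -- group 1 : P(Yhat ∩ G) split over Y
  have hA : (P ({ω | Yhat ω = 1} ∩ {ω | G ω = 1})).toReal = p111 + p011 := by
    rw [measSplit P Y hYm hY01 (hH1.inter hG1),
        r1 {ω | Yhat ω = 1} {ω | G ω = 1} {ω | Y ω = 1},
        r1 {ω | Yhat ω = 1} {ω | G ω = 1} {ω | Y ω = 0}]
  have hB : (P ({ω | Yhat ω = 1} ∩ {ω | G ω = 0})).toReal = p110 + p010 := by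
    rw [measSplit P Y hYm hY01 (hH1.inter hG0),
        r1 {ω | Yhat ω = 1} {ω | G ω = 0} {ω | Y ω = 1},
        r1 {ω | Yhat ω = 1} {ω | G ω = 0} {ω | Y ω = 0}]
  have hC : (P ({ω | Yhat ω = 0} ∩ {ω | G ω = 1})).toReal = p101 + p001 := by
    rw [measSplit P Y hYm hY01 (hH0.inter hG1),
        r1 {ω | Yhat ω = 0} {ω | G ω = 1} {ω | Y ω = 1},
        r1 {ω | Yhat ω = 0} {ω | G ω = 1} {ω | Y ω = 0}]
  have hD : (P ({ω | Yhat ω = 0} ∩ {ω | G ω = 0})).toReal = p100 + p000 := by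
    rw [measSplit P Y hYm hY01 (hH0.inter hG0),
        r1 {ω | Yhat ω = 0} {ω | G ω = 0} {ω | Y ω = 1},
        r1 {ω | Yhat ω = 0} {ω | G ω = 0} {ω | Y ω = 0}]
  -- group 2 : P(Y ∩ G) split over Yhat
  have hE : (P ({ω | Y ω = 1} ∩ {ω | G ω = 1})).toReal = p111 + p101 := by
    rw [measSplit P Yhat hYhm hYh01 (hS1.inter hG1),
        r2 {ω | Y ω = 1} {ω | G ω = 1} {ω | Yhat ω = 1},
        r2 {ω | Y ω = 1} {ω | G ω = 1} {ω | Yhat ω = 0}]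
  have hF : (P ({ω | Y ω = 1} ∩ {ω | G ω = 0})).toReal = p110 + p100 := by
    rw [measSplit P Yhat hYhm hYh01 (hS1.inter hG0),
        r2 {ω | Y ω = 1} {ω | G ω = 0} {ω | Yhat ω = 1},
        r2 {ω | Y ω = 1} {ω | G ω = 0} {ω | Yhat ω = 0}]
  have hG2 : (P ({ω | Y ω = 0} ∩ {ω | G ω = 1})).toReal = p011 + p001 := by
    rw [measSplit P Yhat hYhm hYh01 (hS0.inter hG1),
        r2 {ω | Y ω = 0} {ω | G ω = 1} {ω | Yhat ω = 1},
        r2 {ω | Y ω = 0} {ω | G ω = 1} {ω | Yhat ω = 0}]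
  have hH2 : (P ({ω | Y ω = 0} ∩ {ω | G ω = 0})).toReal = p010 + p000 := by
    rw [measSplit P Yhat hYhm hYh01 (hS0.inter hG0),
        r2 {ω | Y ω = 0} {ω | G ω = 0} {ω | Yhat ω = 1},
        r2 {ω | Y ω = 0} {ω | G ω = 0} {ω | Yhat ω = 0}]
  -- group 3 : P(Y ∩ Yhat) split over G
  have hN11 : (P ({ω | Y ω = 1} ∩ {ω | Yhat ω = 1})).toReal = p111 + p110 :=
    measSplit P G hGm hG01 (hS1.inter hH1)
  have hN10 : (P ({ω | Y ω = 1} ∩ {ω | Yhat ω = 0})).toReal = p101 + p100 :=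
    measSplit P G hGm hG01 (hS1.inter hH0)
  have hN01 : (P ({ω | Y ω = 0} ∩ {ω | Yhat ω = 1})).toReal = p011 + p010 :=
    measSplit P G hGm hG01 (hS0.inter hH1)
  have hN00 : (P ({ω | Y ω = 0} ∩ {ω | Yhat ω = 0})).toReal = p001 + p000 :=
    measSplit P G hGm hG01 (hS0.inter hH0)
  -- marginals
  have hPH1 : (P {ω | Yhat ω = 1}).toReal = (p111 + p011) + (p110 + p010) := by
    rw [measSplit P G hGm hG01 hH1, hA, hB]
  have hPH0 : (P {ω | Yhat ω = 0}).toReal = (p101 + p001) + (p100 + p000) := by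
    rw [measSplit P G hGm hG01 hH0, hC, hD]
  have hPY1 : (P {ω | Y ω = 1}).toReal = (p111 + p101) + (p110 + p100) := by
    rw [measSplit P G hGm hG01 hS1, hE, hF]
  have hPY0 : (P {ω | Y ω = 0}).toReal = (p011 + p001) + (p010 + p000) := by
    rw [measSplit P G hGm hG01 hS0, hG2, hH2]
  -- assoc numerators
  have hn111 : (P ({ω | Y ω = 1} ∩ ({ω | Yhat ω = 1} ∩ {ω | G ω = 1}))).toReal = p111 := by
    rw [← Set.inter_assoc]
  have hn110 : (P ({ω | Y ω = 1} ∩ ({ω | Yhat ω = 1} ∩ {ω | G ω = 0}))).toReal = p110 := by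
    rw [← Set.inter_assoc]
  have hn101 : (P ({ω | Y ω = 1} ∩ ({ω | Yhat ω = 0} ∩ {ω | G ω = 1}))).toReal = p101 := by
    rw [← Set.inter_assoc]
  have hn100 : (P ({ω | Y ω = 1} ∩ ({ω | Yhat ω = 0} ∩ {ω | G ω = 0}))).toReal = p100 := by
    rw [← Set.inter_assoc]
  have hm111 : (P ({ω | Yhat ω = 1} ∩ ({ω | Y ω = 1} ∩ {ω | G ω = 1}))).toReal = p111 := by
    rw [r4 {ω | Yhat ω = 1} {ω | Y ω = 1} {ω | G ω = 1}]
  have hm110 : (P ({ω | Yhat ω = 1} ∩ ({ω | Y ω = 1} ∩ {ω | G ω = 0}))).toReal = p110 := by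
    rw [r4 {ω | Yhat ω = 1} {ω | Y ω = 1} {ω | G ω = 0}]
  have hm011 : (P ({ω | Yhat ω = 1} ∩ ({ω | Y ω = 0} ∩ {ω | G ω = 1}))).toReal = p011 := by
    rw [r4 {ω | Yhat ω = 1} {ω | Y ω = 0} {ω | G ω = 1}]
  have hm010 : (P ({ω | Yhat ω = 1} ∩ ({ω | Y ω = 0} ∩ {ω | G ω = 0}))).toReal = p010 := by
    rw [r4 {ω | Yhat ω = 1} {ω | Y ω = 0} {ω | G ω = 0}]
  -- positivity
  have posA : 0 < p111 + p011 := by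
    rw [← hA]
    exact ENNReal.toReal_pos (hposYh 1 (by simp) 1 (by simp)).ne' (measure_ne_top _ _)
  have posB : 0 < p110 + p010 := by
    rw [← hB]
    exact ENNReal.toReal_pos (hposYh 1 (by simp) 0 (by simp)).ne' (measure_ne_top _ _)
  have posC : 0 < p101 + p001 := by
    rw [← hC]
    exact ENNReal.toReal_pos (hposYh 0 (by simp) 1 (by simp)).ne' (measure_ne_top _ _)
  have posD : 0 < p100 + p000 := by
    rw [← hD]
    exact ENNReal.toReal_pos (hposYh 0 (by simp) 0 (by simp)).ne' (measure_ne_top _ _)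
  have posE : 0 < p111 + p101 := by
    rw [← hE]
    exact ENNReal.toReal_pos (hposY 1 (by simp) 1 (by simp)).ne' (measure_ne_top _ _)
  have posF : 0 < p110 + p100 := by
    rw [← hF]
    exact ENNReal.toReal_pos (hposY 1 (by simp) 0 (by simp)).ne' (measure_ne_top _ _)
  have posG : 0 < p011 + p001 := by
    rw [← hG2]
    exact ENNReal.toReal_pos (hposY 0 (by simp) 1 (by simp)).ne' (measure_ne_top _ _)
  have posH : 0 < p010 + p000 := by
    rw [← hH2]
    exact ENNReal.toReal_pos (hposY 0 (by simp) 0 (by simp)).ne' (measure_ne_top _ _)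
  have posS1 : 0 < (p111 + p011) + (p110 + p010) := by linarith
  have posS0 : 0 < (p101 + p001) + (p100 + p000) := by linarith
  have posT1 : 0 < (p111 + p101) + (p110 + p100) := by linarith
  have posT0 : 0 < (p011 + p001) + (p010 + p000) := by linarith
  -- values of conditional quantities
  have hPPV₁v : PPV₁ = p111 / (p111 + p011) := by
    rw [hPPV₁]; simp only [condProbEvent]; rw [hn111, hA]
  have hPPV₀v : PPV₀ = p110 / (p110 + p010) := by
    rw [hPPV₀]; simp only [condProbEvent]; rw [hn110, hB]
  have hFOR₁v : FOR₁ = p101 / (p101 + p001) := by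
    rw [hFOR₁]; simp only [condProbEvent]; rw [hn101, hC]
  have hFOR₀v : FOR₀ = p100 / (p100 + p000) := by
    rw [hFOR₀]; simp only [condProbEvent]; rw [hn100, hD]
  have hTPR₁v : TPR₁ = p111 / (p111 + p101) := by
    rw [hTPR₁]; simp only [condProbEvent]; rw [hm111, hE]
  have hTPR₀v : TPR₀ = p110 / (p110 + p100) := by
    rw [hTPR₀]; simp only [condProbEvent]; rw [hm110, hF]
  have hFPR₁v : FPR₁ = p011 / (p011 + p001) := by
    rw [hFPR₁]; simp only [condProbEvent]; rw [hm011, hG2]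
  have hFPR₀v : FPR₀ = p010 / (p010 + p000) := by
    rw [hFPR₀]; simp only [condProbEvent]; rw [hm010, hH2]
  have hPPVv : PPV = (p111 + p110) / ((p111 + p011) + (p110 + p010)) := by
    rw [hPPV]; simp only [condProbEvent]; rw [hN11, hPH1]
  have hFORv : FOR = (p101 + p100) / ((p101 + p001) + (p100 + p000)) := by
    rw [hFOR]; simp only [condProbEvent]; rw [hN10, hPH0]
  -- conditional variances
  have hmH1 : condExpEvent P G {ω | Yhat ω = 1}
      = (p111 + p011) / ((p111 + p011) + (p110 + p010)) := by
    simp only [condExpEvent]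
    rw [condExpEq P G hGm hG01, Set.inter_comm {ω | G ω = 1} {ω | Yhat ω = 1}, hA, hPH1]
  have hmH0 : condExpEvent P G {ω | Yhat ω = 0}
      = (p101 + p001) / ((p101 + p001) + (p100 + p000)) := by
    simp only [condExpEvent]
    rw [condExpEq P G hGm hG01, Set.inter_comm {ω | G ω = 1} {ω | Yhat ω = 0}, hC, hPH0]
  have hmY1 : condExpEvent P G {ω | Y ω = 1}
      = (p111 + p101) / ((p111 + p101) + (p110 + p100)) := by
    simp only [condExpEvent]
    rw [condExpEq P G hGm hG01, Set.inter_comm {ω | G ω = 1} {ω | Y ω = 1}, hE, hPY1]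
  have hmY0 : condExpEvent P G {ω | Y ω = 0}
      = (p011 + p001) / ((p011 + p001) + (p010 + p000)) := by
    simp only [condExpEvent]
    rw [condExpEq P G hGm hG01, Set.inter_comm {ω | G ω = 1} {ω | Y ω = 0}, hG2, hPY0]
  -- LHS conditional probabilities
  have hL1 : condProbEvent P {ω | G ω = 1} {ω | Y ω = 1}
      = (p111 + p101) / ((p111 + p101) + (p110 + p100)) := by
    simp only [condProbEvent]
    rw [Set.inter_comm {ω | G ω = 1} {ω | Y ω = 1}, hE, hPY1]
  have hL0 : condProbEvent P {ω | G ω = 1} {ω | Y ω = 0}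
      = (p011 + p001) / ((p011 + p001) + (p010 + p000)) := by
    simp only [condProbEvent]
    rw [Set.inter_comm {ω | G ω = 1} {ω | Y ω = 0}, hG2, hPY0]
  -- MSE
  have hMSE : (∫ ω, (Y ω - Z ω) ^ 2 ∂P)
      = (1 - PPV) ^ 2 * (p111 + p110) + PPV ^ 2 * (p011 + p010)
      + (1 - FOR) ^ 2 * (p101 + p100) + FOR ^ 2 * (p001 + p000) := by
    have hfun : ∀ ω, (Y ω - Z ω) ^ 2 =
        Set.indicator ({ω | Y ω = 1} ∩ {ω | Yhat ω = 1}) (fun _ => (1 - PPV) ^ 2) ω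
      + Set.indicator ({ω | Y ω = 0} ∩ {ω | Yhat ω = 1}) (fun _ => PPV ^ 2) ω
      + Set.indicator ({ω | Y ω = 1} ∩ {ω | Yhat ω = 0}) (fun _ => (1 - FOR) ^ 2) ω
      + Set.indicator ({ω | Y ω = 0} ∩ {ω | Yhat ω = 0}) (fun _ => FOR ^ 2) ω := by
      intro ω
      rcases hY01 ω with h | h <;> rcases hYh01 ω with h' | h' <;>
        simp [Set.indicator_apply, Set.mem_inter_iff, Set.mem_setOf_eq, hZ, h, h'] <;> ring
    have i1 : Integrable
        (Set.indicator ({ω | Y ω = 1} ∩ {ω | Yhat ω = 1}) (fun _ => (1 - PPV) ^ 2)) P :=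
      (integrable_const _).indicator (hS1.inter hH1)
    have i2 : Integrable
        (Set.indicator ({ω | Y ω = 0} ∩ {ω | Yhat ω = 1}) (fun _ => PPV ^ 2)) P :=
      (integrable_const _).indicator (hS0.inter hH1)
    have i3 : Integrable
        (Set.indicator ({ω | Y ω = 1} ∩ {ω | Yhat ω = 0}) (fun _ => (1 - FOR) ^ 2)) P :=
      (integrable_const _).indicator (hS1.inter hH0)
    have i4 : Integrable
        (Set.indicator ({ω | Y ω = 0} ∩ {ω | Yhat ω = 0}) (fun _ => FOR ^ 2)) P :=
      (integrable_const _).indicator (hS0.inter hH0)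
    have e1 := integral_add ((i1.add i2).add i3) i4
    have e2 := integral_add (i1.add i2) i3
    have e3 := integral_add i1 i2
    simp only [Pi.add_apply] at e1 e2 e3
    rw [integral_congr_ae (ae_of_all _ hfun), e1, e2, e3,
        integral_indicator_const _ (hS1.inter hH1), integral_indicator_const _ (hS0.inter hH1),
        integral_indicator_const _ (hS1.inter hH0), integral_indicator_const _ (hS0.inter hH0)]
    simp only [Measure.real]
    rw [hN11, hN01, hN10, hN00]
    simp only [smul_eq_mul]
    ring
  -- final computation
  rw [hMSE, hL1, hL0]
  simp only [condVarEvent]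
  rw [hmH1, hmH0, hmY1, hmY0, hPH1, hPH0, hPY1, hPY0,
      hPPV₁v, hPPV₀v, hFOR₁v, hFOR₀v, hTPR₁v, hTPR₀v, hFPR₁v, hFPR₀v]
  have hT1 : (p111 + p011) / (p111 + p011 + (p110 + p010)) *
        (1 - (p111 + p011) / (p111 + p011 + (p110 + p010))) *
        (p111 + p011 + (p110 + p010)) *
        (p111 / (p111 + p011) - p110 / (p110 + p010))
      = (p111 * (p110 + p010) - p110 * (p111 + p011)) / (p111 + p011 + (p110 + p010)) := by
    field_simp
    ring
  have hT2 : (p101 + p001) / (p101 + p001 + (p100 + p000)) *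
        (1 - (p101 + p001) / (p101 + p001 + (p100 + p000))) *
        (p101 + p001 + (p100 + p000)) *
        (p101 / (p101 + p001) - p100 / (p100 + p000))
      = (p101 * (p100 + p000) - p100 * (p101 + p001)) / (p101 + p001 + (p100 + p000)) := by
    field_simp
    ring
  have hT3 : (p111 + p101) / (p111 + p101 + (p110 + p100)) *
        (1 - (p111 + p101) / (p111 + p101 + (p110 + p100))) *
        (p111 + p101 + (p110 + p100)) *
        (p111 / (p111 + p101) - p110 / (p110 + p100))
      = (p111 * (p110 + p100) - p110 * (p111 + p101)) / (p111 + p101 + (p110 + p100)) := by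
    field_simp
    ring
  have hT4 : (p011 + p001) / (p011 + p001 + (p010 + p000)) *
        (1 - (p011 + p001) / (p011 + p001 + (p010 + p000))) *
        (p011 + p001 + (p010 + p000)) *
        (p011 / (p011 + p001) - p010 / (p010 + p000))
      = (p011 * (p010 + p000) - p010 * (p011 + p001)) / (p011 + p001 + (p010 + p000)) := by
    field_simp
    ring
  rw [hT1, hT2, hT3, hT4, hPPVv, hFORv,
      mseAlg (p111 + p110) (p011 + p010) (p101 + p100) (p001 + p000)
        (p111 + p011 + (p110 + p010)) (p101 + p001 + (p100 + p000))
        (by ring) (by ring) (ne_of_gt posS1) (ne_of_gt posS0)]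
  exact finAlg (p111 + p110) (p011 + p010) (p101 + p100) (p001 + p000)
    (p111 + p101) (p011 + p001)
    (p111 * (p110 + p010) - p110 * (p111 + p011))
    (p101 * (p100 + p000) - p100 * (p101 + p001))
    (p111 * (p110 + p100) - p110 * (p111 + p101))
    (p011 * (p010 + p000) - p010 * (p011 + p001))
    (p111 + p011 + (p110 + p010)) (p101 + p001 + (p100 + p000))
    (p111 + p101 + (p110 + p100)) (p011 + p001 + (p010 + p000))
    (ne_of_gt posS1) (ne_of_gt posS0) (ne_of_gt posT1) (ne_of_gt posT0)
    (by ring)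
end

section
/- Suppose Y : Ω → ℝ is uniformly distributed on [0,1], X := 1{Y > 1/2}, Z := (1/4)·1{X = 0} + (3/4)·1{X = 1}, and G is a {0,1}-valued random variable with P(G = 1 | X = 0) = 0.1, P(G = 1 | X = 1) = 0.9, and G conditionally independent of Y given σ(X). Then: (i) E[Y | σ(Z)] = Z almost surely (global calibration); (ii) Cov(Y, G) > 0, so G and Y are not independent; (iii) P(Y = Z) = 0, so Z is not an oracle; (iv) E[Y | σ(Z) ⊔ σ(G)] = Z almost surely (perfect pointwise calibration within groups); and (v) E[Z | σ(Y) ⊔ σ(G)] = E[Z | σ(Y)] almost surely (perfect pointwise balance across groups). -/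
open MeasureTheory ProbabilityTheory

private lemma constOn_comap {Ω α β : Type*} [MeasurableSpace α] [MeasurableSpace β]
    [MeasurableSingletonClass β] {X : Ω → α} {h : Ω → β}
    (hh : Measurable[MeasurableSpace.comap X inferInstance] h) {ω ω' : Ω}
    (hXX : X ω = X ω') : h ω = h ω' := by
  obtain ⟨B, hB, hBeq⟩ := MeasurableSpace.measurableSet_comap.mp
    (hh (measurableSet_singleton (h ω)))
  have h1 : ω ∈ X ⁻¹' B := by rw [hBeq]; exact rfl
  have h2 : ω' ∈ X ⁻¹' B := by rw [Set.mem_preimage, ← hXX]; exact h1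
  rw [hBeq] at h2
  exact (Set.mem_singleton_iff.mp h2).symm

/-- **stylized possibility example.** If `Y` is uniform on `[0,1]`,
`X = 1{Y > 1/2}`, `Z = (1/4)·1{X=0} + (3/4)·1{X=1}`, and `G` is {0,1}-valued with
`P(G=1|X=0) = 0.1`, `P(G=1|X=1) = 0.9`, and `G ⟂ Y | σ(X)`, then: (i) `Z` is globally
calibrated; (ii) `Cov(Y,G) > 0`, so `G` and `Y` are not independent; (iii) `P(Y = Z) = 0`,
so `Z` is not an oracle; (iv) perfect pointwise calibration within groups; and (v) perfect
pointwise balance across groups. -/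
theorem stmt19 {Ω : Type*} [mΩ : MeasurableSpace Ω] [StandardBorelSpace Ω] [Nonempty Ω]
    (P : Measure Ω) [IsProbabilityMeasure P]
    (Y X Z G : Ω → ℝ) (hYm : Measurable Y) (hXm : Measurable X) (hZm : Measurable Z)
    (hGm : Measurable G)
    (hYunif : Measure.map Y P = MeasureTheory.volume.restrict (Set.Icc (0 : ℝ) 1))
    (hX : ∀ ω, X ω = if Y ω > 1 / 2 then 1 else 0)
    (hZ : ∀ ω, Z ω = (1 / 4) * (if X ω = 0 then 1 else 0) +
      (3 / 4) * (if X ω = 1 then 1 else 0))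
    (hG01 : ∀ ω, G ω = 0 ∨ G ω = 1)
    (hG0 : condProbEvent P {ω | G ω = 1} {ω | X ω = 0} = 0.1)
    (hG1 : condProbEvent P {ω | G ω = 1} {ω | X ω = 1} = 0.9)
    (hGY : CondIndepFun (MeasurableSpace.comap X inferInstance) hXm.comap_le G Y P) :
    (P[Y | MeasurableSpace.comap Z inferInstance] =ᵐ[P] Z) ∧
    ((0 < (∫ ω, Y ω * G ω ∂P) - (∫ ω, Y ω ∂P) * ∫ ω, G ω ∂P) ∧ ¬ IndepFun G Y P) ∧
    (P {ω | Y ω = Z ω} = 0) ∧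
    (P[Y | MeasurableSpace.comap Z inferInstance ⊔ MeasurableSpace.comap G inferInstance]
        =ᵐ[P] Z) ∧
    (P[Z | MeasurableSpace.comap Y inferInstance ⊔ MeasurableSpace.comap G inferInstance]
        =ᵐ[P] P[Z | MeasurableSpace.comap Y inferInstance]) := by
  classical
  -- basic σ-algebras
  have hmXle : (MeasurableSpace.comap X inferInstance) ≤ mΩ := hXm.comap_le
  have hmZle : (MeasurableSpace.comap Z inferInstance) ≤ mΩ := hZm.comap_le
  have hmGle : (MeasurableSpace.comap G inferInstance) ≤ mΩ := hGm.comap_le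
  have hmYle : (MeasurableSpace.comap Y inferInstance) ≤ mΩ := hYm.comap_le
  have hmJle : (MeasurableSpace.comap Z inferInstance) ⊔ (MeasurableSpace.comap G inferInstance) ≤ mΩ := sup_le hmZle hmGle
  have hmYJle : (MeasurableSpace.comap Y inferInstance) ⊔ (MeasurableSpace.comap G inferInstance) ≤ mΩ := sup_le hmYle hmGle
  -- atoms
  set A0 : Set Ω := {ω | X ω = 0} with hA0def
  set A1 : Set Ω := {ω | X ω = 1} with hA1def
  set B1 : Set Ω := {ω | G ω = 1} with hB1def
  set B0 : Set Ω := {ω | G ω = 0} with hB0def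
  have hA0m : MeasurableSet A0 := hXm (measurableSet_singleton 0)
  have hA1m : MeasurableSet A1 := hXm (measurableSet_singleton 1)
  have hB1m : MeasurableSet B1 := hGm (measurableSet_singleton 1)
  have hB0m : MeasurableSet B0 := hGm (measurableSet_singleton 0)
  have hX01 : ∀ ω, X ω = 0 ∨ X ω = 1 := by
    intro ω
    rcases le_or_gt (Y ω) (1 / 2) with h | h
    · left; rw [hX ω, if_neg (not_lt.mpr h)]
    · right; rw [hX ω, if_pos h]
  have hZ14 : ∀ ω, X ω = 0 → Z ω = 1 / 4 := by
    intro ω h; rw [hZ ω, h]; norm_num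
  have hZ34 : ∀ ω, X ω = 1 → Z ω = 3 / 4 := by
    intro ω h; rw [hZ ω, h]; norm_num
  have hZval : ∀ ω, Z ω = 1 / 4 ∨ Z ω = 3 / 4 := by
    intro ω; rcases hX01 ω with h | h
    · exact Or.inl (hZ14 ω h)
    · exact Or.inr (hZ34 ω h)
  have hA0Y : A0 = Y ⁻¹' (Set.Iic (1 / 2)) := by
    ext ω
    simp only [hA0def, Set.mem_setOf_eq, Set.mem_preimage, Set.mem_Iic, hX ω]
    rcases le_or_gt (Y ω) (1 / 2) with h | h
    · rw [if_neg (not_lt.mpr h)]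
      simpa using h
    · rw [if_pos h]
      constructor
      · intro h1; norm_num at h1
      · intro h1; linarith
  have hA1Y : A1 = Y ⁻¹' (Set.Ioi (1 / 2)) := by
    ext ω
    simp only [hA1def, Set.mem_setOf_eq, Set.mem_preimage, Set.mem_Ioi, hX ω]
    rcases le_or_gt (Y ω) (1 / 2) with h | h
    · rw [if_neg (not_lt.mpr h)]
      constructor
      · intro h1; norm_num at h1
      · intro h1; linarith
    · rw [if_pos h]
      simpa using h
  have hA01 : A0 ∪ A1 = Set.univ := by
    ext ω; simp only [Set.mem_union, Set.mem_univ, iff_true]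
    exact hX01 ω
  have hA0A1 : Disjoint A0 A1 := by
    rw [Set.disjoint_left]
    intro ω h0 h1
    rw [hA0def, Set.mem_setOf_eq] at h0
    rw [hA1def, Set.mem_setOf_eq] at h1
    rw [h0] at h1; norm_num at h1
  have hB01 : B0 ∪ B1 = Set.univ := by
    ext ω; simp only [Set.mem_union, Set.mem_univ, iff_true]
    exact hG01 ω
  have hB0B1 : Disjoint B0 B1 := by
    rw [Set.disjoint_left]
    intro ω h0 h1
    rw [hB0def, Set.mem_setOf_eq] at h0
    rw [hB1def, Set.mem_setOf_eq] at h1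
    rw [h0] at h1; norm_num at h1
  -- pushforward measure computations
  have hPt : ∀ t : Set ℝ, MeasurableSet t →
      P (Y ⁻¹' t) = MeasureTheory.volume (t ∩ Set.Icc (0 : ℝ) 1) := by
    intro t ht
    rw [← Measure.map_apply hYm ht, hYunif, Measure.restrict_apply ht]
  have hIicInter : Set.Iic (1 / 2 : ℝ) ∩ Set.Icc (0 : ℝ) 1 = Set.Icc (0 : ℝ) (1 / 2) := by
    ext x
    simp only [Set.mem_inter_iff, Set.mem_Iic, Set.mem_Icc]
    constructor
    · rintro ⟨h1, h2, h3⟩; exact ⟨h2, h1⟩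
    · rintro ⟨h1, h2⟩; exact ⟨h2, h1, by linarith⟩
  have hIoiInter : Set.Ioi (1 / 2 : ℝ) ∩ Set.Icc (0 : ℝ) 1 = Set.Ioc (1 / 2 : ℝ) 1 := by
    ext x
    simp only [Set.mem_inter_iff, Set.mem_Ioi, Set.mem_Icc, Set.mem_Ioc]
    constructor
    · rintro ⟨h1, h2, h3⟩; exact ⟨h1, h3⟩
    · rintro ⟨h1, h2⟩; exact ⟨h1, by linarith, h2⟩
  have hPA0 : P A0 = ENNReal.ofReal (1 / 2) := by
    rw [hA0Y, hPt _ measurableSet_Iic, hIicInter, Real.volume_Icc]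
    norm_num
  have hPA1 : P A1 = ENNReal.ofReal (1 / 2) := by
    rw [hA1Y, hPt _ measurableSet_Ioi, hIoiInter, Real.volume_Ioc]
    norm_num
  have hPA0R : (P A0).toReal = 1 / 2 := by
    rw [hPA0, ENNReal.toReal_ofReal (by norm_num)]
  have hPA1R : (P A1).toReal = 1 / 2 := by
    rw [hPA1, ENNReal.toReal_ofReal (by norm_num)]
  -- integrability
  have hYint : Integrable Y P := by
    have h1 : Integrable (id : ℝ → ℝ) (Measure.map Y P) := by
      rw [hYunif]
      exact continuous_id.integrableOn_Icc
    exact (integrable_map_measure aestronglyMeasurable_id hYm.aemeasurable).mp h1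
  have hZint : Integrable Z P := by
    refine (integrable_const (3 / 4 : ℝ)).mono' hZm.aestronglyMeasurable
      (Filter.Eventually.of_forall fun ω => ?_)
    rcases hZval ω with h | h <;> rw [h, Real.norm_eq_abs, abs_of_nonneg (by norm_num)] <;> norm_num
  have hGint : Integrable G P := by
    refine (integrable_const (1 : ℝ)).mono' hGm.aestronglyMeasurable
      (Filter.Eventually.of_forall fun ω => ?_)
    rcases hG01 ω with h | h <;> rw [h, Real.norm_eq_abs, abs_of_nonneg (by norm_num)] <;> norm_num
  -- set integrals of Y
  have hSIY : ∀ t : Set ℝ, MeasurableSet t →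
      ∫ ω in Y ⁻¹' t, Y ω ∂P = ∫ y in t ∩ Set.Icc (0 : ℝ) 1, y := by
    intro t ht
    have h1 : ∫ y in t, (id : ℝ → ℝ) y ∂(Measure.map Y P) = ∫ ω in Y ⁻¹' t, Y ω ∂P :=
      setIntegral_map ht aestronglyMeasurable_id hYm.aemeasurable
    rw [← h1, hYunif, Measure.restrict_restrict ht]
    rfl
  have hIY0 : ∫ ω in A0, Y ω ∂P = 1 / 8 := by
    rw [hA0Y, hSIY _ measurableSet_Iic, hIicInter,
      MeasureTheory.integral_Icc_eq_integral_Ioc,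
      ← intervalIntegral.integral_of_le (by norm_num : (0:ℝ) ≤ 1 / 2),
      integral_id]
    norm_num
  have hIY1 : ∫ ω in A1, Y ω ∂P = 3 / 8 := by
    rw [hA1Y, hSIY _ measurableSet_Ioi, hIoiInter,
      ← intervalIntegral.integral_of_le (by norm_num : (1/2:ℝ) ≤ 1),
      integral_id]
    norm_num
  have hIYuniv : ∫ ω, Y ω ∂P = 1 / 2 := by
    have h1 : ∫ ω, Y ω ∂P = ∫ ω in A0 ∪ A1, Y ω ∂P := by
      rw [hA01, MeasureTheory.setIntegral_univ]
    rw [h1, setIntegral_union hA0A1 hA1m hYint.integrableOn hYint.integrableOn, hIY0, hIY1]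
    norm_num
  -- set integrals of Z
  have hIZ0 : ∀ s : Set Ω, MeasurableSet s → s ⊆ A0 →
      ∫ ω in s, Z ω ∂P = 1 / 4 * (P s).toReal := by
    intro s hs hsub
    rw [setIntegral_congr_fun hs (fun ω hω => hZ14 ω (hsub hω)), setIntegral_const,
      smul_eq_mul, mul_comm, measureReal_def]
  have hIZ1 : ∀ s : Set Ω, MeasurableSet s → s ⊆ A1 →
      ∫ ω in s, Z ω ∂P = 3 / 4 * (P s).toReal := by
    intro s hs hsub
    rw [setIntegral_congr_fun hs (fun ω hω => hZ34 ω (hsub hω)), setIntegral_const,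
      smul_eq_mul, mul_comm, measureReal_def]
  have hIZuniv : ∫ ω, Z ω ∂P = 1 / 2 := by
    have h1 : ∫ ω, Z ω ∂P = ∫ ω in A0 ∪ A1, Z ω ∂P := by
      rw [hA01, MeasureTheory.setIntegral_univ]
    rw [h1, setIntegral_union hA0A1 hA1m hZint.integrableOn hZint.integrableOn,
      hIZ0 A0 hA0m subset_rfl, hIZ1 A1 hA1m subset_rfl, hPA0R, hPA1R]
    norm_num
  -- conditional-expectation integral helper
  haveI : SigmaFinite (P.trim hmXle) := by
    have := isFiniteMeasure_trim (μ := P) hmXle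
    infer_instance
  have hA0mX : MeasurableSet[(MeasurableSpace.comap X inferInstance)] A0 := ⟨{0}, measurableSet_singleton 0, rfl⟩
  have hA1mX : MeasurableSet[(MeasurableSpace.comap X inferInstance)] A1 := ⟨{1}, measurableSet_singleton 1, rfl⟩
  have hcondInt : ∀ (s A : Set Ω), MeasurableSet s → MeasurableSet[(MeasurableSpace.comap X inferInstance)] A →
      ∫ ω in A, (P[(Set.indicator s fun _ => (1 : ℝ)) | (MeasurableSpace.comap X inferInstance)]) ω ∂P = (P (s ∩ A)).toReal := by
    intro s A hs hA
    rw [setIntegral_condExp hmXle ((integrable_const (1 : ℝ)).indicator hs) hA,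
      integral_indicator hs, setIntegral_const, measureReal_def, Measure.restrict_apply hs, smul_eq_mul, mul_one]
  -- conditional prob values
  set c1 : Ω → ℝ := P[(Set.indicator B1 fun _ => (1 : ℝ)) | (MeasurableSpace.comap X inferInstance)] with hc1def
  have hc1meas : Measurable[(MeasurableSpace.comap X inferInstance)] c1 := stronglyMeasurable_condExp.measurable
  obtain ⟨ω0, hω0⟩ : A0.Nonempty := by
    apply MeasureTheory.nonempty_of_measure_ne_zero (μ := P)
    rw [hPA0]
    exact (ENNReal.ofReal_pos.mpr (by norm_num)).ne'
  obtain ⟨ω1, hω1⟩ : A1.Nonempty := by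
    apply MeasureTheory.nonempty_of_measure_ne_zero (μ := P)
    rw [hPA1]
    exact (ENNReal.ofReal_pos.mpr (by norm_num)).ne'
  have hc1A0 : Set.EqOn c1 (fun _ => c1 ω0) A0 := by
    intro ω hω
    exact constOn_comap hc1meas (by rw [show X ω = 0 from hω, show X ω0 = 0 from hω0])
  have hc1A1 : Set.EqOn c1 (fun _ => c1 ω1) A1 := by
    intro ω hω
    exact constOn_comap hc1meas (by rw [show X ω = 1 from hω, show X ω1 = 1 from hω1])
  have hPB1A0R : (P (B1 ∩ A0)).toReal = 0.05 := by
    have h := hG0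
    unfold condProbEvent at h
    rw [hPA0R] at h
    rw [div_eq_iff (by norm_num : (1/2 : ℝ) ≠ 0)] at h
    rw [h]; norm_num
  have hPB1A1R : (P (B1 ∩ A1)).toReal = 0.45 := by
    have h := hG1
    unfold condProbEvent at h
    rw [hPA1R] at h
    rw [div_eq_iff (by norm_num : (1/2 : ℝ) ≠ 0)] at h
    rw [h]; norm_num
  have hφ0 : c1 ω0 = 0.1 := by
    have e1 : ∫ ω in A0, c1 ω ∂P = c1 ω0 * (1 / 2) := by
      rw [setIntegral_congr_fun hA0m hc1A0, setIntegral_const, measureReal_def, hPA0,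
        ENNReal.toReal_ofReal (by norm_num), smul_eq_mul, mul_comm]
    have e2 : ∫ ω in A0, c1 ω ∂P = (P (B1 ∩ A0)).toReal := hcondInt B1 A0 hB1m hA0mX
    rw [e1, hPB1A0R] at e2
    linarith
  have hφ1 : c1 ω1 = 0.9 := by
    have e1 : ∫ ω in A1, c1 ω ∂P = c1 ω1 * (1 / 2) := by
      rw [setIntegral_congr_fun hA1m hc1A1, setIntegral_const, measureReal_def, hPA1,
        ENNReal.toReal_ofReal (by norm_num), smul_eq_mul, mul_comm]
    have e2 : ∫ ω in A1, c1 ω ∂P = (P (B1 ∩ A1)).toReal := hcondInt B1 A1 hB1m hA1mX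
    rw [e1, hPB1A1R] at e2
    linarith
  -- conditional independence consequence
  have hCImul := (condIndepFun_iff_condExp_inter_preimage_eq_mul hGm hYm).mp hGY
  have hB1pre : G ⁻¹' {1} = B1 := rfl
  have hCI : ∀ (A : Set Ω), MeasurableSet A → MeasurableSet[(MeasurableSpace.comap X inferInstance)] A → (φ : ℝ) →
      Set.EqOn c1 (fun _ => φ) A → ∀ t : Set ℝ, MeasurableSet t →
      (P (B1 ∩ Y ⁻¹' t ∩ A)).toReal = φ * (P (Y ⁻¹' t ∩ A)).toReal := by
    intro A hAm hAmX φ hφ t ht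
    have spec := hCImul {1} t (measurableSet_singleton 1) ht
    rw [hB1pre] at spec
    have L : ∫ ω in A, (P[(Set.indicator (B1 ∩ Y ⁻¹' t) fun _ => (1 : ℝ)) | (MeasurableSpace.comap X inferInstance)]) ω ∂P
        = (P (B1 ∩ Y ⁻¹' t ∩ A)).toReal :=
      hcondInt _ A (hB1m.inter (hYm ht)) hAmX
    have R : ∫ ω in A, (c1 ω * (P[(Set.indicator (Y ⁻¹' t) fun _ => (1 : ℝ)) | (MeasurableSpace.comap X inferInstance)]) ω) ∂P
        = φ * (P (Y ⁻¹' t ∩ A)).toReal := by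
      rw [setIntegral_congr_fun hAm
        (fun ω hω => by rw [hφ hω])]
      rw [MeasureTheory.integral_const_mul, hcondInt _ A (hYm ht) hAmX]
    have E : ∫ ω in A, (P[(Set.indicator (B1 ∩ Y ⁻¹' t) fun _ => (1 : ℝ)) | (MeasurableSpace.comap X inferInstance)]) ω ∂P
        = ∫ ω in A, (c1 ω * (P[(Set.indicator (Y ⁻¹' t) fun _ => (1 : ℝ)) | (MeasurableSpace.comap X inferInstance)]) ω) ∂P := by
      apply setIntegral_congr_ae hAm
      filter_upwards [spec] with ω hω _
      exact hω
    rw [← L, E, R]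
  -- integral transfer via pushforward
  have hIYtrans : ∀ (A : Set Ω), MeasurableSet A → (φ : ℝ) → 0 ≤ φ →
      (∀ t : Set ℝ, MeasurableSet t →
        (P (B1 ∩ Y ⁻¹' t ∩ A)).toReal = φ * (P (Y ⁻¹' t ∩ A)).toReal) →
      ∫ ω in B1 ∩ A, Y ω ∂P = φ * ∫ ω in A, Y ω ∂P := by
    intro A hAm φ hφ0 hCIeq
    have hmeq : Measure.map Y (P.restrict (B1 ∩ A))
        = ENNReal.ofReal φ • Measure.map Y (P.restrict A) := by
      ext t ht
      rw [Measure.map_apply hYm ht, Measure.restrict_apply (hYm ht),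
        Measure.smul_apply, Measure.map_apply hYm ht, Measure.restrict_apply (hYm ht)]
      have hset : Y ⁻¹' t ∩ (B1 ∩ A) = B1 ∩ Y ⁻¹' t ∩ A := by
        ext ω; simp only [Set.mem_inter_iff]; tauto
      rw [hset]
      have h1 := hCIeq t ht
      have h2 : P (B1 ∩ Y ⁻¹' t ∩ A) = ENNReal.ofReal ((P (B1 ∩ Y ⁻¹' t ∩ A)).toReal) :=
        (ENNReal.ofReal_toReal (measure_ne_top P _)).symm
      rw [h2, h1, ENNReal.ofReal_mul hφ0, ENNReal.ofReal_toReal (measure_ne_top P _)]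
      rfl
    calc ∫ ω in B1 ∩ A, Y ω ∂P
        = ∫ y, (id : ℝ → ℝ) y ∂(Measure.map Y (P.restrict (B1 ∩ A))) :=
          (integral_map hYm.aemeasurable aestronglyMeasurable_id).symm
      _ = ∫ y, (id : ℝ → ℝ) y ∂(ENNReal.ofReal φ • Measure.map Y (P.restrict A)) := by
          rw [hmeq]
      _ = φ * ∫ y, (id : ℝ → ℝ) y ∂(Measure.map Y (P.restrict A)) := by
          rw [integral_smul_measure, ENNReal.toReal_ofReal hφ0, smul_eq_mul]
      _ = φ * ∫ ω in A, Y ω ∂P := by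
          rw [integral_map hYm.aemeasurable aestronglyMeasurable_id]
          rfl
  have hIYB1A0 : ∫ ω in B1 ∩ A0, Y ω ∂P = 1 / 80 := by
    rw [hIYtrans A0 hA0m 0.1 (by norm_num)
      (by simpa [hφ0] using hCI A0 hA0m hA0mX (c1 ω0) hc1A0), hIY0]
    norm_num
  have hIYB1A1 : ∫ ω in B1 ∩ A1, Y ω ∂P = 27 / 80 := by
    rw [hIYtrans A1 hA1m 0.9 (by norm_num)
      (by simpa [hφ1] using hCI A1 hA1m hA1mX (c1 ω1) hc1A1), hIY1]
    norm_num
  -- part (ii)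
  have hB1split : B1 = B1 ∩ A0 ∪ B1 ∩ A1 := by
    rw [← Set.inter_union_distrib_left, hA01, Set.inter_univ]
  have hdisjB1 : Disjoint (B1 ∩ A0) (B1 ∩ A1) :=
    hA0A1.mono Set.inter_subset_right Set.inter_subset_right
  have hIYB1 : ∫ ω in B1, Y ω ∂P = 0.35 := by
    rw [hB1split, setIntegral_union hdisjB1 (hB1m.inter hA1m)
      hYint.integrableOn hYint.integrableOn, hIYB1A0, hIYB1A1]
    norm_num
  have hIYG : ∫ ω, Y ω * G ω ∂P = 0.35 := by
    have h1 : ∀ ω, Y ω * G ω = Set.indicator B1 Y ω := by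
      intro ω
      rw [Set.indicator_apply]
      by_cases hm : ω ∈ B1
      · rw [if_pos hm, show G ω = 1 from hm, mul_one]
      · rw [if_neg hm]
        rcases hG01 ω with h | h
        · rw [h, mul_zero]
        · exact absurd h hm
    calc ∫ ω, Y ω * G ω ∂P = ∫ ω, Set.indicator B1 Y ω ∂P := by
          exact integral_congr_ae (Filter.Eventually.of_forall h1)
      _ = ∫ ω in B1, Y ω ∂P := integral_indicator hB1m
      _ = 0.35 := hIYB1
  have hPB1R : (P B1).toReal = 0.5 := by
    have h1 : P B1 = P (B1 ∩ A0) + P (B1 ∩ A1) := by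
      conv_lhs => rw [hB1split]
      exact measure_union hdisjB1 (hB1m.inter hA1m)
    rw [h1, ENNReal.toReal_add (measure_ne_top P _) (measure_ne_top P _),
      hPB1A0R, hPB1A1R]
    norm_num
  have hIG : ∫ ω, G ω ∂P = 0.5 := by
    have h1 : ∀ ω, G ω = Set.indicator B1 (fun _ => (1:ℝ)) ω := by
      intro ω
      rw [Set.indicator_apply]
      by_cases hm : ω ∈ B1
      · rw [if_pos hm]; exact hm
      · rw [if_neg hm]
        rcases hG01 ω with h | h
        · exact h
        · exact absurd h hm
    calc ∫ ω, G ω ∂P = ∫ ω, Set.indicator B1 (fun _ => (1:ℝ)) ω ∂P :=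
          integral_congr_ae (Filter.Eventually.of_forall h1)
      _ = ∫ ω in B1, (1:ℝ) ∂P := integral_indicator hB1m
      _ = 0.5 := by rw [setIntegral_const, smul_eq_mul, mul_one, measureReal_def, hPB1R]
  have hCov : 0 < (∫ ω, Y ω * G ω ∂P) - (∫ ω, Y ω ∂P) * ∫ ω, G ω ∂P := by
    rw [hIYG, hIYuniv, hIG]
    norm_num
  have hNotIndep : ¬ IndepFun G Y P := by
    intro hind
    have h1 := hind.integral_mul_eq_mul_integral hGint.aestronglyMeasurable hYint.aestronglyMeasurable
    have h2 : ∫ ω, G ω * Y ω ∂P = ∫ ω, Y ω * G ω ∂P := by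
      apply integral_congr_ae
      exact Filter.Eventually.of_forall fun ω => mul_comm _ _
    have h3 : ∫ ω, (G * Y) ω ∂P = ∫ ω, G ω * Y ω ∂P := rfl
    rw [h3, h2, hIYG, hIG, hIYuniv] at h1
    norm_num at h1
  -- part (iii)
  have hYZ : P {ω | Y ω = Z ω} = 0 := by
    have hsub : {ω | Y ω = Z ω} ⊆ Y ⁻¹' {(1/4 : ℝ)} ∪ Y ⁻¹' {(3/4 : ℝ)} := by
      intro ω hω
      rw [Set.mem_setOf_eq] at hω
      rcases hZval ω with h | h
      · left; rw [Set.mem_preimage, Set.mem_singleton_iff, hω, h]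
      · right; rw [Set.mem_preimage, Set.mem_singleton_iff, hω, h]
    have h14 : P (Y ⁻¹' {(1/4 : ℝ)}) = 0 := by
      rw [hPt _ (measurableSet_singleton _)]
      refine le_antisymm (le_trans (measure_mono Set.inter_subset_left) ?_) zero_le
      rw [Real.volume_singleton]
    have h34 : P (Y ⁻¹' {(3/4 : ℝ)}) = 0 := by
      rw [hPt _ (measurableSet_singleton _)]
      refine le_antisymm (le_trans (measure_mono Set.inter_subset_left) ?_) zero_le
      rw [Real.volume_singleton]
    refine le_antisymm (le_trans (measure_mono hsub) ?_) zero_le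
    exact le_trans (measure_union_le _ _) (le_of_eq (by rw [h14, h34, add_zero]))
  -- the crucial set-integral equalities over the join σ-algebra
  have hPB1A0 : ∀ t : Set ℝ, MeasurableSet t →
      (P (B1 ∩ Y ⁻¹' t ∩ A0)).toReal = 0.1 * (P (Y ⁻¹' t ∩ A0)).toReal := by
    simpa [hφ0] using hCI A0 hA0m hA0mX (c1 ω0) hc1A0
  have hPB1A1' : ∀ t : Set ℝ, MeasurableSet t →
      (P (B1 ∩ Y ⁻¹' t ∩ A1)).toReal = 0.9 * (P (Y ⁻¹' t ∩ A1)).toReal := by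
    simpa [hφ1] using hCI A1 hA1m hA1mX (c1 ω1) hc1A1
  -- atom-level equalities of ∫ Y and ∫ Z
  have CA0 : ∫ ω in A0, Y ω ∂P = ∫ ω in A0, Z ω ∂P := by
    rw [hIY0, hIZ0 A0 hA0m subset_rfl, hPA0R]; norm_num
  have CA1 : ∫ ω in A1, Y ω ∂P = ∫ ω in A1, Z ω ∂P := by
    rw [hIY1, hIZ1 A1 hA1m subset_rfl, hPA1R]; norm_num
  have Cuniv : ∫ ω in Set.univ, Y ω ∂P = ∫ ω in Set.univ, Z ω ∂P := by
    rw [MeasureTheory.setIntegral_univ, MeasureTheory.setIntegral_univ, hIYuniv, hIZuniv]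
  have CB1A0 : ∫ ω in B1 ∩ A0, Y ω ∂P = ∫ ω in B1 ∩ A0, Z ω ∂P := by
    rw [hIYB1A0, hIZ0 _ (hB1m.inter hA0m) Set.inter_subset_right, hPB1A0R]
    norm_num
  have CB1A1 : ∫ ω in B1 ∩ A1, Y ω ∂P = ∫ ω in B1 ∩ A1, Z ω ∂P := by
    rw [hIYB1A1, hIZ1 _ (hB1m.inter hA1m) Set.inter_subset_right, hPB1A1R]
    norm_num
  have Cunion : ∀ u v : Set Ω, MeasurableSet u → MeasurableSet v → Disjoint u v →
      (∫ ω in u, Y ω ∂P = ∫ ω in u, Z ω ∂P) → (∫ ω in v, Y ω ∂P = ∫ ω in v, Z ω ∂P) →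
      ∫ ω in u ∪ v, Y ω ∂P = ∫ ω in u ∪ v, Z ω ∂P := by
    intro u v hu hv hd h1 h2
    rw [setIntegral_union hd hv hYint.integrableOn hYint.integrableOn,
      setIntegral_union hd hv hZint.integrableOn hZint.integrableOn, h1, h2]
  have Cdiff : ∀ u v : Set Ω, MeasurableSet v → v ⊆ u →
      (∫ ω in u, Y ω ∂P = ∫ ω in u, Z ω ∂P) → (∫ ω in v, Y ω ∂P = ∫ ω in v, Z ω ∂P) →
      ∫ ω in u \ v, Y ω ∂P = ∫ ω in u \ v, Z ω ∂P := by
    intro u v hv hvu h1 h2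
    rw [integral_diff hv hYint.integrableOn hvu, integral_diff hv hZint.integrableOn hvu, h1, h2]
  have hB0A0eq : B0 ∩ A0 = A0 \ (B1 ∩ A0) := by
    ext ω
    constructor
    · rintro ⟨hg, hx⟩
      refine ⟨hx, fun hb => ?_⟩
      have h1 : G ω = 1 := hb.1
      have h0 : G ω = 0 := hg
      rw [h0] at h1
      norm_num at h1
    · rintro ⟨hx, hn⟩
      refine ⟨?_, hx⟩
      rcases hG01 ω with h | h
      · exact h
      · exact absurd ⟨h, hx⟩ hn
  have hB0A1eq : B0 ∩ A1 = A1 \ (B1 ∩ A1) := by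
    ext ω
    constructor
    · rintro ⟨hg, hx⟩
      refine ⟨hx, fun hb => ?_⟩
      have h1 : G ω = 1 := hb.1
      have h0 : G ω = 0 := hg
      rw [h0] at h1
      norm_num at h1
    · rintro ⟨hx, hn⟩
      refine ⟨?_, hx⟩
      rcases hG01 ω with h | h
      · exact h
      · exact absurd ⟨h, hx⟩ hn
  have CB0A0 : ∫ ω in B0 ∩ A0, Y ω ∂P = ∫ ω in B0 ∩ A0, Z ω ∂P := by
    rw [hB0A0eq]
    exact Cdiff A0 (B1 ∩ A0) (hB1m.inter hA0m) Set.inter_subset_right CA0 CB1A0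
  have CB0A1 : ∫ ω in B0 ∩ A1, Y ω ∂P = ∫ ω in B0 ∩ A1, Z ω ∂P := by
    rw [hB0A1eq]
    exact Cdiff A1 (B1 ∩ A1) (hB1m.inter hA1m) Set.inter_subset_right CA1 CB1A1
  have hB0split : B0 = B0 ∩ A0 ∪ B0 ∩ A1 := by
    rw [← Set.inter_union_distrib_left, hA01, Set.inter_univ]
  have CB1 : ∫ ω in B1, Y ω ∂P = ∫ ω in B1, Z ω ∂P := by
    rw [hB1split]
    exact Cunion _ _ (hB1m.inter hA0m) (hB1m.inter hA1m) hdisjB1 CB1A0 CB1A1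
  have CB0 : ∫ ω in B0, Y ω ∂P = ∫ ω in B0, Z ω ∂P := by
    rw [hB0split]
    exact Cunion _ _ (hB0m.inter hA0m) (hB0m.inter hA1m)
      (hA0A1.mono Set.inter_subset_right Set.inter_subset_right) CB0A0 CB0A1
  -- preimage shapes
  have hZpre : ∀ t : Set ℝ, Z ⁻¹' t = ∅ ∨ Z ⁻¹' t = A0 ∨ Z ⁻¹' t = A1 ∨ Z ⁻¹' t = Set.univ := by
    intro t
    by_cases h14 : (1/4 : ℝ) ∈ t <;> by_cases h34 : (3/4 : ℝ) ∈ t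
    · right; right; right
      ext ω
      simp only [Set.mem_preimage, Set.mem_univ, iff_true]
      rcases hX01 ω with h | h
      · rw [hZ14 ω h]; exact h14
      · rw [hZ34 ω h]; exact h34
    · right; left
      ext ω
      simp only [Set.mem_preimage, hA0def, Set.mem_setOf_eq]
      constructor
      · intro hm
        rcases hX01 ω with h | h
        · exact h
        · rw [hZ34 ω h] at hm; exact absurd hm h34
      · intro h; rw [hZ14 ω h]; exact h14
    · right; right; left
      ext ω
      simp only [Set.mem_preimage, hA1def, Set.mem_setOf_eq]
      constructor
      · intro hm
        rcases hX01 ω with h | h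
        · rw [hZ14 ω h] at hm; exact absurd hm h14
        · exact h
      · intro h; rw [hZ34 ω h]; exact h34
    · left
      ext ω
      simp only [Set.mem_preimage, Set.mem_empty_iff_false, iff_false]
      intro hm
      rcases hX01 ω with h | h
      · rw [hZ14 ω h] at hm; exact h14 hm
      · rw [hZ34 ω h] at hm; exact h34 hm
  have hGpre : ∀ u : Set ℝ, G ⁻¹' u = ∅ ∨ G ⁻¹' u = B0 ∨ G ⁻¹' u = B1 ∨ G ⁻¹' u = Set.univ := by
    intro u
    by_cases h0 : (0 : ℝ) ∈ u <;> by_cases h1 : (1 : ℝ) ∈ u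
    · right; right; right
      ext ω
      simp only [Set.mem_preimage, Set.mem_univ, iff_true]
      rcases hG01 ω with h | h
      · rw [h]; exact h0
      · rw [h]; exact h1
    · right; left
      ext ω
      simp only [Set.mem_preimage, hB0def, Set.mem_setOf_eq]
      constructor
      · intro hm
        rcases hG01 ω with h | h
        · exact h
        · rw [h] at hm; exact absurd hm h1
      · intro h; rw [h]; exact h0
    · right; right; left
      ext ω
      simp only [Set.mem_preimage, hB1def, Set.mem_setOf_eq]
      constructor
      · intro hm
        rcases hG01 ω with h | h
        · rw [h] at hm; exact absurd hm h0
        · exact h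
      · intro h; rw [h]; exact h1
    · left
      ext ω
      simp only [Set.mem_preimage, Set.mem_empty_iff_false, iff_false]
      intro hm
      rcases hG01 ω with h | h
      · rw [h] at hm; exact h0 hm
      · rw [h] at hm; exact h1 hm
  -- general shape intersections
  have hCgen : ∀ S T : Set Ω,
      (S = ∅ ∨ S = A0 ∨ S = A1 ∨ S = Set.univ) →
      (T = ∅ ∨ T = B0 ∨ T = B1 ∨ T = Set.univ) →
      ∫ ω in S ∩ T, Y ω ∂P = ∫ ω in S ∩ T, Z ω ∂P := by
    rintro S T hS hT
    rcases hS with rfl | rfl | rfl | rfl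
    · rw [Set.empty_inter]
      simp
    · rcases hT with rfl | rfl | rfl | rfl
      · rw [Set.inter_empty]; simp
      · rw [Set.inter_comm]; exact CB0A0
      · rw [Set.inter_comm]; exact CB1A0
      · rw [Set.inter_univ]; exact CA0
    · rcases hT with rfl | rfl | rfl | rfl
      · rw [Set.inter_empty]; simp
      · rw [Set.inter_comm]; exact CB0A1
      · rw [Set.inter_comm]; exact CB1A1
      · rw [Set.inter_univ]; exact CA1
    · rcases hT with rfl | rfl | rfl | rfl
      · rw [Set.inter_empty]; simp
      · rw [Set.univ_inter]; exact CB0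
      · rw [Set.univ_inter]; exact CB1
      · rw [Set.univ_inter]; exact Cuniv
  -- the join σ-algebra is generated by a π-system
  set π : Set (Set Ω) := {s : Set Ω | ∃ t u : Set ℝ,
    MeasurableSet t ∧ MeasurableSet u ∧ s = Z ⁻¹' t ∩ G ⁻¹' u} with hπdef
  have hπpi : IsPiSystem π := by
    rintro s1 ⟨t1, u1, ht1, hu1, rfl⟩ s2 ⟨t2, u2, ht2, hu2, rfl⟩ _
    exact ⟨t1 ∩ t2, u1 ∩ u2, ht1.inter ht2, hu1.inter hu2, by
      ext ω; simp only [Set.mem_inter_iff, Set.mem_preimage]; tauto⟩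
  have hgen : (MeasurableSpace.comap Z inferInstance) ⊔ (MeasurableSpace.comap G inferInstance) = MeasurableSpace.generateFrom π := by
    apply le_antisymm
    · apply sup_le
      · intro s hs
        obtain ⟨t, ht, rfl⟩ := MeasurableSpace.measurableSet_comap.mp hs
        exact MeasurableSpace.measurableSet_generateFrom
          ⟨t, Set.univ, ht, MeasurableSet.univ, by rw [Set.preimage_univ, Set.inter_univ]⟩
      · intro s hs
        obtain ⟨u, hu, rfl⟩ := MeasurableSpace.measurableSet_comap.mp hs
        exact MeasurableSpace.measurableSet_generateFrom
          ⟨Set.univ, u, MeasurableSet.univ, hu, by rw [Set.preimage_univ, Set.univ_inter]⟩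
    · apply MeasurableSpace.generateFrom_le
      rintro s ⟨t, u, ht, hu, rfl⟩
      exact MeasurableSet.inter
        ((le_sup_left : (MeasurableSpace.comap Z inferInstance) ≤ (MeasurableSpace.comap Z inferInstance) ⊔ (MeasurableSpace.comap G inferInstance)) _ ⟨t, ht, rfl⟩)
        ((le_sup_right : (MeasurableSpace.comap G inferInstance) ≤ (MeasurableSpace.comap Z inferInstance) ⊔ (MeasurableSpace.comap G inferInstance)) _ ⟨u, hu, rfl⟩)
  have hkey : ∀ s : Set Ω, MeasurableSet[(MeasurableSpace.comap Z inferInstance) ⊔ (MeasurableSpace.comap G inferInstance)] s →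
      ∫ ω in s, Y ω ∂P = ∫ ω in s, Z ω ∂P := by
    intro s hs
    refine MeasurableSpace.induction_on_inter (m := (MeasurableSpace.comap Z inferInstance) ⊔ (MeasurableSpace.comap G inferInstance))
      (C := fun s _ => ∫ ω in s, Y ω ∂P = ∫ ω in s, Z ω ∂P) hgen hπpi ?_ ?_ ?_ ?_ s hs
    · simp [Measure.restrict_empty]
    · rintro u ⟨t, v, ht, hv, rfl⟩
      exact hCgen _ _ (hZpre t) (hGpre v)
    · intro u hu hC
      have hum : MeasurableSet u := hmJle u hu
      rw [Set.compl_eq_univ_diff]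
      exact Cdiff Set.univ u hum (Set.subset_univ u) Cuniv hC
    · intro f hdisj hfm hC
      rw [integral_iUnion (fun i => hmJle _ (hfm i)) hdisj hYint.integrableOn,
        integral_iUnion (fun i => hmJle _ (hfm i)) hdisj hZint.integrableOn]
      exact tsum_congr hC
  -- part (iv)
  haveI : SigmaFinite (P.trim hmJle) := by
    have := isFiniteMeasure_trim (μ := P) hmJle
    infer_instance
  have hZsmZ : StronglyMeasurable[(MeasurableSpace.comap Z inferInstance)] Z :=
    (measurable_iff_comap_le.mpr le_rfl).stronglyMeasurable
  have hiv : P[Y | (MeasurableSpace.comap Z inferInstance) ⊔ (MeasurableSpace.comap G inferInstance)] =ᵐ[P] Z := by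
    refine (ae_eq_condExp_of_forall_setIntegral_eq hmJle hYint
      (fun s _ _ => hZint.integrableOn) (fun s hs _ => (hkey s hs).symm) ?_).symm
    exact StronglyMeasurable.aestronglyMeasurable (hZsmZ.mono le_sup_left)
  -- part (i)
  haveI : SigmaFinite (P.trim hmZle) := by
    have := isFiniteMeasure_trim (μ := P) hmZle
    infer_instance
  have hi : P[Y | (MeasurableSpace.comap Z inferInstance)] =ᵐ[P] Z := by
    have t1 : P[P[Y | (MeasurableSpace.comap Z inferInstance) ⊔ (MeasurableSpace.comap G inferInstance)] | (MeasurableSpace.comap Z inferInstance)] =ᵐ[P] P[Y | (MeasurableSpace.comap Z inferInstance)] :=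
      condExp_condExp_of_le le_sup_left hmJle
    have t2 : P[P[Y | (MeasurableSpace.comap Z inferInstance) ⊔ (MeasurableSpace.comap G inferInstance)] | (MeasurableSpace.comap Z inferInstance)] =ᵐ[P] P[Z | (MeasurableSpace.comap Z inferInstance)] := condExp_congr_ae hiv
    have t3 : P[Z | (MeasurableSpace.comap Z inferInstance)] = Z := condExp_of_stronglyMeasurable hmZle hZsmZ hZint
    rw [t3] at t2
    exact t1.symm.trans t2
  -- part (v)
  haveI : SigmaFinite (P.trim hmYle) := by
    have := isFiniteMeasure_trim (μ := P) hmYle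
    infer_instance
  haveI : SigmaFinite (P.trim hmYJle) := by
    have := isFiniteMeasure_trim (μ := P) hmYJle
    infer_instance
  have hZgY : Z = (fun y => if 1 / 2 < y then (3/4 : ℝ) else 1/4) ∘ Y := by
    funext ω
    simp only [Function.comp_apply]
    by_cases h : 1 / 2 < Y ω
    · rw [hZ34 ω (by rw [hX ω, if_pos h]), if_pos h]
    · rw [hZ14 ω (by rw [hX ω, if_neg h]), if_neg h]
  have hgmeas : Measurable (fun y : ℝ => if 1 / 2 < y then (3/4 : ℝ) else 1/4) := by
    apply Measurable.ite _ measurable_const measurable_const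
    exact measurableSet_lt measurable_const measurable_id
  have hZsmY : StronglyMeasurable[(MeasurableSpace.comap Y inferInstance)] Z := by
    rw [hZgY]
    exact (hgmeas.comp (measurable_iff_comap_le.mpr le_rfl)).stronglyMeasurable
  have hv : P[Z | (MeasurableSpace.comap Y inferInstance) ⊔ (MeasurableSpace.comap G inferInstance)] =ᵐ[P] P[Z | (MeasurableSpace.comap Y inferInstance)] := by
    rw [condExp_of_stronglyMeasurable hmYJle (hZsmY.mono le_sup_left) hZint,
      condExp_of_stronglyMeasurable hmYle hZsmY hZint]
  exact ⟨hi, ⟨hCov, hNotIndep⟩, hYZ, hiv, hv⟩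
end
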